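/- arXiv:0906.1086 — 2 statements merged into one kernel-verified Lean document; each statement's English description precedes it below -/
import Mathlib

section
/- Let G1 be a snark with a perfect matching M1 such that G1∖M1 consists of exactly two (odd) cycles C and C'; let e1 = ab be an edge of C and e2 = a'b' an edge of C'. Let G2 be a snark with a perfect matching M2 and an F-family {A, B, C, D} for M2, and let e3 = xy be an edge of M2 ∖ (A ∪ B ∪ C ∪ D) whose endpoints x and y lie on two distinct odd cycles of G2∖M2. Form the dot product G = G1·G2 using the edges e1, e2 of G1 and the edge e3 of G2. Then M = M1 ∪ (M2 ∖ {xy}) is a perfect matching of G and {A, B, C, D} is an F-family for M in G. -/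
open SimpleGraph

variable {V : Type*}

/-- Two edges (as unordered pairs) are disjoint: they share no vertex. -/
def Sym2Disjoint {V : Type*} (e f : Sym2 V) : Prop := ∀ v : V, v ∈ e → v ∉ f

/-- A matching of `G`, given as a set of edges of `G` which are pairwise disjoint. -/
def IsMatchingSet (G : SimpleGraph V) (M : Set (Sym2 V)) : Prop :=
  M ⊆ G.edgeSet ∧ M.Pairwise Sym2Disjoint

/-- A perfect matching of `G`: a matching covering every vertex. -/
def IsPerfectMatchingSet (G : SimpleGraph V) (M : Set (Sym2 V)) : Prop :=
  IsMatchingSet G M ∧ ∀ v : V, ∃ e ∈ M, v ∈ e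

/-- A cubic (3-regular) graph. -/
def IsCubic (G : SimpleGraph V) : Prop := ∀ v : V, (G.neighborSet v).ncard = 3

/-- A bridgeless graph. -/
def Bridgeless (G : SimpleGraph V) : Prop := ∀ e : Sym2 V, ¬ G.IsBridge e

/-- A Fulkerson covering: six perfect matchings such that every edge of `G`
lies in exactly two of them (counted with multiplicity in the list). -/
def IsFulkersonCovering (G : SimpleGraph V) (M : Fin 6 → Set (Sym2 V)) : Prop :=
  (∀ i, IsPerfectMatchingSet G (M i)) ∧
  ∀ e ∈ G.edgeSet, ({i : Fin 6 | e ∈ M i} : Set (Fin 6)).ncard = 2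

/-- An FR-triple: three perfect matchings with empty intersection. -/
def IsFRTriple (G : SimpleGraph V) (M1 M2 M3 : Set (Sym2 V)) : Prop :=
  IsPerfectMatchingSet G M1 ∧ IsPerfectMatchingSet G M2 ∧ IsPerfectMatchingSet G M3 ∧
  M1 ∩ M2 ∩ M3 = ∅

/-- `tSet G M1 M2 M3 k` is the set `T_k` of edges of `G` lying in exactly `k`
of the three matchings (counted with multiplicity). -/
def tSet (G : SimpleGraph V) (M1 M2 M3 : Set (Sym2 V)) (k : ℕ) : Set (Sym2 V) :=
  {e ∈ G.edgeSet | ({i : Fin 3 | e ∈ ![M1, M2, M3] i} : Set (Fin 3)).ncard = k}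

/-- Two FR-triples are compatible when `T_0 = T'_2` and `T_2 = T'_0`. -/
def CompatibleFR (G : SimpleGraph V) (M1 M2 M3 N1 N2 N3 : Set (Sym2 V)) : Prop :=
  tSet G M1 M2 M3 0 = tSet G N1 N2 N3 2 ∧ tSet G M1 M2 M3 2 = tSet G N1 N2 N3 0
/-- `S` is (the vertex set of) a cycle of `G∖M`: a connected component of the graph
obtained from `G` by deleting the edges of `M` (for `M` a perfect matching of a cubic
graph `G`, these components are exactly the cycles of `G∖M`). -/
def IsCycleOf (G : SimpleGraph V) (M : Set (Sym2 V)) (S : Set V) : Prop :=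
  ∃ c : (G.deleteEdges M).ConnectedComponent, S = c.supp

/-- The edges of the cycle of `G∖M` with vertex set `S`: edges of `G` not in `M`
with both endpoints in `S`. -/
def cycleEdges (G : SimpleGraph V) (M : Set (Sym2 V)) (S : Set V) : Set (Sym2 V) :=
  {e | e ∈ G.edgeSet ∧ e ∉ M ∧ ∀ v ∈ e, v ∈ S}

/-- The vertices of `S` incident with an edge of `X`. -/
def incVerts (S : Set V) (X : Set (Sym2 V)) : Set V :=
  {v | v ∈ S ∧ ∃ e ∈ X, v ∈ e}

/-- `A` is an `M`-balanced matching: `A = M ∩ M'` for some perfect matching `M'`. -/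
def IsBalancedMatching (G : SimpleGraph V) (M A : Set (Sym2 V)) : Prop :=
  ∃ M' : Set (Sym2 V), IsPerfectMatchingSet G M' ∧ A = M ∩ M'

/-- `{A, B, C, D}` is an F-family for the perfect matching `M` of `G`:
four pairwise disjoint `M`-balanced matchings such that
(i) every odd cycle of `G∖M` has, for each member, exactly one vertex incident with an
edge of that member;
(ii) every even cycle of `G∖M` incident with an edge of `A ∪ B ∪ C ∪ D` contains exactly
four vertices incident with edges of `A ∪ B ∪ C ∪ D`, and these four are incident to a
single member, or two of them are incident to one member and the other two to another
single member;
(iii) for each cycle of `G∖M` the four vertices so determined are covered by two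
disjoint edges of `G` whose endpoints all lie among these four vertices. -/
def IsFFamily (G : SimpleGraph V) (M A B C D : Set (Sym2 V)) : Prop :=
  (∀ X ∈ ({A, B, C, D} : Set (Set (Sym2 V))), IsBalancedMatching G M X) ∧
  [A, B, C, D].Pairwise Disjoint ∧
  (∀ S : Set V, IsCycleOf G M S → Odd S.ncard →
    ∀ X ∈ ({A, B, C, D} : Set (Set (Sym2 V))), (incVerts S X).ncard = 1) ∧
  (∀ S : Set V, IsCycleOf G M S → Even S.ncard →
    (incVerts S (A ∪ B ∪ C ∪ D)).Nonempty →
    (incVerts S (A ∪ B ∪ C ∪ D)).ncard = 4 ∧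
    ((∃ X ∈ ({A, B, C, D} : Set (Set (Sym2 V))),
        incVerts S (A ∪ B ∪ C ∪ D) = incVerts S X) ∨
     (∃ X ∈ ({A, B, C, D} : Set (Set (Sym2 V))),
      ∃ Y ∈ ({A, B, C, D} : Set (Set (Sym2 V))), X ≠ Y ∧
        (incVerts S X).ncard = 2 ∧ (incVerts S Y).ncard = 2 ∧
        incVerts S (A ∪ B ∪ C ∪ D) = incVerts S X ∪ incVerts S Y))) ∧
  (∀ S : Set V, IsCycleOf G M S → (incVerts S (A ∪ B ∪ C ∪ D)).Nonempty →
    ∃ e1 e2 : Sym2 V, e1 ∈ G.edgeSet ∧ e2 ∈ G.edgeSet ∧ e1 ≠ e2 ∧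
      Sym2Disjoint e1 e2 ∧
      (∀ v : V, (v ∈ e1 ∨ v ∈ e2) ↔ v ∈ incVerts S (A ∪ B ∪ C ∪ D)))

/-- `N` is a set of edges consisting, for each cycle of `G∖M` incident with the family
`{A, B, C, D}`, of exactly two disjoint edges of `G` covering the four determined
vertices of that cycle (and nothing else). -/
def IsNSet (G : SimpleGraph V) (M A B C D N : Set (Sym2 V)) : Prop :=
  (∀ e ∈ N, ∃ S : Set V, IsCycleOf G M S ∧
      (incVerts S (A ∪ B ∪ C ∪ D)).Nonempty ∧ ∀ v ∈ e, v ∈ S) ∧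
  (∀ S : Set V, IsCycleOf G M S → (incVerts S (A ∪ B ∪ C ∪ D)).Nonempty →
    ∃ e1 e2 : Sym2 V, e1 ∈ G.edgeSet ∧ e2 ∈ G.edgeSet ∧ e1 ≠ e2 ∧
      Sym2Disjoint e1 e2 ∧
      (∀ v : V, (v ∈ e1 ∨ v ∈ e2) ↔ v ∈ incVerts S (A ∪ B ∪ C ∪ D)) ∧
      {e ∈ N | ∀ v ∈ e, v ∈ S} = {e1, e2})
/-- A cubic graph is 3-edge-colourable when its edge set can be partitioned into three
perfect matchings. -/
def IsThreeEdgeColourable (G : SimpleGraph V) : Prop :=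
  ∃ M1 M2 M3 : Set (Sym2 V),
    IsPerfectMatchingSet G M1 ∧ IsPerfectMatchingSet G M2 ∧ IsPerfectMatchingSet G M3 ∧
    [M1, M2, M3].Pairwise Disjoint ∧ M1 ∪ M2 ∪ M3 = G.edgeSet

/-- Cyclically 4-edge-connected: every set of edges whose removal leaves at least two
connected components each containing a cycle has at least 4 edges. -/
def CyclicallyFourEdgeConnected (G : SimpleGraph V) : Prop :=
  ∀ F : Set (Sym2 V), F ⊆ G.edgeSet →
    (∃ c1 c2 : (G.deleteEdges F).ConnectedComponent, c1 ≠ c2 ∧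
      ¬ ((G.deleteEdges F).induce c1.supp).IsAcyclic ∧
      ¬ ((G.deleteEdges F).induce c2.supp).IsAcyclic) →
    4 ≤ F.ncard

/-- A snark: a bridgeless, cyclically 4-edge-connected cubic graph which is not
3-edge-colourable. -/
def IsSnark (G : SimpleGraph V) : Prop :=
  IsCubic G ∧ Bridgeless G ∧ CyclicallyFourEdgeConnected G ∧ ¬ IsThreeEdgeColourable G

/-- Vertex set of the dot product `G1·G2`: the vertices of `G1` together with the
vertices of `G2` other than the two endpoints `x1, x2` of the chosen edge of `G2`. -/
abbrev DotVert (V1 : Type*) {V2 : Type*} (x1 x2 : V2) :=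
  V1 ⊕ {w : V2 // w ≠ x1 ∧ w ≠ x2}

/-- Transport of a set of edges of `G1` to the dot product vertex type. -/
def liftEdgesLeft {V1 V2 : Type*} (x1 x2 : V2) (E : Set (Sym2 V1)) :
    Set (Sym2 (DotVert V1 x1 x2)) :=
  Sym2.map (Sum.inl : V1 → DotVert V1 x1 x2) '' E

/-- Transport of a set of edges of `G2` avoiding `x1, x2` to the dot product
vertex type. -/
def liftEdgesRight (V1 : Type*) {V2 : Type*} (x1 x2 : V2) (E : Set (Sym2 V2)) :
    Set (Sym2 (DotVert V1 x1 x2)) :=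
  {e | ∃ (a b : V2) (ha : a ≠ x1 ∧ a ≠ x2) (hb : b ≠ x1 ∧ b ≠ x2),
    s(a, b) ∈ E ∧ e = s(Sum.inr ⟨a, ha⟩, Sum.inr ⟨b, hb⟩)}

/-- The dot product `G1·G2` of two cubic graphs, built from two (nonadjacent) edges
`u1v1`, `u2v2` of `G1` and an edge `x1x2` of `G2`, where `x1` has neighbours
`y1, y2, x2` and `x2` has neighbours `z1, z2, x1`: delete the edges `u1v1, u2v2` from
`G1`, delete the vertices `x1, x2` from `G2`, and add the four edges
`u1y1, v1y2, u2z1, v2z2`. -/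
def dotProd {V1 V2 : Type*} (G1 : SimpleGraph V1) (G2 : SimpleGraph V2)
    (u1 v1 u2 v2 : V1) (x1 x2 y1 y2 z1 z2 : V2)
    (hy1 : y1 ≠ x1 ∧ y1 ≠ x2) (hy2 : y2 ≠ x1 ∧ y2 ≠ x2)
    (hz1 : z1 ≠ x1 ∧ z1 ≠ x2) (hz2 : z2 ≠ x1 ∧ z2 ≠ x2) :
    SimpleGraph (DotVert V1 x1 x2) :=
  SimpleGraph.fromEdgeSet
    (liftEdgesLeft x1 x2 (G1.edgeSet \ {s(u1, v1), s(u2, v2)}) ∪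
     liftEdgesRight V1 x1 x2 G2.edgeSet ∪
     {s(Sum.inl u1, Sum.inr ⟨y1, hy1⟩), s(Sum.inl v1, Sum.inr ⟨y2, hy2⟩),
      s(Sum.inl u2, Sum.inr ⟨z1, hz1⟩), s(Sum.inl v2, Sum.inr ⟨z2, hz2⟩)})

/-! ### General toolkit -/

section Toolkit
variable {W : Type*}

lemma walk_closed {H : SimpleGraph W} {S : Set W}
    (hS : ∀ u ∈ S, ∀ v, H.Adj u v → v ∈ S) :
    ∀ {u v : W}, H.Walk u v → u ∈ S → v ∈ S := by
  intro u v p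
  induction p with
  | nil => exact fun h => h
  | cons hab _ ih => exact fun hu => ih (hS _ hu _ hab)

lemma closed_mem_of_reachable {H : SimpleGraph W} {S : Set W}
    (hS : ∀ u ∈ S, ∀ v, H.Adj u v → v ∈ S) {u v : W} (hu : u ∈ S)
    (h : H.Reachable u v) : v ∈ S :=
  h.elim fun p => walk_closed hS p hu

lemma comp_eq_of_closed {H : SimpleGraph W} {S : Set W}
    (hS : ∀ u ∈ S, ∀ v, H.Adj u v → v ∈ S)
    (hconn : ∀ u ∈ S, ∀ v ∈ S, H.Reachable u v) {u : W} (hu : u ∈ S) :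
    S = (H.connectedComponentMk u).supp := by
  ext v
  simp only [SimpleGraph.ConnectedComponent.mem_supp_iff, SimpleGraph.ConnectedComponent.eq]
  constructor
  · exact fun hv => hconn v hv u hu
  · exact fun h => closed_mem_of_reachable hS hu h.symm

lemma neighbor_nonempty_of_reachable {H : SimpleGraph W} :
    ∀ {u v : W}, H.Walk u v → u ≠ v → (H.neighborSet v).Nonempty := by
  intro u v p
  induction p with
  | nil => exact fun h => absurd rfl h
  | @cons u w v hab p ih =>
    intro _
    by_cases hwv : w = v
    · subst hwv; exact ⟨u, hab.symm⟩
    · exact ih hwv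

lemma neighborSet_deleteEdges (H : SimpleGraph W) (F : Set (Sym2 W)) (v : W) :
    (H.deleteEdges F).neighborSet v = {w | w ∈ H.neighborSet v ∧ s(v, w) ∉ F} := by
  ext w
  simp [SimpleGraph.mem_neighborSet, SimpleGraph.deleteEdges_adj]

/-- Handshake-type lemma: if `p` and `q` are the only two vertices of odd degree,
they are connected. -/
lemma reachable_of_odd_degrees [Fintype W] (H : SimpleGraph W) (p q : W) (hpq : p ≠ q)
    (hp : Odd (H.neighborSet p).ncard) (hq : Odd (H.neighborSet q).ncard)
    (hother : ∀ v : W, v ≠ p → v ≠ q → Even (H.neighborSet v).ncard) :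
    H.Reachable p q := by
  classical
  by_contra hreach
  let K : SimpleGraph W :=
    { Adj := fun u v => H.Adj u v ∧ H.Reachable p u ∧ H.Reachable p v
      symm := ⟨fun u v h => ⟨h.1.symm, h.2.2, h.2.1⟩⟩
      loopless := ⟨fun u h => H.loopless.irrefl u h.1⟩ }
  have hKnbr : ∀ v, H.Reachable p v → K.neighborSet v = H.neighborSet v := by
    intro v hv
    ext w
    simp only [SimpleGraph.mem_neighborSet, K]
    exact ⟨fun h => h.1, fun h => ⟨h, hv, hv.trans h.reachable⟩⟩
  have hKnbr' : ∀ v, ¬ H.Reachable p v → K.neighborSet v = ∅ := by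
    intro v hv
    ext w
    simp only [SimpleGraph.mem_neighborSet, Set.mem_empty_iff_false, iff_false, K]
    exact fun h => hv h.2.1
  have hdeg : ∀ v, K.degree v = (K.neighborSet v).ncard := by
    intro v
    rw [← SimpleGraph.card_neighborSet_eq_degree, Set.ncard_eq_toFinset_card']
    simp
  have hfilter : Finset.filter (fun v => Odd (K.degree v)) Finset.univ = {p} := by
    ext v
    simp only [Finset.mem_filter, Finset.mem_univ, true_and, Finset.mem_singleton]
    constructor
    · intro hodd
      rw [hdeg] at hodd
      by_cases hv : H.Reachable p v
      · rw [hKnbr v hv] at hodd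
        by_contra hvp
        rcases eq_or_ne v q with rfl | hvq
        · exact hreach hv
        · exact Nat.not_even_iff_odd.mpr hodd (hother v hvp hvq)
      · rw [hKnbr' v hv] at hodd
        simp [Set.ncard_empty] at hodd
    · rintro rfl
      rw [hdeg, hKnbr _ (SimpleGraph.Reachable.refl _)]
      exact hp
  have := SimpleGraph.even_card_odd_degree_vertices K
  rw [hfilter] at this
  simp at this

end Toolkit

section Toolkit2
variable {W : Type*}

lemma mem_supp_of_adj {H : SimpleGraph W} {c : H.ConnectedComponent} {u v : W}
    (hu : u ∈ c.supp) (h : H.Adj u v) : v ∈ c.supp := by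
  rw [SimpleGraph.ConnectedComponent.mem_supp_iff] at hu ⊢
  rw [← hu]
  exact (SimpleGraph.ConnectedComponent.eq).mpr h.reachable.symm

lemma reachable_of_mem_supp {H : SimpleGraph W} {c : H.ConnectedComponent} {u v : W}
    (hu : u ∈ c.supp) (hv : v ∈ c.supp) : H.Reachable u v := by
  rw [SimpleGraph.ConnectedComponent.mem_supp_iff] at hu hv
  exact (SimpleGraph.ConnectedComponent.eq).mp (hu.trans hv.symm)

lemma matching_eq_of_mem {M : Set (Sym2 W)} (hM : M.Pairwise Sym2Disjoint)
    {e f : Sym2 W} (he : e ∈ M) (hf : f ∈ M) {v : W} (hv : v ∈ e) (hv' : v ∈ f) :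
    e = f := by
  by_contra hne
  exact hM he hf hne v hv hv'

lemma neighborSet_del_matching {G : SimpleGraph W} {M : Set (Sym2 W)}
    (hpair : M.Pairwise Sym2Disjoint) {v w : W} (he : s(v, w) ∈ M) :
    (G.deleteEdges M).neighborSet v = G.neighborSet v \ {w} := by
  rw [neighborSet_deleteEdges]
  ext t
  simp only [Set.mem_setOf_eq, Set.mem_diff, Set.mem_singleton_iff,
    SimpleGraph.mem_neighborSet]
  constructor
  · rintro ⟨h1, h2⟩
    exact ⟨h1, fun h => h2 (h ▸ he)⟩
  · rintro ⟨h1, h2⟩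
    refine ⟨h1, fun hmem => h2 ?_⟩
    have := matching_eq_of_mem hpair hmem he (Sym2.mem_mk_left v t) (Sym2.mem_mk_left v w)
    exact Sym2.congr_right.mp this

lemma two_regular_del_matching [Fintype W] {G : SimpleGraph W} {M : Set (Sym2 W)}
    (hcub : IsCubic G) (hM : IsPerfectMatchingSet G M) (v : W) :
    ((G.deleteEdges M).neighborSet v).ncard = 2 := by
  obtain ⟨e, heM, hve⟩ := hM.2 v
  obtain ⟨w, rfl⟩ := Sym2.mem_iff_exists.mp hve
  have hadj : G.Adj v w := (G.mem_edgeSet).mp (hM.1.1 heM)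
  have hw : w ∈ G.neighborSet v := hadj
  rw [neighborSet_del_matching hM.1.2 heM,
    Set.ncard_diff_singleton_of_mem hw, hcub v]

/-- Existence of a perfect matching on a "path-shaped" vertex set. -/
lemma match_on_path [Fintype W] :
    ∀ (n : ℕ) (H : SimpleGraph W) (S : Set W), S.ncard = n →
    (∀ u ∈ S, ∀ v, H.Adj u v → v ∈ S) →
    (∀ u ∈ S, ∀ v ∈ S, H.Reachable u v) →
    (∀ u, u ∉ S → Even ((H.neighborSet u).ncard)) →
    Even S.ncard →
    (S = ∅ ∨ ∃ p ∈ S, ∃ q ∈ S, p ≠ q ∧ (H.neighborSet p).ncard = 1 ∧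
      (H.neighborSet q).ncard = 1 ∧
      ∀ u ∈ S, u ≠ p → u ≠ q → (H.neighborSet u).ncard = 2) →
    ∃ P : Set (Sym2 W), (∀ e ∈ P, e ∈ H.edgeSet) ∧ P.Pairwise Sym2Disjoint ∧
      (∀ e ∈ P, ∀ t ∈ e, t ∈ S) ∧ (∀ u ∈ S, ∃ e ∈ P, u ∈ e) := by
  intro n
  induction n using Nat.strong_induction_on with
  | _ n ih =>
  intro H S hcard hclosed hconn hout heven hshape
  rcases hshape with rfl | ⟨p, hpS, q, hqS, hpq, hdp, hdq, hdeg⟩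
  · exact ⟨∅, by simp, by simp [Set.pairwise_empty], by simp, by simp⟩
  obtain ⟨r, hr⟩ := Set.ncard_eq_one.mp hdp
  have hpr : H.Adj p r := by
    have : r ∈ H.neighborSet p := by rw [hr]; exact rfl
    exact this
  have hrS : r ∈ S := hclosed p hpS r hpr
  have hrp : r ≠ p := hpr.ne'
  rcases eq_or_ne r q with rfl | hrq
  · -- the component is a single edge p-r
    have hSpq : S = {p, r} := by
      apply Set.Subset.antisymm
      · intro u huS
        by_contra hu
        simp only [Set.mem_insert_iff, Set.mem_singleton_iff, not_or] at hu
        obtain ⟨hup, hur⟩ := hu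
        set Hm := H.deleteEdges {s(p, r)} with hHm
        set C := (Hm.connectedComponentMk u).supp with hC
        have hnp : Hm.neighborSet p = ∅ := by
          rw [hHm, neighborSet_deleteEdges]
          ext w
          simp only [Set.mem_setOf_eq, Set.mem_empty_iff_false, iff_false, not_and,
            not_not, hr, Set.mem_singleton_iff]
          rintro rfl
          rfl
        have hnbrreq : H.neighborSet r = {p} := by
          obtain ⟨t, ht⟩ := Set.ncard_eq_one.mp hdq
          have : p ∈ H.neighborSet r := hpr.symm
          rw [ht] at this ⊢
          rw [Set.mem_singleton_iff] at this
          rw [this]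
        have hnr : Hm.neighborSet r = ∅ := by
          rw [hHm, neighborSet_deleteEdges]
          ext w
          simp only [Set.mem_setOf_eq, Set.mem_empty_iff_false, iff_false, not_and,
            not_not, hnbrreq, Set.mem_singleton_iff]
          rintro rfl
          rw [Sym2.eq_swap]
        have hpC : p ∉ C := by
          intro hpC
          rw [hC, SimpleGraph.ConnectedComponent.mem_supp_iff,
            SimpleGraph.ConnectedComponent.eq] at hpC
          obtain ⟨w⟩ := hpC.symm
          obtain ⟨t, ht⟩ := neighbor_nonempty_of_reachable w hup
          rw [hnp] at ht
          exact ht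
        have hrC : r ∉ C := by
          intro hrC
          rw [hC, SimpleGraph.ConnectedComponent.mem_supp_iff,
            SimpleGraph.ConnectedComponent.eq] at hrC
          obtain ⟨w⟩ := hrC.symm
          obtain ⟨t, ht⟩ := neighbor_nonempty_of_reachable w hur
          rw [hnr] at ht
          exact ht
        have hclosedC : ∀ a ∈ C, ∀ t, H.Adj a t → t ∈ C := by
          intro a haC t hat
          by_cases hedge : s(a, t) = s(p, r)
          · rw [Sym2.eq_iff] at hedge
            rcases hedge with ⟨rfl, rfl⟩ | ⟨rfl, rfl⟩
            · exact absurd haC hpC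
            · exact absurd haC hrC
          · have : Hm.Adj a t := by
              rw [hHm, SimpleGraph.deleteEdges_adj]
              exact ⟨hat, by simpa using hedge⟩
            rw [hC, SimpleGraph.ConnectedComponent.mem_supp_iff] at haC ⊢
            rw [← haC]
            exact (SimpleGraph.ConnectedComponent.eq).mpr this.reachable.symm
        have huC : u ∈ C := rfl
        exact hpC (closed_mem_of_reachable hclosedC huC (hconn u huS p hpS))
      · rintro u (rfl | rfl) <;> assumption
    refine ⟨{s(p, r)}, ?_, Set.pairwise_singleton _ _, ?_, ?_⟩
    · intro e he
      rw [Set.mem_singleton_iff] at he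
      rw [he, SimpleGraph.mem_edgeSet]
      exact hpr
    · intro e he t ht
      rw [Set.mem_singleton_iff] at he
      rw [he, Sym2.mem_iff] at ht
      rcases ht with rfl | rfl <;> assumption
    · intro u huS
      rw [hSpq] at huS
      rcases huS with h | h
      · exact ⟨s(p, r), rfl, Sym2.mem_iff.mpr (Or.inl h)⟩
      · exact ⟨s(p, r), rfl, Sym2.mem_iff.mpr (Or.inr h)⟩
  · -- main case : r ≠ q
    have hdr : (H.neighborSet r).ncard = 2 := hdeg r hrS hrp hrq
    have hpmem : p ∈ H.neighborSet r := hpr.symm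
    obtain ⟨s0, hs0p, hnbrr⟩ : ∃ s0, s0 ≠ p ∧ H.neighborSet r = {p, s0} := by
      obtain ⟨α, β, hαβ, hnbrr⟩ := Set.ncard_eq_two.mp hdr
      rw [hnbrr] at hpmem
      rcases hpmem with h | h
      · subst h
        exact ⟨β, hαβ.symm, hnbrr⟩
      · rw [Set.mem_singleton_iff] at h
        subst h
        exact ⟨α, hαβ, by rw [hnbrr]; exact Set.pair_comm α p⟩
    have hrs0 : H.Adj r s0 := by
      have : s0 ∈ H.neighborSet r := by
        rw [hnbrr]; exact Set.mem_insert_iff.mpr (Or.inr rfl)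
      exact this
    have hs0S : s0 ∈ S := hclosed r hrS s0 hrs0
    have hs0r : s0 ≠ r := hrs0.ne'
    have hadjp : ∀ t, H.Adj t p → t = r := by
      intro t ht
      have : t ∈ H.neighborSet p := ht.symm
      rwa [hr, Set.mem_singleton_iff] at this
    have hadjr : ∀ t, H.Adj t r → t = p ∨ t = s0 := by
      intro t ht
      have : t ∈ H.neighborSet r := ht.symm
      rwa [hnbrr, Set.mem_insert_iff, Set.mem_singleton_iff] at this
    set F : Set (Sym2 W) := {e | p ∈ e ∨ r ∈ e} with hF
    set Hm := H.deleteEdges F with hHm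
    have hmemF : ∀ u w : W, s(u, w) ∈ F ↔ (u = p ∨ w = p ∨ u = r ∨ w = r) := by
      intro u w
      simp only [hF, Set.mem_setOf_eq, Sym2.mem_iff]
      constructor
      · rintro ((h | h) | (h | h))
        exacts [Or.inl h.symm, Or.inr (Or.inl h.symm), Or.inr (Or.inr (Or.inl h.symm)),
          Or.inr (Or.inr (Or.inr h.symm))]
      · rintro (h | h | h | h)
        exacts [Or.inl (Or.inl h.symm), Or.inl (Or.inr h.symm), Or.inr (Or.inl h.symm),
          Or.inr (Or.inr h.symm)]
    have hnp : Hm.neighborSet p = ∅ := by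
      rw [hHm, neighborSet_deleteEdges]
      ext w
      simp only [Set.mem_setOf_eq, Set.mem_empty_iff_false, iff_false, not_and, not_not, hF]
      intro _
      exact Or.inl (Sym2.mem_mk_left _ _)
    have hnr : Hm.neighborSet r = ∅ := by
      rw [hHm, neighborSet_deleteEdges]
      ext w
      simp only [Set.mem_setOf_eq, Set.mem_empty_iff_false, iff_false, not_and, not_not, hF]
      intro _
      exact Or.inr (Sym2.mem_mk_left _ _)
    have hnbru : ∀ u, u ≠ p → u ≠ r → Hm.neighborSet u = H.neighborSet u \ {p, r} := by
      intro u hup hur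
      rw [hHm, neighborSet_deleteEdges]
      ext w
      simp only [Set.mem_setOf_eq, Set.mem_diff, Set.mem_insert_iff, Set.mem_singleton_iff,
        hmemF, not_or]
      tauto
    have huntouched : ∀ u, u ≠ p → u ≠ r → u ≠ s0 → Hm.neighborSet u = H.neighborSet u := by
      intro u hup hur hus
      rw [hnbru u hup hur]
      apply Set.Subset.antisymm Set.diff_subset
      intro w hw2
      refine ⟨hw2, fun hw1 => ?_⟩
      rcases Set.mem_insert_iff.mp hw1 with h | h
      · subst h
        exact hur (hadjp u hw2)
      · rw [Set.mem_singleton_iff] at h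
        subst h
        rcases hadjr u hw2 with h' | h'
        · exact hup h'
        · exact hus h'
    rcases eq_or_ne s0 q with rfl | hs0q
    · -- impossible : S = {p,r,s0} has odd cardinality
      exfalso
      have hnbrs : H.neighborSet s0 = {r} := by
        obtain ⟨t, ht⟩ := Set.ncard_eq_one.mp hdq
        have hmem : r ∈ H.neighborSet s0 := hrs0.symm
        rw [ht] at hmem ⊢
        rw [Set.mem_singleton_iff] at hmem
        rw [hmem]
      have hns : Hm.neighborSet s0 = ∅ := by
        rw [hnbru s0 hs0p hs0r, hnbrs]
        ext w
        constructor
        · rintro ⟨hw1, hw2⟩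
          rw [Set.mem_singleton_iff] at hw1
          subst hw1
          exact (hw2 (Set.mem_insert_iff.mpr (Or.inr rfl))).elim
        · intro h
          exact h.elim
      have hS3 : S ⊆ {p, r, s0} := by
        intro u huS
        by_contra hu
        simp only [Set.mem_insert_iff, Set.mem_singleton_iff, not_or] at hu
        obtain ⟨hup, hur, hus⟩ := hu
        set C := (Hm.connectedComponentMk u).supp with hC
        have hmemC : ∀ w, w ∈ C ↔ Hm.Reachable w u := by
          intro w
          rw [hC, SimpleGraph.ConnectedComponent.mem_supp_iff,
            SimpleGraph.ConnectedComponent.eq]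
        have hpC : p ∉ C := by
          intro h
          obtain ⟨wlk⟩ := ((hmemC p).mp h).symm
          obtain ⟨t, ht⟩ := neighbor_nonempty_of_reachable wlk hup
          rw [hnp] at ht; exact ht
        have hrC : r ∉ C := by
          intro h
          obtain ⟨wlk⟩ := ((hmemC r).mp h).symm
          obtain ⟨t, ht⟩ := neighbor_nonempty_of_reachable wlk hur
          rw [hnr] at ht; exact ht
        have hsC : s0 ∉ C := by
          intro h
          obtain ⟨wlk⟩ := ((hmemC s0).mp h).symm
          obtain ⟨t, ht⟩ := neighbor_nonempty_of_reachable wlk hus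
          rw [hns] at ht; exact ht
        have hclosedC : ∀ a ∈ C, ∀ t, H.Adj a t → t ∈ C := by
          intro a haC t hat
          by_cases hmemf : s(a, t) ∈ F
          · exfalso
            rcases (hmemF a t).mp hmemf with h | h | h | h
            · exact hpC (h ▸ haC)
            · subst h; exact hrC ((hadjp a hat) ▸ haC)
            · exact hrC (h ▸ haC)
            · subst h
              rcases hadjr a hat with h' | h'
              · exact hpC (h' ▸ haC)
              · exact hsC (h' ▸ haC)
          · have hAdj : Hm.Adj a t := by
              rw [hHm, SimpleGraph.deleteEdges_adj]; exact ⟨hat, hmemf⟩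
            rw [hmemC] at haC ⊢
            exact hAdj.reachable.symm.trans haC
        exact hpC (closed_mem_of_reachable hclosedC
          ((hmemC u).mpr (SimpleGraph.Reachable.refl u)) (hconn u huS p hpS))
      have hSeq : S = {p, r, s0} := by
        apply Set.Subset.antisymm hS3
        intro u hu
        rcases Set.mem_insert_iff.mp hu with h | hu'
        · exact h ▸ hpS
        rcases Set.mem_insert_iff.mp hu' with h | hu''
        · exact h ▸ hrS
        rw [Set.mem_singleton_iff] at hu''
        exact hu'' ▸ hs0S
      have h3 : S.ncard = 3 := by
        rw [hSeq]
        exact Set.ncard_eq_three.mpr ⟨p, r, s0, hrp.symm, hs0p.symm, hs0r.symm, rfl⟩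
      rw [h3] at heven
      exact (by decide : ¬ Even 3) heven
    · -- genuine induction step
      have hqsne : q ≠ s0 := fun h => hs0q h.symm
      have hdq1 : (Hm.neighborSet q).ncard = 1 := by
        rw [huntouched q (Ne.symm hpq) (Ne.symm hrq) hqsne]
        exact hdq
      have hds1 : (Hm.neighborSet s0).ncard = 1 := by
        have h1 : Hm.neighborSet s0 = H.neighborSet s0 \ {r} := by
          rw [hnbru s0 hs0p hs0r]
          ext w
          simp only [Set.mem_diff, Set.mem_insert_iff, Set.mem_singleton_iff, not_or]
          constructor
          · rintro ⟨h1, _, h3⟩; exact ⟨h1, h3⟩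
          · rintro ⟨h1, h3⟩
            refine ⟨h1, ?_, h3⟩
            rintro rfl
            exact hs0r (hadjp s0 h1)
        have hrmem : r ∈ H.neighborSet s0 := hrs0.symm
        rw [h1, Set.ncard_diff_singleton_of_mem hrmem,
          hdeg s0 hs0S hs0p hs0q]
      set Sm := S \ ({p, r} : Set W) with hSm
      have hnotpr : ∀ u, u ∈ Sm → u ≠ p ∧ u ≠ r := by
        intro u hu
        obtain ⟨_, hu2⟩ := hu
        simp only [Set.mem_insert_iff, Set.mem_singleton_iff, not_or] at hu2
        exact hu2
      have houtm : ∀ u, u ∉ S → Hm.neighborSet u = H.neighborSet u := by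
        intro u huS
        exact huntouched u (fun h => huS (h ▸ hpS)) (fun h => huS (h ▸ hrS))
          (fun h => huS (h ▸ hs0S))
      have hreachqs : Hm.Reachable q s0 := by
        apply reachable_of_odd_degrees Hm q s0 hqsne
        · rw [hdq1]; exact odd_one
        · rw [hds1]; exact odd_one
        · intro v hvq hvs
          by_cases hvp : v = p
          · subst hvp; rw [hnp]; simp
          by_cases hvr : v = r
          · subst hvr; rw [hnr]; simp
          rw [huntouched v hvp hvr hvs]
          by_cases hvS : v ∈ S
          · rw [hdeg v hvS hvp hvq]; decide
          · exact hout v hvS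
      have hcompm : ∀ u ∈ Sm, Hm.Reachable u q ∨ Hm.Reachable u s0 := by
        intro u huSm
        obtain ⟨hup, hur⟩ := hnotpr u huSm
        obtain ⟨huS, _⟩ := huSm
        by_contra hcon
        push_neg at hcon
        obtain ⟨hcq, hcs⟩ := hcon
        set C := (Hm.connectedComponentMk u).supp with hC
        have hmemC : ∀ w, w ∈ C ↔ Hm.Reachable w u := by
          intro w
          rw [hC, SimpleGraph.ConnectedComponent.mem_supp_iff,
            SimpleGraph.ConnectedComponent.eq]
        have hqC : q ∉ C := fun h => hcq ((hmemC q).mp h).symm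
        have hsC : s0 ∉ C := fun h => hcs ((hmemC s0).mp h).symm
        have hpC : p ∉ C := by
          intro h
          obtain ⟨wlk⟩ := ((hmemC p).mp h).symm
          obtain ⟨t, ht⟩ := neighbor_nonempty_of_reachable wlk hup
          rw [hnp] at ht; exact ht
        have hrC : r ∉ C := by
          intro h
          obtain ⟨wlk⟩ := ((hmemC r).mp h).symm
          obtain ⟨t, ht⟩ := neighbor_nonempty_of_reachable wlk hur
          rw [hnr] at ht; exact ht
        have hclosedC : ∀ a ∈ C, ∀ t, H.Adj a t → t ∈ C := by
          intro a haC t hat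
          by_cases hmemf : s(a, t) ∈ F
          · exfalso
            rcases (hmemF a t).mp hmemf with h | h | h | h
            · exact hpC (h ▸ haC)
            · subst h; exact hrC ((hadjp a hat) ▸ haC)
            · exact hrC (h ▸ haC)
            · subst h
              rcases hadjr a hat with h' | h'
              · exact hpC (h' ▸ haC)
              · exact hsC (h' ▸ haC)
          · have hAdj : Hm.Adj a t := by
              rw [hHm, SimpleGraph.deleteEdges_adj]; exact ⟨hat, hmemf⟩
            rw [hmemC] at haC ⊢
            exact hAdj.reachable.symm.trans haC
        exact hpC (closed_mem_of_reachable hclosedC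
          ((hmemC u).mpr (SimpleGraph.Reachable.refl u)) (hconn u huS p hpS))
      have hconnm : ∀ u ∈ Sm, ∀ v ∈ Sm, Hm.Reachable u v := by
        intro u hu v hv
        rcases hcompm u hu with h1 | h1 <;> rcases hcompm v hv with h2 | h2
        · exact h1.trans h2.symm
        · exact h1.trans (hreachqs.trans h2.symm)
        · exact h1.trans (hreachqs.symm.trans h2.symm)
        · exact h1.trans h2.symm
      have hclosedm : ∀ u ∈ Sm, ∀ v, Hm.Adj u v → v ∈ Sm := by
        intro u hu v hadj
        obtain ⟨huS, _⟩ := hu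
        rw [hHm, SimpleGraph.deleteEdges_adj] at hadj
        obtain ⟨hadj', hnF⟩ := hadj
        refine ⟨hclosed u huS v hadj', ?_⟩
        simp only [Set.mem_insert_iff, Set.mem_singleton_iff, not_or]
        constructor
        · rintro rfl; exact hnF ((hmemF u v).mpr (Or.inr (Or.inl rfl)))
        · rintro rfl; exact hnF ((hmemF u v).mpr (Or.inr (Or.inr (Or.inr rfl))))
      have hprS : ({p, r} : Set W) ⊆ S := by
        rintro w hw
        rcases Set.mem_insert_iff.mp hw with h | hw'
        · exact h ▸ hpS
        · rw [Set.mem_singleton_iff] at hw'; exact hw' ▸ hrS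
      have hcardm : Sm.ncard = n - 2 := by
        rw [hSm, Set.ncard_diff hprS (Set.toFinite _), hcard, Set.ncard_pair hrp.symm]
      have hn2 : 2 ≤ n := by
        have hsub : ({p, q} : Set W) ⊆ S := by
          rintro w hw
          rcases Set.mem_insert_iff.mp hw with h | hw'
          · exact h ▸ hpS
          · rw [Set.mem_singleton_iff] at hw'; exact hw' ▸ hqS
        have := Set.ncard_le_ncard hsub (Set.toFinite _)
        rwa [Set.ncard_pair hpq, hcard] at this
      have hlt : n - 2 < n := by omega
      have houtEven : ∀ u, u ∉ Sm → Even ((Hm.neighborSet u).ncard) := by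
        intro u hu
        by_cases hup : u = p
        · subst hup; rw [hnp]; simp
        by_cases hur : u = r
        · subst hur; rw [hnr]; simp
        have huS : u ∉ S := by
          intro h
          apply hu
          refine ⟨h, ?_⟩
          simp only [Set.mem_insert_iff, Set.mem_singleton_iff, not_or]
          exact ⟨hup, hur⟩
        rw [houtm u huS]
        exact hout u huS
      have hevenm : Even Sm.ncard := by
        rw [hcardm]
        obtain ⟨k, hk⟩ := hcard ▸ heven
        exact ⟨k - 1, by omega⟩
      have hshapem : Sm = ∅ ∨ ∃ p' ∈ Sm, ∃ q' ∈ Sm, p' ≠ q' ∧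
          (Hm.neighborSet p').ncard = 1 ∧ (Hm.neighborSet q').ncard = 1 ∧
          ∀ u ∈ Sm, u ≠ p' → u ≠ q' → (Hm.neighborSet u).ncard = 2 := by
        right
        refine ⟨q, ⟨hqS, ?_⟩, s0, ⟨hs0S, ?_⟩, hqsne, hdq1, hds1, ?_⟩
        · simp only [Set.mem_insert_iff, Set.mem_singleton_iff, not_or]
          exact ⟨Ne.symm hpq, Ne.symm hrq⟩
        · simp only [Set.mem_insert_iff, Set.mem_singleton_iff, not_or]
          exact ⟨hs0p, hs0r⟩
        · intro u hu huq hus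
          obtain ⟨hup, hur⟩ := hnotpr u hu
          rw [huntouched u hup hur hus]
          exact hdeg u hu.1 hup huq
      obtain ⟨Pm, hPm1, hPm2, hPm3, hPm4⟩ :=
        ih (n - 2) hlt Hm Sm hcardm hclosedm hconnm houtEven hevenm hshapem
      refine ⟨insert s(p, r) Pm, ?_, ?_, ?_, ?_⟩
      · rintro e he
        rcases Set.mem_insert_iff.mp he with rfl | he'
        · exact (H.mem_edgeSet).mpr hpr
        · have := hPm1 e he'
          rw [hHm, SimpleGraph.edgeSet_deleteEdges] at this
          exact this.1
      · rw [Set.pairwise_insert]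
        refine ⟨hPm2, ?_⟩
        intro e he _
        constructor
        · intro v hv hv'
          have hvSm := hPm3 e he v hv'
          obtain ⟨hvp, hvr⟩ := hnotpr v hvSm
          rcases Sym2.mem_iff.mp hv with h | h
          · exact hvp h
          · exact hvr h
        · intro v hv hv'
          have hvSm := hPm3 e he v hv
          obtain ⟨hvp, hvr⟩ := hnotpr v hvSm
          rcases Sym2.mem_iff.mp hv' with h | h
          · exact hvp h
          · exact hvr h
      · rintro e he t ht
        rcases Set.mem_insert_iff.mp he with rfl | he'
        · rcases Sym2.mem_iff.mp ht with h | h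
          · exact h ▸ hpS
          · exact h ▸ hrS
        · exact (hPm3 e he' t ht).1
      · intro u huS
        by_cases hup : u = p
        · exact ⟨s(p, r), Set.mem_insert _ _, by rw [hup]; exact Sym2.mem_mk_left _ _⟩
        by_cases hur : u = r
        · exact ⟨s(p, r), Set.mem_insert _ _, by rw [hur]; exact Sym2.mem_mk_right _ _⟩
        have huSm : u ∈ Sm := by
          refine ⟨huS, ?_⟩
          simp only [Set.mem_insert_iff, Set.mem_singleton_iff, not_or]
          exact ⟨hup, hur⟩
        obtain ⟨e, heP, hue⟩ := hPm4 u huSm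
        exact ⟨e, Set.mem_insert_of_mem _ heP, hue⟩

/-- In a 2-regular graph, the vertex set of a component minus any one of its
vertices (for an odd component) carries a matching covering exactly it. -/
lemma odd_component_near_matching [Fintype W] {H : SimpleGraph W}
    (hreg : ∀ u, (H.neighborSet u).ncard = 2)
    (c : H.ConnectedComponent) (hodd : Odd c.supp.ncard) {v : W} (hv : v ∈ c.supp) :
    ∃ P : Set (Sym2 W), (∀ e ∈ P, e ∈ H.edgeSet) ∧ P.Pairwise Sym2Disjoint ∧
      (∀ e ∈ P, ∀ t ∈ e, t ∈ c.supp ∧ t ≠ v) ∧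
      (∀ u ∈ c.supp, u ≠ v → ∃ e ∈ P, u ∈ e) := by
  classical
  obtain ⟨p2, q2, hp2q2, hnbrv⟩ := Set.ncard_eq_two.mp (hreg v)
  have hp2 : H.Adj v p2 := by
    have : p2 ∈ H.neighborSet v := by rw [hnbrv]; exact Set.mem_insert _ _
    exact this
  have hq2 : H.Adj v q2 := by
    have : q2 ∈ H.neighborSet v := by
      rw [hnbrv]; exact Set.mem_insert_iff.mpr (Or.inr rfl)
    exact this
  have hadjv : ∀ t, H.Adj t v → t = p2 ∨ t = q2 := by
    intro t ht
    have : t ∈ H.neighborSet v := ht.symm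
    rwa [hnbrv, Set.mem_insert_iff, Set.mem_singleton_iff] at this
  set F : Set (Sym2 W) := {e | v ∈ e} with hF
  set K := H.deleteEdges F with hK
  set S := c.supp \ {v} with hS
  have hmemF : ∀ u w : W, s(u, w) ∈ F ↔ (u = v ∨ w = v) := by
    intro u w
    simp only [hF, Set.mem_setOf_eq, Sym2.mem_iff]
    constructor
    · rintro (h | h)
      exacts [Or.inl h.symm, Or.inr h.symm]
    · rintro (h | h)
      exacts [Or.inl h.symm, Or.inr h.symm]
  have hKv : K.neighborSet v = ∅ := by
    rw [hK, neighborSet_deleteEdges]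
    ext w
    simp only [Set.mem_setOf_eq, Set.mem_empty_iff_false, iff_false, not_and, not_not, hF]
    intro _
    exact Sym2.mem_mk_left _ _
  have hKu : ∀ u, u ≠ v → K.neighborSet u = H.neighborSet u \ {v} := by
    intro u hu
    rw [hK, neighborSet_deleteEdges]
    ext w
    simp only [Set.mem_setOf_eq, Set.mem_diff, Set.mem_singleton_iff, hmemF, not_or]
    tauto
  have hKuntouched : ∀ u, u ≠ v → u ≠ p2 → u ≠ q2 → K.neighborSet u = H.neighborSet u := by
    intro u hu hup hur
    rw [hKu u hu]
    apply Set.Subset.antisymm Set.diff_subset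
    intro w hw
    refine ⟨hw, fun hw1 => ?_⟩
    rw [Set.mem_singleton_iff] at hw1
    subst hw1
    rcases hadjv u hw with h | h
    · exact hup h
    · exact hur h
  have hp2c : p2 ∈ c.supp := mem_supp_of_adj hv hp2
  have hq2c : q2 ∈ c.supp := mem_supp_of_adj hv hq2
  have hp2v : p2 ≠ v := hp2.ne'
  have hq2v : q2 ≠ v := hq2.ne'
  have hd1 : (K.neighborSet p2).ncard = 1 := by
    have hvm : v ∈ H.neighborSet p2 := hp2.symm
    rw [hKu p2 hp2v, Set.ncard_diff_singleton_of_mem hvm, hreg p2]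
  have hd2 : (K.neighborSet q2).ncard = 1 := by
    have hvm : v ∈ H.neighborSet q2 := hq2.symm
    rw [hKu q2 hq2v, Set.ncard_diff_singleton_of_mem hvm, hreg q2]
  have hreachpq : K.Reachable p2 q2 := by
    apply reachable_of_odd_degrees K p2 q2 hp2q2
    · rw [hd1]; exact odd_one
    · rw [hd2]; exact odd_one
    · intro u hu1 hu2
      by_cases huv : u = v
      · subst huv; rw [hKv]; simp
      · rw [hKuntouched u huv hu1 hu2, hreg u]; decide
  have hcomp : ∀ u ∈ S, K.Reachable u p2 ∨ K.Reachable u q2 := by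
    intro u huS
    obtain ⟨huc, huv'⟩ := huS
    rw [Set.mem_singleton_iff] at huv'
    by_contra hcon
    push_neg at hcon
    obtain ⟨hcp, hcq⟩ := hcon
    set C := (K.connectedComponentMk u).supp with hC
    have hmemC : ∀ w, w ∈ C ↔ K.Reachable w u := by
      intro w
      rw [hC, SimpleGraph.ConnectedComponent.mem_supp_iff, SimpleGraph.ConnectedComponent.eq]
    have hpC : p2 ∉ C := fun h => hcp ((hmemC p2).mp h).symm
    have hqC : q2 ∉ C := fun h => hcq ((hmemC q2).mp h).symm
    have hvC : v ∉ C := by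
      intro h
      obtain ⟨wlk⟩ := ((hmemC v).mp h).symm
      obtain ⟨t, ht⟩ := neighbor_nonempty_of_reachable wlk huv'
      rw [hKv] at ht; exact ht
    have hclosedC : ∀ a ∈ C, ∀ t, H.Adj a t → t ∈ C := by
      intro a haC t hat
      by_cases hmemf : s(a, t) ∈ F
      · exfalso
        rcases (hmemF a t).mp hmemf with h | h
        · exact hvC (h ▸ haC)
        · subst h
          rcases hadjv a hat with h' | h'
          · exact hpC (h' ▸ haC)
          · exact hqC (h' ▸ haC)
      · have hAdj : K.Adj a t := by
          rw [hK, SimpleGraph.deleteEdges_adj]; exact ⟨hat, hmemf⟩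
        rw [hmemC] at haC ⊢
        exact hAdj.reachable.symm.trans haC
    exact hvC (closed_mem_of_reachable hclosedC
      ((hmemC u).mpr (SimpleGraph.Reachable.refl u)) (reachable_of_mem_supp huc hv))
  have hp2S : p2 ∈ S := ⟨hp2c, by rw [Set.mem_singleton_iff]; exact hp2v⟩
  have hq2S : q2 ∈ S := ⟨hq2c, by rw [Set.mem_singleton_iff]; exact hq2v⟩
  have hconnS : ∀ u ∈ S, ∀ w ∈ S, K.Reachable u w := by
    intro u hu w hw
    rcases hcomp u hu with h1 | h1 <;> rcases hcomp w hw with h2 | h2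
    · exact h1.trans h2.symm
    · exact h1.trans (hreachpq.trans h2.symm)
    · exact h1.trans (hreachpq.symm.trans h2.symm)
    · exact h1.trans h2.symm
  have hclosedS : ∀ u ∈ S, ∀ w, K.Adj u w → w ∈ S := by
    intro u hu w hadj
    obtain ⟨huc, _⟩ := hu
    rw [hK, SimpleGraph.deleteEdges_adj] at hadj
    obtain ⟨hadj', hnF⟩ := hadj
    refine ⟨mem_supp_of_adj huc hadj', ?_⟩
    rw [Set.mem_singleton_iff]
    rintro rfl
    exact hnF ((hmemF u w).mpr (Or.inr rfl))
  have houtS : ∀ u, u ∉ S → Even ((K.neighborSet u).ncard) := by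
    intro u hu
    by_cases huv : u = v
    · subst huv; rw [hKv]; simp
    have huc : u ∉ c.supp := by
      intro h
      exact hu ⟨h, by rw [Set.mem_singleton_iff]; exact huv⟩
    have hup : u ≠ p2 := fun h => huc (h ▸ hp2c)
    have huq : u ≠ q2 := fun h => huc (h ▸ hq2c)
    rw [hKuntouched u huv hup huq, hreg u]
    decide
  have hevenS : Even S.ncard := by
    rw [hS, Set.ncard_diff_singleton_of_mem hv]
    obtain ⟨k, hk⟩ := hodd
    exact ⟨k, by omega⟩
  have hdegS : ∀ u ∈ S, u ≠ p2 → u ≠ q2 → (K.neighborSet u).ncard = 2 := by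
    intro u hu hup huq
    obtain ⟨_, huv'⟩ := hu
    rw [Set.mem_singleton_iff] at huv'
    rw [hKuntouched u huv' hup huq, hreg u]
  obtain ⟨P, hP1, hP2, hP3, hP4⟩ := match_on_path S.ncard K S rfl hclosedS hconnS houtS hevenS
    (Or.inr ⟨p2, hp2S, q2, hq2S, hp2q2, hd1, hd2, hdegS⟩)
  refine ⟨P, ?_, hP2, ?_, ?_⟩
  · intro e he
    have := hP1 e he
    rw [hK, SimpleGraph.edgeSet_deleteEdges] at this
    exact this.1
  · intro e he t ht
    have := hP3 e he t ht
    exact ⟨this.1, by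
      have := this.2
      rw [Set.mem_singleton_iff] at this
      exact this⟩
  · intro u hu huv
    exact hP4 u ⟨hu, by rw [Set.mem_singleton_iff]; exact huv⟩

lemma not_mem_support_of_isolated {K : SimpleGraph W} {v : W}
    (hv : K.neighborSet v = ∅) :
    ∀ {u w : W} (p : K.Walk u w), u ≠ v → v ∉ p.support := by
  intro u w p
  induction p with
  | nil =>
    intro hu hmem
    rw [SimpleGraph.Walk.support_nil, List.mem_singleton] at hmem
    exact hu hmem.symm
  | @cons a b c hab p ih =>
    intro hu hmem
    rw [SimpleGraph.Walk.support_cons, List.mem_cons] at hmem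
    rcases hmem with h | h
    · exact hu h.symm
    · refine ih ?_ h
      rintro rfl
      have : a ∈ K.neighborSet b := hab.symm
      rw [hv] at this
      exact this

lemma reachable_of_mem_support {K : SimpleGraph W} :
    ∀ {u w : W} (p : K.Walk u w) {t : W}, t ∈ p.support → K.Reachable u t := by
  intro u w p
  induction p with
  | nil =>
    intro t ht
    rw [SimpleGraph.Walk.support_nil, List.mem_singleton] at ht
    exact ht ▸ SimpleGraph.Reachable.refl _
  | @cons a b c hab p ih =>
    intro t ht
    rw [SimpleGraph.Walk.support_cons, List.mem_cons] at ht
    rcases ht with h | h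
    · exact h ▸ SimpleGraph.Reachable.refl _
    · exact hab.reachable.trans (ih h)

lemma reachable_map_of_support {U : Type*} {K : SimpleGraph W} {Γ : SimpleGraph U}
    (f : W → U) {T : Set W}
    (hmap : ∀ a ∈ T, ∀ b ∈ T, K.Adj a b → Γ.Adj (f a) (f b)) :
    ∀ {u w : W} (p : K.Walk u w), (∀ t ∈ p.support, t ∈ T) →
      Γ.Reachable (f u) (f w) := by
  intro u w p
  induction p with
  | nil => exact fun _ => SimpleGraph.Reachable.refl _
  | @cons a b c hab p ih =>
    intro hsup
    have ha : a ∈ T := hsup a (SimpleGraph.Walk.start_mem_support _)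
    have hb : b ∈ T := hsup b (by
      rw [SimpleGraph.Walk.support_cons]
      exact List.mem_cons_of_mem _ (SimpleGraph.Walk.start_mem_support _))
    exact ((hmap a ha b hb hab).reachable).trans (ih (fun t ht => hsup t (by
      rw [SimpleGraph.Walk.support_cons]
      exact List.mem_cons_of_mem _ ht)))

/-- In a 2-regular graph, removing all edges at a vertex `v` of a component keeps
the rest of the component connected. -/
lemma component_minus_vertex_reach [Fintype W] {H : SimpleGraph W}
    (hreg : ∀ u, (H.neighborSet u).ncard = 2)
    {d : H.ConnectedComponent} {v : W} (hv : v ∈ d.supp) :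
    ∀ u ∈ d.supp, u ≠ v → ∀ w ∈ d.supp, w ≠ v →
      (H.deleteEdges {e | v ∈ e}).Reachable u w := by
  classical
  obtain ⟨p2, q2, hp2q2, hnbrv⟩ := Set.ncard_eq_two.mp (hreg v)
  have hp2 : H.Adj v p2 := by
    have : p2 ∈ H.neighborSet v := by rw [hnbrv]; exact Set.mem_insert _ _
    exact this
  have hq2 : H.Adj v q2 := by
    have : q2 ∈ H.neighborSet v := by
      rw [hnbrv]; exact Set.mem_insert_iff.mpr (Or.inr rfl)
    exact this
  have hadjv : ∀ t, H.Adj t v → t = p2 ∨ t = q2 := by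
    intro t ht
    have : t ∈ H.neighborSet v := ht.symm
    rwa [hnbrv, Set.mem_insert_iff, Set.mem_singleton_iff] at this
  set F : Set (Sym2 W) := {e | v ∈ e} with hF
  set K := H.deleteEdges F with hK
  have hmemF : ∀ u w : W, s(u, w) ∈ F ↔ (u = v ∨ w = v) := by
    intro u w
    simp only [hF, Set.mem_setOf_eq, Sym2.mem_iff]
    constructor
    · rintro (h | h)
      exacts [Or.inl h.symm, Or.inr h.symm]
    · rintro (h | h)
      exacts [Or.inl h.symm, Or.inr h.symm]
  have hKv : K.neighborSet v = ∅ := by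
    rw [hK, neighborSet_deleteEdges]
    ext w
    simp only [Set.mem_setOf_eq, Set.mem_empty_iff_false, iff_false, not_and, not_not, hF]
    intro _
    exact Sym2.mem_mk_left _ _
  have hKu : ∀ u, u ≠ v → K.neighborSet u = H.neighborSet u \ {v} := by
    intro u hu
    rw [hK, neighborSet_deleteEdges]
    ext w
    simp only [Set.mem_setOf_eq, Set.mem_diff, Set.mem_singleton_iff, hmemF, not_or]
    tauto
  have hKuntouched : ∀ u, u ≠ v → u ≠ p2 → u ≠ q2 →
      K.neighborSet u = H.neighborSet u := by
    intro u hu hup hur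
    rw [hKu u hu]
    apply Set.Subset.antisymm Set.diff_subset
    intro w hw
    refine ⟨hw, fun hw1 => ?_⟩
    rw [Set.mem_singleton_iff] at hw1
    subst hw1
    rcases hadjv u hw with h | h
    · exact hup h
    · exact hur h
  have hp2v : p2 ≠ v := hp2.ne'
  have hq2v : q2 ≠ v := hq2.ne'
  have hd1 : (K.neighborSet p2).ncard = 1 := by
    have hvm : v ∈ H.neighborSet p2 := hp2.symm
    rw [hKu p2 hp2v, Set.ncard_diff_singleton_of_mem hvm, hreg p2]
  have hd2 : (K.neighborSet q2).ncard = 1 := by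
    have hvm : v ∈ H.neighborSet q2 := hq2.symm
    rw [hKu q2 hq2v, Set.ncard_diff_singleton_of_mem hvm, hreg q2]
  have hreachpq : K.Reachable p2 q2 := by
    apply reachable_of_odd_degrees K p2 q2 hp2q2
    · rw [hd1]; exact odd_one
    · rw [hd2]; exact odd_one
    · intro u hu1 hu2
      by_cases huv : u = v
      · subst huv; rw [hKv]; simp
      · rw [hKuntouched u huv hu1 hu2, hreg u]; decide
  have hcomp : ∀ u ∈ d.supp, u ≠ v → (K.Reachable u p2 ∨ K.Reachable u q2) := by
    intro u huc huv'
    by_contra hcon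
    push_neg at hcon
    obtain ⟨hcp, hcq⟩ := hcon
    set C := (K.connectedComponentMk u).supp with hC
    have hmemC : ∀ w, w ∈ C ↔ K.Reachable w u := by
      intro w
      rw [hC, SimpleGraph.ConnectedComponent.mem_supp_iff,
        SimpleGraph.ConnectedComponent.eq]
    have hpC : p2 ∉ C := fun h => hcp ((hmemC p2).mp h).symm
    have hqC : q2 ∉ C := fun h => hcq ((hmemC q2).mp h).symm
    have hvC : v ∉ C := by
      intro h
      obtain ⟨wlk⟩ := ((hmemC v).mp h).symm
      obtain ⟨t, ht⟩ := neighbor_nonempty_of_reachable wlk huv'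
      rw [hKv] at ht; exact ht
    have hclosedC : ∀ a ∈ C, ∀ t, H.Adj a t → t ∈ C := by
      intro a haC t hat
      by_cases hmemf : s(a, t) ∈ F
      · exfalso
        rcases (hmemF a t).mp hmemf with h | h
        · exact hvC (h ▸ haC)
        · subst h
          rcases hadjv a hat with h' | h'
          · exact hpC (h' ▸ haC)
          · exact hqC (h' ▸ haC)
      · have hAdj : K.Adj a t := by
          rw [hK, SimpleGraph.deleteEdges_adj]; exact ⟨hat, hmemf⟩
        rw [hmemC] at haC ⊢
        exact hAdj.reachable.symm.trans haC
    exact hvC (closed_mem_of_reachable hclosedC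
      ((hmemC u).mpr (SimpleGraph.Reachable.refl u)) (reachable_of_mem_supp huc hv))
  intro u huc huv w hwc hwv
  rcases hcomp u huc huv with h1 | h1 <;> rcases hcomp w hwc hwv with h2 | h2
  · exact h1.trans h2.symm
  · exact h1.trans (hreachpq.trans h2.symm)
  · exact h1.trans (hreachpq.symm.trans h2.symm)
  · exact h1.trans h2.symm

/-- In a 2-regular graph, removing one edge of a component keeps the component
connected. -/
lemma component_minus_edge_reach [Fintype W] {H : SimpleGraph W}
    (hreg : ∀ u, (H.neighborSet u).ncard = 2)
    {c : H.ConnectedComponent} {a b : W} (hab : H.Adj a b) (hac : a ∈ c.supp) :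
    ∀ u ∈ c.supp, ∀ w ∈ c.supp, (H.deleteEdges {s(a, b)}).Reachable u w := by
  classical
  set K := H.deleteEdges {s(a, b)} with hK
  have hbc : b ∈ c.supp := mem_supp_of_adj hac hab
  have hKu : ∀ u, u ≠ a → u ≠ b → K.neighborSet u = H.neighborSet u := by
    intro u hua hub
    rw [hK, neighborSet_deleteEdges]
    ext w
    simp only [Set.mem_setOf_eq, Set.mem_singleton_iff, Sym2.eq_iff]
    constructor
    · rintro ⟨h1, _⟩; exact h1
    · intro h1
      refine ⟨h1, ?_⟩
      rintro (⟨h2, _⟩ | ⟨h2, _⟩)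
      · exact hua h2
      · exact hub h2
  have hKa : K.neighborSet a = H.neighborSet a \ {b} := by
    rw [hK, neighborSet_deleteEdges]
    ext w
    simp only [Set.mem_setOf_eq, Set.mem_diff, Set.mem_singleton_iff, Sym2.eq_iff]
    constructor
    · rintro ⟨h1, h2⟩
      exact ⟨h1, fun h => h2 (Or.inl ⟨trivial, h⟩)⟩
    · rintro ⟨h1, h2⟩
      refine ⟨h1, ?_⟩
      rintro (⟨_, h3⟩ | ⟨h3, _⟩)
      · exact h2 h3
      · exact hab.ne h3
  have hKb : K.neighborSet b = H.neighborSet b \ {a} := by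
    rw [hK, neighborSet_deleteEdges]
    ext w
    simp only [Set.mem_setOf_eq, Set.mem_diff, Set.mem_singleton_iff, Sym2.eq_iff]
    constructor
    · rintro ⟨h1, h2⟩
      exact ⟨h1, fun h => h2 (Or.inr ⟨trivial, h⟩)⟩
    · rintro ⟨h1, h2⟩
      refine ⟨h1, ?_⟩
      rintro (⟨h3, _⟩ | ⟨_, h3⟩)
      · exact hab.ne h3.symm
      · exact h2 h3
  have hda : (K.neighborSet a).ncard = 1 := by
    have hm : b ∈ H.neighborSet a := hab
    rw [hKa, Set.ncard_diff_singleton_of_mem hm, hreg a]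
  have hdb : (K.neighborSet b).ncard = 1 := by
    have hm : a ∈ H.neighborSet b := hab.symm
    rw [hKb, Set.ncard_diff_singleton_of_mem hm, hreg b]
  have hreachab : K.Reachable a b := by
    apply reachable_of_odd_degrees K a b hab.ne
    · rw [hda]; exact odd_one
    · rw [hdb]; exact odd_one
    · intro u hu1 hu2
      rw [hKu u hu1 hu2, hreg u]; decide
  have hcomp : ∀ u ∈ c.supp, (K.Reachable u a ∨ K.Reachable u b) := by
    intro u huc
    by_contra hcon
    push_neg at hcon
    obtain ⟨hca, hcb⟩ := hcon
    set C := (K.connectedComponentMk u).supp with hC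
    have hmemC : ∀ w, w ∈ C ↔ K.Reachable w u := by
      intro w
      rw [hC, SimpleGraph.ConnectedComponent.mem_supp_iff,
        SimpleGraph.ConnectedComponent.eq]
    have haC : a ∉ C := fun h => hca ((hmemC a).mp h).symm
    have hbC : b ∉ C := fun h => hcb ((hmemC b).mp h).symm
    have hclosedC : ∀ t ∈ C, ∀ w, H.Adj t w → w ∈ C := by
      intro t htC w htw
      by_cases hmemf : s(t, w) = s(a, b)
      · exfalso
        rcases Sym2.eq_iff.mp hmemf with ⟨h1, _⟩ | ⟨h1, _⟩
        · exact haC (h1 ▸ htC)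
        · exact hbC (h1 ▸ htC)
      · have hAdj : K.Adj t w := by
          rw [hK, SimpleGraph.deleteEdges_adj]
          exact ⟨htw, by rwa [Set.mem_singleton_iff]⟩
        rw [hmemC] at htC ⊢
        exact hAdj.reachable.symm.trans htC
    exact haC (closed_mem_of_reachable hclosedC
      ((hmemC u).mpr (SimpleGraph.Reachable.refl u)) (reachable_of_mem_supp huc hac))
  intro u huc w hwc
  rcases hcomp u huc with h1 | h1 <;> rcases hcomp w hwc with h2 | h2
  · exact h1.trans h2.symm
  · exact h1.trans (hreachab.trans h2.symm)
  · exact h1.trans (hreachab.symm.trans h2.symm)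
  · exact h1.trans h2.symm

lemma sym2_cases (e : Sym2 W) : ∃ p q : W, e = s(p, q) :=
  Sym2.ind (fun p q => ⟨p, q, rfl⟩) e

end Toolkit2

section LiftLemmas
variable {V1 V2 W' : Type*} {x y : V2}

lemma mem_liftL {E : Set (Sym2 V1)} {e : Sym2 (DotVert V1 x y)} :
    e ∈ liftEdgesLeft x y E ↔
      ∃ u v : V1, s(u, v) ∈ E ∧ e = s(Sum.inl u, Sum.inl v) := by
  constructor
  · rintro ⟨f, hf, rfl⟩
    obtain ⟨u, v, rfl⟩ := sym2_cases f
    exact ⟨u, v, hf, (Sym2.map_pair_eq _ _ _).symm⟩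
  · rintro ⟨u, v, h, rfl⟩
    exact ⟨s(u, v), h, Sym2.map_pair_eq _ _ _⟩

lemma liftL_pair_mem {E : Set (Sym2 V1)} {u v : V1} :
    s(Sum.inl u, Sum.inl v) ∈ liftEdgesLeft (V2 := V2) x y E ↔ s(u, v) ∈ E := by
  rw [mem_liftL]
  constructor
  · rintro ⟨u', v', h, heq⟩
    rw [Sym2.eq_iff] at heq
    rcases heq with ⟨h1, h2⟩ | ⟨h1, h2⟩ <;>
      rw [Sum.inl.injEq] at h1 h2
    · rw [h1, h2]; exact h
    · rw [h1, h2, Sym2.eq_swap]; exact h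
  · intro h
    exact ⟨u, v, h, rfl⟩

lemma liftR_pair_mem {E : Set (Sym2 V2)} {u v : V2} {hu : u ≠ x ∧ u ≠ y}
    {hv : v ≠ x ∧ v ≠ y} :
    s(Sum.inr ⟨u, hu⟩, Sum.inr ⟨v, hv⟩) ∈ liftEdgesRight V1 x y E ↔ s(u, v) ∈ E := by
  constructor
  · rintro ⟨p, q, hp, hq, hpq, heq⟩
    rw [Sym2.eq_iff] at heq
    rcases heq with ⟨h1, h2⟩ | ⟨h1, h2⟩ <;>
      rw [Sum.inr.injEq, Subtype.mk.injEq] at h1 h2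
    · rw [h1, h2]; exact hpq
    · rw [h1, h2, Sym2.eq_swap]; exact hpq
  · intro h
    exact ⟨u, v, hu, hv, h, rfl⟩

lemma liftR_shape {E : Set (Sym2 V2)} {e : Sym2 (DotVert V1 x y)}
    (he : e ∈ liftEdgesRight V1 x y E) :
    ∃ (p q : V2) (hp : p ≠ x ∧ p ≠ y) (hq : q ≠ x ∧ q ≠ y),
      s(p, q) ∈ E ∧ e = s(Sum.inr ⟨p, hp⟩, Sum.inr ⟨q, hq⟩) := he

lemma inl_pair_not_mem_liftR {E : Set (Sym2 V2)} {u v : V1} :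
    s(Sum.inl u, Sum.inl v) ∉ liftEdgesRight V1 x y E := by
  rintro ⟨p, q, hp, hq, hpq, heq⟩
  rw [Sym2.eq_iff] at heq
  rcases heq with ⟨h1, _⟩ | ⟨h1, _⟩ <;> exact nomatch h1

lemma mixed_not_mem_liftR {E : Set (Sym2 V2)} {u : V1} {w : {w : V2 // w ≠ x ∧ w ≠ y}} :
    s(Sum.inl u, Sum.inr w) ∉ liftEdgesRight V1 x y E := by
  rintro ⟨p, q, hp, hq, hpq, heq⟩
  rw [Sym2.eq_iff] at heq
  rcases heq with ⟨h1, _⟩ | ⟨h1, _⟩ <;> exact nomatch h1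

lemma mixed_not_mem_liftL {E : Set (Sym2 V1)} {u : V1} {w : {w : V2 // w ≠ x ∧ w ≠ y}} :
    s(Sum.inl u, Sum.inr w) ∉ liftEdgesLeft x y E := by
  intro h
  obtain ⟨p, q, _, heq⟩ := mem_liftL.mp h
  rw [Sym2.eq_iff] at heq
  rcases heq with ⟨_, h2⟩ | ⟨_, h2⟩ <;> exact nomatch h2

lemma inr_pair_not_mem_liftL {E : Set (Sym2 V1)} {w w' : {w : V2 // w ≠ x ∧ w ≠ y}} :
    s(Sum.inr w, Sum.inr w') ∉ liftEdgesLeft x y E := by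
  intro h
  obtain ⟨p, q, _, heq⟩ := mem_liftL.mp h
  rw [Sym2.eq_iff] at heq
  rcases heq with ⟨h2, _⟩ | ⟨_, h2⟩ <;> exact nomatch h2

lemma liftL_vert {E : Set (Sym2 V1)} {e : Sym2 (DotVert V1 x y)}
    (he : e ∈ liftEdgesLeft x y E) {w : {w : V2 // w ≠ x ∧ w ≠ y}}
    (hw : Sum.inr w ∈ e) : False := by
  obtain ⟨p, q, _, rfl⟩ := mem_liftL.mp he
  rw [Sym2.mem_iff] at hw
  rcases hw with h | h <;> exact nomatch h

lemma liftR_vert {E : Set (Sym2 V2)} {e : Sym2 (DotVert V1 x y)}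
    (he : e ∈ liftEdgesRight V1 x y E) {u : V1} (hu : Sum.inl u ∈ e) : False := by
  obtain ⟨p, q, hp, hq, _, rfl⟩ := liftR_shape he
  rw [Sym2.mem_iff] at hu
  rcases hu with h | h <;> exact nomatch h

lemma liftR_union (E F : Set (Sym2 V2)) :
    liftEdgesRight V1 x y (E ∪ F) =
      liftEdgesRight V1 x y E ∪ liftEdgesRight V1 x y F := by
  ext e
  constructor
  · rintro ⟨p, q, hp, hq, (h | h), rfl⟩
    · exact Or.inl ⟨p, q, hp, hq, h, rfl⟩
    · exact Or.inr ⟨p, q, hp, hq, h, rfl⟩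
  · rintro (⟨p, q, hp, hq, h, rfl⟩ | ⟨p, q, hp, hq, h, rfl⟩)
    · exact ⟨p, q, hp, hq, Or.inl h, rfl⟩
    · exact ⟨p, q, hp, hq, Or.inr h, rfl⟩

lemma liftR_mono {E F : Set (Sym2 V2)} (h : E ⊆ F) :
    liftEdgesRight V1 x y E ⊆ liftEdgesRight V1 x y F := by
  rintro e ⟨p, q, hp, hq, hm, rfl⟩
  exact ⟨p, q, hp, hq, h hm, rfl⟩

lemma liftL_pairwise {E : Set (Sym2 V1)} (h : E.Pairwise Sym2Disjoint) :
    (liftEdgesLeft (V2 := V2) x y E).Pairwise Sym2Disjoint := by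
  intro e he f hf hne v hve hvf
  obtain ⟨p, q, hpq, rfl⟩ := mem_liftL.mp he
  obtain ⟨p', q', hpq', rfl⟩ := mem_liftL.mp hf
  have hne2 : s(p, q) ≠ s(p', q') := by
    rintro h2
    exact hne (by rw [Sym2.eq_iff] at h2 ⊢; tauto)
  rw [Sym2.mem_iff] at hve hvf
  rcases hve with rfl | rfl <;> rcases hvf with h2 | h2 <;>
    rw [Sum.inl.injEq] at h2
  · exact h hpq hpq' hne2 p (Sym2.mem_mk_left _ _) (h2 ▸ Sym2.mem_mk_left _ _)
  · exact h hpq hpq' hne2 p (Sym2.mem_mk_left _ _) (h2 ▸ Sym2.mem_mk_right _ _)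
  · exact h hpq hpq' hne2 q (Sym2.mem_mk_right _ _) (h2 ▸ Sym2.mem_mk_left _ _)
  · exact h hpq hpq' hne2 q (Sym2.mem_mk_right _ _) (h2 ▸ Sym2.mem_mk_right _ _)

lemma liftR_pairwise {E : Set (Sym2 V2)} (h : E.Pairwise Sym2Disjoint) :
    (liftEdgesRight V1 x y E).Pairwise Sym2Disjoint := by
  intro e he f hf hne v hve hvf
  obtain ⟨p, q, hp, hq, hpq, rfl⟩ := liftR_shape he
  obtain ⟨p', q', hp', hq', hpq', rfl⟩ := liftR_shape hf
  have hne2 : s(p, q) ≠ s(p', q') := by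
    rintro h2
    apply hne
    rw [Sym2.eq_iff] at h2 ⊢
    rcases h2 with ⟨h3, h4⟩ | ⟨h3, h4⟩
    · subst h3; subst h4; exact Or.inl ⟨rfl, rfl⟩
    · subst h3; subst h4; exact Or.inr ⟨rfl, rfl⟩
  rw [Sym2.mem_iff] at hve hvf
  rcases hve with rfl | rfl <;> rcases hvf with h2 | h2 <;>
    rw [Sum.inr.injEq, Subtype.mk.injEq] at h2
  · exact h hpq hpq' hne2 p (Sym2.mem_mk_left _ _) (h2 ▸ Sym2.mem_mk_left _ _)
  · exact h hpq hpq' hne2 p (Sym2.mem_mk_left _ _) (h2 ▸ Sym2.mem_mk_right _ _)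
  · exact h hpq hpq' hne2 q (Sym2.mem_mk_right _ _) (h2 ▸ Sym2.mem_mk_left _ _)
  · exact h hpq hpq' hne2 q (Sym2.mem_mk_right _ _) (h2 ▸ Sym2.mem_mk_right _ _)

lemma liftLR_sym2disjoint {E : Set (Sym2 V1)} {F : Set (Sym2 V2)} {e f}
    (he : e ∈ liftEdgesLeft (V2 := V2) x y E) (hf : f ∈ liftEdgesRight V1 x y F) :
    Sym2Disjoint e f := by
  intro v hv hv'
  obtain ⟨p, q, _, rfl⟩ := mem_liftL.mp he
  rw [Sym2.mem_iff] at hv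
  rcases hv with rfl | rfl <;> exact liftR_vert hf hv'

lemma liftR_disjoint_sets {E F : Set (Sym2 V2)} (h : Disjoint E F) :
    Disjoint (liftEdgesRight V1 x y E) (liftEdgesRight V1 x y F) := by
  rw [Set.disjoint_left]
  rintro e ⟨p, q, hp, hq, hpq, rfl⟩ hf
  have : s(p, q) ∈ F := liftR_pair_mem.mp hf
  exact Set.disjoint_left.mp h hpq this

lemma liftR_injOn {E F : Set (Sym2 V2)}
    (hE : ∀ e ∈ E, ∀ v ∈ e, v ≠ x ∧ v ≠ y) (hF : ∀ e ∈ F, ∀ v ∈ e, v ≠ x ∧ v ≠ y)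
    (h : liftEdgesRight V1 x y E = liftEdgesRight V1 x y F) : E = F := by
  ext e
  obtain ⟨p, q, rfl⟩ := sym2_cases e
  constructor
  · intro he
    have hp := hE _ he p (Sym2.mem_mk_left _ _)
    have hq := hE _ he q (Sym2.mem_mk_right _ _)
    have : s(Sum.inr ⟨p, hp⟩, Sum.inr ⟨q, hq⟩) ∈ liftEdgesRight V1 x y F := by
      rw [← h]; exact liftR_pair_mem.mpr he
    exact liftR_pair_mem.mp this
  · intro he
    have hp := hF _ he p (Sym2.mem_mk_left _ _)
    have hq := hF _ he q (Sym2.mem_mk_right _ _)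
    have : s(Sum.inr ⟨p, hp⟩, Sum.inr ⟨q, hq⟩) ∈ liftEdgesRight V1 x y E := by
      rw [h]; exact liftR_pair_mem.mpr he
    exact liftR_pair_mem.mp this

/-- Lift of a vertex set of `V2` avoiding `x, y` into the dot-product vertex type. -/
def liftSetR (V1 : Type*) {V2 : Type*} (x y : V2) (Q : Set V2) :
    Set (DotVert V1 x y) :=
  {α | ∃ (w : V2) (hw : w ≠ x ∧ w ≠ y), α = Sum.inr ⟨w, hw⟩ ∧ w ∈ Q}

lemma mem_liftSetR {Q : Set V2} {w : V2} {hw : w ≠ x ∧ w ≠ y} :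
    (Sum.inr ⟨w, hw⟩ : DotVert V1 x y) ∈ liftSetR V1 x y Q ↔ w ∈ Q := by
  constructor
  · rintro ⟨w', hw', heq, hmem⟩
    rw [Sum.inr.injEq, Subtype.mk.injEq] at heq
    exact heq ▸ hmem
  · intro h
    exact ⟨w, hw, rfl, h⟩

lemma inl_not_mem_liftSetR {Q : Set V2} {u : V1} :
    (Sum.inl u : DotVert V1 x y) ∉ liftSetR V1 x y Q := by
  rintro ⟨w, hw, heq, _⟩
  exact nomatch heq

lemma ncard_liftSetR {Q : Set V2} (hx : x ∉ Q) (hy : y ∉ Q) :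
    (liftSetR V1 x y Q).ncard = Q.ncard := by
  have h1 : liftSetR V1 x y Q =
      Sum.inr '' (Subtype.val ⁻¹' Q : Set {w : V2 // w ≠ x ∧ w ≠ y}) := by
    ext α
    constructor
    · rintro ⟨w, hw, rfl, hmem⟩
      exact ⟨⟨w, hw⟩, hmem, rfl⟩
    · rintro ⟨⟨w, hw⟩, hmem, rfl⟩
      exact ⟨w, hw, rfl, hmem⟩
  rw [h1, Set.ncard_image_of_injective _ Sum.inr_injective]
  have h2 : Subtype.val '' (Subtype.val ⁻¹' Q : Set {w : V2 // w ≠ x ∧ w ≠ y}) = Q := by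
    apply Set.Subset.antisymm (Set.image_preimage_subset _ _)
    intro w hw
    exact ⟨⟨w, ⟨fun h => hx (h ▸ hw), fun h => hy (h ▸ hw)⟩⟩, hw, rfl⟩
  conv_rhs => rw [← h2]
  rw [Set.ncard_image_of_injective _ Subtype.val_injective]

lemma nonempty_liftSetR {Q : Set V2} (h : (liftSetR V1 x y Q).Nonempty) : Q.Nonempty := by
  obtain ⟨α, w, hw, rfl, hmem⟩ := h
  exact ⟨w, hmem⟩

lemma liftSetR_inj {Q Q' : Set V2}
    (hQ : ∀ w ∈ Q, w ≠ x ∧ w ≠ y) (hQ' : ∀ w ∈ Q', w ≠ x ∧ w ≠ y)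
    (h : liftSetR V1 x y Q = liftSetR V1 x y Q') : Q = Q' := by
  ext w
  constructor
  · intro hw
    have h1 := hQ w hw
    have : (Sum.inr ⟨w, h1⟩ : DotVert V1 x y) ∈ liftSetR V1 x y Q' := by
      rw [← h]; exact mem_liftSetR.mpr hw
    exact mem_liftSetR.mp this
  · intro hw
    have h1 := hQ' w hw
    have : (Sum.inr ⟨w, h1⟩ : DotVert V1 x y) ∈ liftSetR V1 x y Q := by
      rw [h]; exact mem_liftSetR.mpr hw
    exact mem_liftSetR.mp this

lemma liftSetR_union (Q Q' : Set V2) :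
    liftSetR V1 x y (Q ∪ Q') = liftSetR V1 x y Q ∪ liftSetR V1 x y Q' := by
  ext α
  constructor
  · rintro ⟨w, hw, rfl, (h | h)⟩
    · exact Or.inl ⟨w, hw, rfl, h⟩
    · exact Or.inr ⟨w, hw, rfl, h⟩
  · rintro (⟨w, hw, rfl, h⟩ | ⟨w, hw, rfl, h⟩)
    · exact ⟨w, hw, rfl, Or.inl h⟩
    · exact ⟨w, hw, rfl, Or.inr h⟩

lemma incVerts_union_left (S S' : Set W') (X : Set (Sym2 W')) :
    incVerts (S ∪ S') X = incVerts S X ∪ incVerts S' X := by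
  ext v
  constructor
  · rintro ⟨(h | h), he⟩
    · exact Or.inl ⟨h, he⟩
    · exact Or.inr ⟨h, he⟩
  · rintro (⟨h, he⟩ | ⟨h, he⟩)
    · exact ⟨Or.inl h, he⟩
    · exact ⟨Or.inr h, he⟩

lemma incVerts_inl_liftR (Q : Set V1) (U : Set (Sym2 V2)) :
    incVerts (Sum.inl '' Q) (liftEdgesRight V1 x y U) = ∅ := by
  ext α
  simp only [Set.mem_empty_iff_false, iff_false]
  rintro ⟨⟨u, _, rfl⟩, e, he, hmem⟩
  exact liftR_vert he hmem

lemma incVerts_liftR {Q : Set V2} {U : Set (Sym2 V2)}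
    (hU : ∀ e ∈ U, ∀ v ∈ e, v ≠ x ∧ v ≠ y) :
    incVerts (liftSetR V1 x y Q) (liftEdgesRight V1 x y U) =
      liftSetR V1 x y (incVerts Q U) := by
  ext α
  constructor
  · rintro ⟨⟨w, hw, rfl, hmem⟩, e, he, hv⟩
    obtain ⟨p, q, hp, hq, hpq, rfl⟩ := liftR_shape he
    refine ⟨w, hw, rfl, hmem, s(p, q), hpq, ?_⟩
    rw [Sym2.mem_iff] at hv ⊢
    rcases hv with h | h <;> rw [Sum.inr.injEq, Subtype.mk.injEq] at h
    · exact Or.inl h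
    · exact Or.inr h
  · rintro ⟨w, hw, rfl, hmem, e, he, hv⟩
    obtain ⟨p, q, rfl⟩ := sym2_cases e
    have hp := hU _ he p (Sym2.mem_mk_left _ _)
    have hq := hU _ he q (Sym2.mem_mk_right _ _)
    refine ⟨⟨w, hw, rfl, hmem⟩, s(Sum.inr ⟨p, hp⟩, Sum.inr ⟨q, hq⟩),
      liftR_pair_mem.mpr he, ?_⟩
    rw [Sym2.mem_iff] at hv ⊢
    rcases hv with h | h
    · exact Or.inl (by rw [Sum.inr.injEq, Subtype.mk.injEq]; exact h)
    · exact Or.inr (by rw [Sum.inr.injEq, Subtype.mk.injEq]; exact h)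

lemma incVerts_diff_singleton {Q : Set V2} {U : Set (Sym2 V2)} {v : V2}
    (hv : ∀ e ∈ U, v ∉ e) :
    incVerts (Q \ {v}) U = incVerts Q U := by
  ext w
  constructor
  · rintro ⟨⟨h1, _⟩, he⟩
    exact ⟨h1, he⟩
  · rintro ⟨h1, e, he, hw⟩
    refine ⟨⟨h1, ?_⟩, e, he, hw⟩
    rw [Set.mem_singleton_iff]
    rintro rfl
    exact hv e he hw

lemma incVerts_mono_right {S : Set W'} {U U' : Set (Sym2 W')} (h : U ⊆ U') :
    incVerts S U ⊆ incVerts S U' := by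
  rintro v ⟨hv, e, he, hm⟩
  exact ⟨hv, e, h he, hm⟩

end LiftLemmas

section DotAdj
variable {V1 V2 : Type*} {G1 : SimpleGraph V1} {G2 : SimpleGraph V2}
  {u1 v1 u2 v2 : V1} {x1 x2 y1 y2 z1 z2 : V2}
  {hy1 : y1 ≠ x1 ∧ y1 ≠ x2} {hy2 : y2 ≠ x1 ∧ y2 ≠ x2}
  {hz1 : z1 ≠ x1 ∧ z1 ≠ x2} {hz2 : z2 ≠ x1 ∧ z2 ≠ x2}

lemma dotProd_adj {α β : DotVert V1 x1 x2} :
    (dotProd G1 G2 u1 v1 u2 v2 x1 x2 y1 y2 z1 z2 hy1 hy2 hz1 hz2).Adj α β ↔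
      (s(α, β) ∈ liftEdgesLeft x1 x2 (G1.edgeSet \ {s(u1, v1), s(u2, v2)}) ∪
        liftEdgesRight V1 x1 x2 G2.edgeSet ∪
        {s(Sum.inl u1, Sum.inr ⟨y1, hy1⟩), s(Sum.inl v1, Sum.inr ⟨y2, hy2⟩),
         s(Sum.inl u2, Sum.inr ⟨z1, hz1⟩), s(Sum.inl v2, Sum.inr ⟨z2, hz2⟩)}) ∧
      α ≠ β :=
  SimpleGraph.fromEdgeSet_adj _

lemma dot_adj_LL {u v : V1} (h : G1.Adj u v) (h1 : s(u, v) ≠ s(u1, v1))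
    (h2 : s(u, v) ≠ s(u2, v2)) :
    (dotProd G1 G2 u1 v1 u2 v2 x1 x2 y1 y2 z1 z2 hy1 hy2 hz1 hz2).Adj
      (Sum.inl u) (Sum.inl v) := by
  rw [dotProd_adj]
  refine ⟨Or.inl (Or.inl (liftL_pair_mem.mpr ⟨(G1.mem_edgeSet).mpr h, ?_⟩)), ?_⟩
  · intro hm
    rcases Set.mem_insert_iff.mp hm with hr | hr
    · exact h1 hr
    · exact h2 (Set.mem_singleton_iff.mp hr)
  · intro heq
    rw [Sum.inl.injEq] at heq
    exact h.ne heq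

lemma dot_adj_RR {u v : V2} (hu : u ≠ x1 ∧ u ≠ x2) (hv : v ≠ x1 ∧ v ≠ x2)
    (h : G2.Adj u v) :
    (dotProd G1 G2 u1 v1 u2 v2 x1 x2 y1 y2 z1 z2 hy1 hy2 hz1 hz2).Adj
      (Sum.inr ⟨u, hu⟩) (Sum.inr ⟨v, hv⟩) := by
  rw [dotProd_adj]
  refine ⟨Or.inl (Or.inr (liftR_pair_mem.mpr ((G2.mem_edgeSet).mpr h))), ?_⟩
  intro heq
  rw [Sum.inr.injEq, Subtype.mk.injEq] at heq
  exact h.ne heq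

lemma dot_adj_bridge1 :
    (dotProd G1 G2 u1 v1 u2 v2 x1 x2 y1 y2 z1 z2 hy1 hy2 hz1 hz2).Adj
      (Sum.inl u1) (Sum.inr ⟨y1, hy1⟩) := by
  rw [dotProd_adj]
  exact ⟨Or.inr (Set.mem_insert _ _), fun h => nomatch h⟩

lemma dot_adj_bridge2 :
    (dotProd G1 G2 u1 v1 u2 v2 x1 x2 y1 y2 z1 z2 hy1 hy2 hz1 hz2).Adj
      (Sum.inl v1) (Sum.inr ⟨y2, hy2⟩) := by
  rw [dotProd_adj]
  exact ⟨Or.inr (Set.mem_insert_iff.mpr (Or.inr (Set.mem_insert _ _))),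
    fun h => nomatch h⟩

lemma dot_adj_bridge3 :
    (dotProd G1 G2 u1 v1 u2 v2 x1 x2 y1 y2 z1 z2 hy1 hy2 hz1 hz2).Adj
      (Sum.inl u2) (Sum.inr ⟨z1, hz1⟩) := by
  rw [dotProd_adj]
  exact ⟨Or.inr (Set.mem_insert_iff.mpr (Or.inr (Set.mem_insert_iff.mpr
    (Or.inr (Set.mem_insert _ _))))), fun h => nomatch h⟩

lemma dot_adj_bridge4 :
    (dotProd G1 G2 u1 v1 u2 v2 x1 x2 y1 y2 z1 z2 hy1 hy2 hz1 hz2).Adj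
      (Sum.inl v2) (Sum.inr ⟨z2, hz2⟩) := by
  rw [dotProd_adj]
  exact ⟨Or.inr (Set.mem_insert_iff.mpr (Or.inr (Set.mem_insert_iff.mpr
    (Or.inr (Set.mem_insert_iff.mpr (Or.inr rfl)))))), fun h => nomatch h⟩

lemma dot_adj_inl_cases {u : V1} {β : DotVert V1 x1 x2}
    (h : (dotProd G1 G2 u1 v1 u2 v2 x1 x2 y1 y2 z1 z2 hy1 hy2 hz1 hz2).Adj
      (Sum.inl u) β) :
    (∃ v : V1, β = Sum.inl v ∧ G1.Adj u v ∧ s(u, v) ≠ s(u1, v1) ∧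
      s(u, v) ≠ s(u2, v2)) ∨
    (u = u1 ∧ β = Sum.inr ⟨y1, hy1⟩) ∨ (u = v1 ∧ β = Sum.inr ⟨y2, hy2⟩) ∨
    (u = u2 ∧ β = Sum.inr ⟨z1, hz1⟩) ∨ (u = v2 ∧ β = Sum.inr ⟨z2, hz2⟩) := by
  obtain ⟨hm, hne⟩ := dotProd_adj.mp h
  rcases hm with (hm | hm) | hm
  · left
    obtain ⟨p, q, ⟨hpq, hnot⟩, heq⟩ := mem_liftL.mp hm
    have hnot1 : s(p, q) ≠ s(u1, v1) := fun hh => hnot (Set.mem_insert_iff.mpr (Or.inl hh))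
    have hnot2 : s(p, q) ≠ s(u2, v2) := fun hh => hnot (Set.mem_insert_iff.mpr (Or.inr hh))
    rw [Sym2.eq_iff] at heq
    rcases heq with ⟨h1, h2⟩ | ⟨h1, h2⟩ <;> rw [Sum.inl.injEq] at h1
    · subst h1
      exact ⟨q, h2, (G1.mem_edgeSet).mp hpq, hnot1, hnot2⟩
    · subst h1
      refine ⟨p, h2, ((G1.mem_edgeSet).mp hpq).symm, ?_, ?_⟩
      · rw [Sym2.eq_swap]; exact hnot1
      · rw [Sym2.eq_swap]; exact hnot2
  · exfalso
    obtain ⟨p, q, hp, hq, _, heq⟩ := liftR_shape hm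
    rw [Sym2.eq_iff] at heq
    rcases heq with ⟨h1, _⟩ | ⟨h1, _⟩ <;> exact nomatch h1
  · simp only [Set.mem_insert_iff, Set.mem_singleton_iff] at hm
    rcases hm with hm | hm | hm | hm <;>
    · rw [Sym2.eq_iff] at hm
      rcases hm with ⟨h1, h2⟩ | ⟨h1, h2⟩
      · rw [Sum.inl.injEq] at h1
        subst h1
        tauto
      · exact nomatch h1

lemma dot_adj_inr_cases {w : V2} {hw : w ≠ x1 ∧ w ≠ x2} {β : DotVert V1 x1 x2}
    (h : (dotProd G1 G2 u1 v1 u2 v2 x1 x2 y1 y2 z1 z2 hy1 hy2 hz1 hz2).Adj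
      (Sum.inr ⟨w, hw⟩) β) :
    (∃ (v : V2) (hv : v ≠ x1 ∧ v ≠ x2), β = Sum.inr ⟨v, hv⟩ ∧ G2.Adj w v) ∨
    (w = y1 ∧ β = Sum.inl u1) ∨ (w = y2 ∧ β = Sum.inl v1) ∨
    (w = z1 ∧ β = Sum.inl u2) ∨ (w = z2 ∧ β = Sum.inl v2) := by
  obtain ⟨hm, hne⟩ := dotProd_adj.mp h
  rcases hm with (hm | hm) | hm
  · exfalso
    obtain ⟨p, q, _, heq⟩ := mem_liftL.mp hm
    rw [Sym2.eq_iff] at heq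
    rcases heq with ⟨h1, _⟩ | ⟨h1, _⟩ <;> exact nomatch h1
  · left
    obtain ⟨p, q, hp, hq, hpq, heq⟩ := liftR_shape hm
    rw [Sym2.eq_iff] at heq
    rcases heq with ⟨h1, h2⟩ | ⟨h1, h2⟩ <;> rw [Sum.inr.injEq, Subtype.mk.injEq] at h1
    · subst h1
      exact ⟨q, hq, h2, (G2.mem_edgeSet).mp hpq⟩
    · subst h1
      exact ⟨p, hp, h2, ((G2.mem_edgeSet).mp hpq).symm⟩
  · simp only [Set.mem_insert_iff, Set.mem_singleton_iff] at hm
    rcases hm with hm | hm | hm | hm <;>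
    · rw [Sym2.eq_iff] at hm
      rcases hm with ⟨h1, h2⟩ | ⟨h1, h2⟩
      · exact nomatch h1
      · rw [Sum.inr.injEq, Subtype.mk.injEq] at h1
        subst h1
        tauto

end DotAdj

lemma supp_disjoint {W : Type*} {H : SimpleGraph W} {c d : H.ConnectedComponent}
    (h : c ≠ d) {v : W} (hv : v ∈ c.supp) (hv' : v ∈ d.supp) : False := by
  rw [SimpleGraph.ConnectedComponent.mem_supp_iff] at hv hv'
  exact h (hv.symm.trans hv')


/-- Let `G1` be a snark with a perfect matching `M1` such that
`G1∖M1` consists of exactly two odd cycles `C`, `C'`, and let `e1 = ab` be an edge of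
`C` and `e2 = a'b'` an edge of `C'`. Let `G2` be a snark with a perfect matching `M2`
and an F-family `{A, B, C, D}` for `M2`, and let `e3 = xy` be an edge of
`M2 ∖ (A ∪ B ∪ C ∪ D)` whose endpoints lie on two distinct odd cycles of `G2∖M2`. Then
in the dot product `G = G1·G2` (formed using `e1, e2` and `e3`), the set
`M = M1 ∪ (M2 ∖ {xy})` is a perfect matching and `{A, B, C, D}` is an F-family
for `M`. -/
theorem stmt_12 {V1 V2 : Type*} [Fintype V1] [Fintype V2]
    (G1 : SimpleGraph V1) (G2 : SimpleGraph V2)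
    (hG1 : IsSnark G1) (hG2 : IsSnark G2)
    (M1 : Set (Sym2 V1)) (hM1 : IsPerfectMatchingSet G1 M1)
    (c c' : (G1.deleteEdges M1).ConnectedComponent) (hcc' : c ≠ c')
    (honly : ∀ d : (G1.deleteEdges M1).ConnectedComponent, d = c ∨ d = c')
    (hcodd : Odd c.supp.ncard) (hc'odd : Odd c'.supp.ncard)
    (a b a' b' : V1)
    (he1 : s(a, b) ∈ cycleEdges G1 M1 c.supp)
    (he2 : s(a', b') ∈ cycleEdges G1 M1 c'.supp)
    (M2 : Set (Sym2 V2)) (hM2 : IsPerfectMatchingSet G2 M2)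
    (A B C D : Set (Sym2 V2)) (hFam : IsFFamily G2 M2 A B C D)
    (x y : V2) (he3 : s(x, y) ∈ M2) (he3F : s(x, y) ∉ A ∪ B ∪ C ∪ D)
    (d1 d2 : (G2.deleteEdges M2).ConnectedComponent) (hd12 : d1 ≠ d2)
    (hd1odd : Odd d1.supp.ncard) (hd2odd : Odd d2.supp.ncard)
    (hxd : x ∈ d1.supp) (hyd : y ∈ d2.supp)
    (y1 y2 z1 z2 : V2)
    (hNx : G2.neighborSet x = {y1, y2, y}) (hNy : G2.neighborSet y = {z1, z2, x})
    (hy1 : y1 ≠ x ∧ y1 ≠ y) (hy2 : y2 ≠ x ∧ y2 ≠ y) (hy12 : y1 ≠ y2)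
    (hz1 : z1 ≠ x ∧ z1 ≠ y) (hz2 : z2 ≠ x ∧ z2 ≠ y) (hz12 : z1 ≠ z2) :
    IsPerfectMatchingSet (dotProd G1 G2 a b a' b' x y y1 y2 z1 z2 hy1 hy2 hz1 hz2)
      (liftEdgesLeft x y M1 ∪ liftEdgesRight V1 x y (M2 \ {s(x, y)})) ∧
    IsFFamily (dotProd G1 G2 a b a' b' x y y1 y2 z1 z2 hy1 hy2 hz1 hz2)
      (liftEdgesLeft x y M1 ∪ liftEdgesRight V1 x y (M2 \ {s(x, y)}))
      (liftEdgesRight V1 x y A) (liftEdgesRight V1 x y B)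
      (liftEdgesRight V1 x y C) (liftEdgesRight V1 x y D) := by
  classical
  obtain ⟨hcub1, -, -, -⟩ := hG1
  obtain ⟨hcub2, -, -, -⟩ := hG2
  obtain ⟨hbalG2, hdisjG2, hoddG2, hevenG2, hcovG2⟩ := hFam
  obtain ⟨he1G, he1M, he1c⟩ := he1
  obtain ⟨he2G, he2M, he2c⟩ := he2
  have hac : a ∈ c.supp := he1c a (Sym2.mem_mk_left _ _)
  have hbc : b ∈ c.supp := he1c b (Sym2.mem_mk_right _ _)
  have ha'c : a' ∈ c'.supp := he2c a' (Sym2.mem_mk_left _ _)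
  have hb'c : b' ∈ c'.supp := he2c b' (Sym2.mem_mk_right _ _)
  have hreg1 : ∀ v, ((G1.deleteEdges M1).neighborSet v).ncard = 2 :=
    two_regular_del_matching hcub1 hM1
  have hreg2 : ∀ v, ((G2.deleteEdges M2).neighborSet v).ncard = 2 :=
    two_regular_del_matching hcub2 hM2
  have hxyadj : G2.Adj x y := (G2.mem_edgeSet).mp (hM2.1.1 he3)
  have hxy : x ≠ y := hxyadj.ne
  have hH2x : (G2.deleteEdges M2).neighborSet x = {y1, y2} := by
    rw [neighborSet_del_matching hM2.1.2 he3, hNx]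
    ext w
    simp only [Set.mem_diff, Set.mem_insert_iff, Set.mem_singleton_iff]
    constructor
    · rintro ⟨(h | h | h), h2⟩
      · exact Or.inl h
      · exact Or.inr h
      · exact (h2 h).elim
    · rintro (h | h)
      · subst h; exact ⟨Or.inl rfl, hy1.2⟩
      · subst h; exact ⟨Or.inr (Or.inl rfl), hy2.2⟩
  have hyx3 : s(y, x) ∈ M2 := by rw [Sym2.eq_swap]; exact he3
  have hH2y : (G2.deleteEdges M2).neighborSet y = {z1, z2} := by
    rw [neighborSet_del_matching hM2.1.2 hyx3, hNy]
    ext w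
    simp only [Set.mem_diff, Set.mem_insert_iff, Set.mem_singleton_iff]
    constructor
    · rintro ⟨(h | h | h), h2⟩
      · exact Or.inl h
      · exact Or.inr h
      · exact (h2 h).elim
    · rintro (h | h)
      · subst h; exact ⟨Or.inl rfl, hz1.1⟩
      · subst h; exact ⟨Or.inr (Or.inl rfl), hz2.1⟩
  have hH2xy1 : (G2.deleteEdges M2).Adj x y1 := by
    have : y1 ∈ (G2.deleteEdges M2).neighborSet x := by
      rw [hH2x]; exact Set.mem_insert _ _
    exact this
  have hH2xy2 : (G2.deleteEdges M2).Adj x y2 := by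
    have : y2 ∈ (G2.deleteEdges M2).neighborSet x := by
      rw [hH2x]; exact Set.mem_insert_iff.mpr (Or.inr rfl)
    exact this
  have hH2yz1 : (G2.deleteEdges M2).Adj y z1 := by
    have : z1 ∈ (G2.deleteEdges M2).neighborSet y := by
      rw [hH2y]; exact Set.mem_insert _ _
    exact this
  have hH2yz2 : (G2.deleteEdges M2).Adj y z2 := by
    have : z2 ∈ (G2.deleteEdges M2).neighborSet y := by
      rw [hH2y]; exact Set.mem_insert_iff.mpr (Or.inr rfl)
    exact this
  have hy1d1 : y1 ∈ d1.supp := mem_supp_of_adj hxd hH2xy1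
  have hy2d1 : y2 ∈ d1.supp := mem_supp_of_adj hxd hH2xy2
  have hz1d2 : z1 ∈ d2.supp := mem_supp_of_adj hyd hH2yz1
  have hz2d2 : z2 ∈ d2.supp := mem_supp_of_adj hyd hH2yz2
  have havoid : ∀ e ∈ M2, e ≠ s(x, y) → ∀ v ∈ e, v ≠ x ∧ v ≠ y := by
    intro e he hne v hv
    constructor
    · rintro rfl
      exact hne (matching_eq_of_mem hM2.1.2 he he3 hv (Sym2.mem_mk_left _ _))
    · rintro rfl
      exact hne (matching_eq_of_mem hM2.1.2 he he3 hv (Sym2.mem_mk_right _ _))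
  have hsubM2 : ∀ X ∈ ({A, B, C, D} : Set (Set (Sym2 V2))), X ⊆ M2 := by
    intro X hX
    obtain ⟨N, -, rfl⟩ := hbalG2 X hX
    exact Set.inter_subset_left
  have hUsubM2 : A ∪ B ∪ C ∪ D ⊆ M2 := by
    rintro e (((h | h) | h) | h)
    · exact hsubM2 A (Set.mem_insert _ _) h
    · exact hsubM2 B (by simp only [Set.mem_insert_iff]; tauto) h
    · exact hsubM2 C (by simp only [Set.mem_insert_iff, Set.mem_singleton_iff]; tauto) h
    · exact hsubM2 D (by simp only [Set.mem_insert_iff, Set.mem_singleton_iff]; tauto) h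
  have hUavoid : ∀ e ∈ A ∪ B ∪ C ∪ D, ∀ v ∈ e, v ≠ x ∧ v ≠ y := by
    intro e he
    exact havoid e (hUsubM2 he) (fun hh => he3F (hh ▸ he))
  have hc1disj : ∀ {v : V1}, v ∈ c.supp → v ∈ c'.supp → False :=
    fun hv hv' => supp_disjoint hcc' hv hv'
  have hd12disj : ∀ {v : V2}, v ∈ d1.supp → v ∈ d2.supp → False :=
    fun hv hv' => supp_disjoint hd12 hv hv'
  set GG := dotProd G1 G2 a b a' b' x y y1 y2 z1 z2 hy1 hy2 hz1 hz2 with hGG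
  set MM := liftEdgesLeft x y M1 ∪ liftEdgesRight V1 x y (M2 \ {s(x, y)}) with hMM
  -- MM is a perfect matching
  have hMMsub : MM ⊆ GG.edgeSet := by
    rintro e (he | he)
    · obtain ⟨u, v, huv, rfl⟩ := mem_liftL.mp he
      have hadj : G1.Adj u v := (G1.mem_edgeSet).mp (hM1.1.1 huv)
      have h1 : s(u, v) ≠ s(a, b) := fun hh => he1M (hh ▸ huv)
      have h2 : s(u, v) ≠ s(a', b') := fun hh => he2M (hh ▸ huv)
      exact (GG.mem_edgeSet).mpr (dot_adj_LL hadj h1 h2)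
    · obtain ⟨p, q, hp, hq, hpq, rfl⟩ := liftR_shape he
      exact (GG.mem_edgeSet).mpr (dot_adj_RR hp hq ((G2.mem_edgeSet).mp (hM2.1.1 hpq.1)))
  have hMMpair : MM.Pairwise Sym2Disjoint := by
    rintro e (he | he) f (hf | hf) hne
    · exact liftL_pairwise hM1.1.2 he hf hne
    · exact liftLR_sym2disjoint he hf
    · exact fun v hv hv' => liftLR_sym2disjoint hf he v hv' hv
    · exact liftR_pairwise (hM2.1.2.mono Set.diff_subset) he hf hne
  have hMMcov : ∀ α : DotVert V1 x y, ∃ e ∈ MM, α ∈ e := by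
    rintro (u | ⟨w, hwx, hwy⟩)
    · obtain ⟨e, heM, hue⟩ := hM1.2 u
      exact ⟨Sym2.map Sum.inl e, Or.inl ⟨e, heM, rfl⟩, Sym2.mem_map.mpr ⟨u, hue, rfl⟩⟩
    · obtain ⟨e, heM, hwe⟩ := hM2.2 w
      have hexy : e ≠ s(x, y) := by
        rintro rfl
        rw [Sym2.mem_iff] at hwe
        tauto
      obtain ⟨p, q, rfl⟩ := sym2_cases e
      have hp := havoid _ heM hexy p (Sym2.mem_mk_left _ _)
      have hq := havoid _ heM hexy q (Sym2.mem_mk_right _ _)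
      refine ⟨s(Sum.inr ⟨p, hp⟩, Sum.inr ⟨q, hq⟩),
        Or.inr (liftR_pair_mem.mpr ⟨heM, by rw [Set.mem_singleton_iff]; exact hexy⟩), ?_⟩
      rw [Sym2.mem_iff] at hwe
      rcases hwe with rfl | rfl
      · exact Sym2.mem_iff.mpr (Or.inl rfl)
      · exact Sym2.mem_iff.mpr (Or.inr rfl)
  refine ⟨⟨⟨hMMsub, hMMpair⟩, hMMcov⟩, ?_⟩
  set GM := GG.deleteEdges MM with hGM
  have hMM_LL : ∀ u v : V1, s(Sum.inl u, Sum.inl v) ∈ MM ↔ s(u, v) ∈ M1 := by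
    intro u v
    constructor
    · rintro (h | h)
      · exact liftL_pair_mem.mp h
      · exact (inl_pair_not_mem_liftR h).elim
    · intro h
      exact Or.inl (liftL_pair_mem.mpr h)
  have hMM_RR : ∀ (p q : V2) (hp : p ≠ x ∧ p ≠ y) (hq : q ≠ x ∧ q ≠ y),
      s(Sum.inr ⟨p, hp⟩, Sum.inr ⟨q, hq⟩) ∈ MM ↔
        (s(p, q) ∈ M2 ∧ s(p, q) ≠ s(x, y)) := by
    intro p q hp hq
    constructor
    · rintro (h | h)
      · exact (inr_pair_not_mem_liftL h).elim
      · have h2 := liftR_pair_mem.mp h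
        exact ⟨h2.1, fun hh => h2.2 (Set.mem_singleton_iff.mpr hh)⟩
    · rintro ⟨h1, h2⟩
      exact Or.inr (liftR_pair_mem.mpr ⟨h1, fun hh => h2 (Set.mem_singleton_iff.mp hh)⟩)
  have hMM_mixed : ∀ (u : V1) (w : {w : V2 // w ≠ x ∧ w ≠ y}),
      s(Sum.inl u, Sum.inr w) ∉ MM := by
    rintro u w (h | h)
    · exact mixed_not_mem_liftL h
    · exact mixed_not_mem_liftR h
  have hGM_LL : ∀ u v : V1, GM.Adj (Sum.inl u) (Sum.inl v) ↔
      (G1.Adj u v ∧ s(u, v) ∉ M1 ∧ s(u, v) ≠ s(a, b) ∧ s(u, v) ≠ s(a', b')) := by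
    intro u v
    rw [hGM, SimpleGraph.deleteEdges_adj]
    constructor
    · rintro ⟨hadj, hnm⟩
      rcases dot_adj_inl_cases hadj with ⟨v', heq, h1, h2, h3⟩ | h | h | h | h
      · rw [Sum.inl.injEq] at heq
        subst heq
        exact ⟨h1, fun hh => hnm ((hMM_LL u v).mpr hh), h2, h3⟩
      all_goals exact nomatch h.2
    · rintro ⟨h1, h2, h3, h4⟩
      exact ⟨dot_adj_LL h1 h3 h4, fun hm => h2 ((hMM_LL u v).mp hm)⟩
  have hGM_RR : ∀ (p q : V2) (hp : p ≠ x ∧ p ≠ y) (hq : q ≠ x ∧ q ≠ y),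
      GM.Adj (Sum.inr ⟨p, hp⟩) (Sum.inr ⟨q, hq⟩) ↔ (G2.Adj p q ∧ s(p, q) ∉ M2) := by
    intro p q hp hq
    rw [hGM, SimpleGraph.deleteEdges_adj]
    constructor
    · rintro ⟨hadj, hnm⟩
      rcases dot_adj_inr_cases hadj with ⟨v', hv', heq, hA⟩ | h | h | h | h
      · rw [Sum.inr.injEq, Subtype.mk.injEq] at heq
        subst heq
        refine ⟨hA, fun hmem => ?_⟩
        apply hnm
        rw [hMM_RR p q hp hq]
        refine ⟨hmem, fun hh => ?_⟩
        have : x ∈ s(p, q) := by rw [hh]; exact Sym2.mem_mk_left _ _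
        rw [Sym2.mem_iff] at this
        rcases this with h' | h'
        · exact hp.1 h'.symm
        · exact hq.1 h'.symm
      all_goals exact nomatch h.2
    · rintro ⟨h1, h2⟩
      refine ⟨dot_adj_RR hp hq h1, fun hm => h2 ((hMM_RR p q hp hq).mp hm).1⟩
  have hGM_mixed_cases : ∀ (u : V1) (w : V2) (hw : w ≠ x ∧ w ≠ y),
      GM.Adj (Sum.inl u) (Sum.inr ⟨w, hw⟩) →
      (u = a ∧ w = y1) ∨ (u = b ∧ w = y2) ∨ (u = a' ∧ w = z1) ∨ (u = b' ∧ w = z2) := by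
    intro u w hw h
    rw [hGM, SimpleGraph.deleteEdges_adj] at h
    rcases dot_adj_inl_cases h.1 with ⟨v', heq, -⟩ | ⟨h1, heq⟩ | ⟨h1, heq⟩ | ⟨h1, heq⟩ | ⟨h1, heq⟩
    · exact nomatch heq
    · rw [Sum.inr.injEq, Subtype.mk.injEq] at heq
      exact Or.inl ⟨h1, heq⟩
    · rw [Sum.inr.injEq, Subtype.mk.injEq] at heq
      exact Or.inr (Or.inl ⟨h1, heq⟩)
    · rw [Sum.inr.injEq, Subtype.mk.injEq] at heq
      exact Or.inr (Or.inr (Or.inl ⟨h1, heq⟩))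
    · rw [Sum.inr.injEq, Subtype.mk.injEq] at heq
      exact Or.inr (Or.inr (Or.inr ⟨h1, heq⟩))
  have hGM_bridge1 : GM.Adj (Sum.inl a) (Sum.inr ⟨y1, hy1⟩) := by
    rw [hGM, SimpleGraph.deleteEdges_adj]
    exact ⟨dot_adj_bridge1, hMM_mixed _ _⟩
  have hGM_bridge2 : GM.Adj (Sum.inl b) (Sum.inr ⟨y2, hy2⟩) := by
    rw [hGM, SimpleGraph.deleteEdges_adj]
    exact ⟨dot_adj_bridge2, hMM_mixed _ _⟩
  have hGM_bridge3 : GM.Adj (Sum.inl a') (Sum.inr ⟨z1, hz1⟩) := by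
    rw [hGM, SimpleGraph.deleteEdges_adj]
    exact ⟨dot_adj_bridge3, hMM_mixed _ _⟩
  have hGM_bridge4 : GM.Adj (Sum.inl b') (Sum.inr ⟨z2, hz2⟩) := by
    rw [hGM, SimpleGraph.deleteEdges_adj]
    exact ⟨dot_adj_bridge4, hMM_mixed _ _⟩
  set SL1 : Set (DotVert V1 x y) :=
    Sum.inl '' c.supp ∪ liftSetR V1 x y (d1.supp \ {x}) with hSL1
  set SL2 : Set (DotVert V1 x y) :=
    Sum.inl '' c'.supp ∪ liftSetR V1 x y (d2.supp \ {y}) with hSL2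
  have hclosed1 : ∀ α ∈ SL1, ∀ β, GM.Adj α β → β ∈ SL1 := by
    rintro α (⟨u, huc, rfl⟩ | ⟨w, hw, rfl, hwd, hwx⟩) β hadj
    · rcases β with v | ⟨t, ht⟩
      · obtain ⟨hadj', h2, h3, h4⟩ := (hGM_LL u v).mp hadj
        exact Or.inl ⟨v, mem_supp_of_adj huc (SimpleGraph.deleteEdges_adj.mpr ⟨hadj', h2⟩), rfl⟩
      · rcases hGM_mixed_cases u t ht hadj with ⟨h1, h2⟩ | ⟨h1, h2⟩ | ⟨h1, h2⟩ | ⟨h1, h2⟩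
        · exact Or.inr ⟨t, ht, rfl, h2.symm ▸ hy1d1,
            fun hh => hy1.1 (h2.symm.trans (Set.mem_singleton_iff.mp hh))⟩
        · exact Or.inr ⟨t, ht, rfl, h2.symm ▸ hy2d1,
            fun hh => hy2.1 (h2.symm.trans (Set.mem_singleton_iff.mp hh))⟩
        · exact (hc1disj huc (h1.symm ▸ ha'c)).elim
        · exact (hc1disj huc (h1.symm ▸ hb'c)).elim
    · rcases β with v | ⟨t, ht⟩
      · rcases hGM_mixed_cases v w hw hadj.symm with ⟨h1, h2⟩ | ⟨h1, h2⟩ | ⟨h1, h2⟩ | ⟨h1, h2⟩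
        · exact Or.inl ⟨v, h1.symm ▸ hac, rfl⟩
        · exact Or.inl ⟨v, h1.symm ▸ hbc, rfl⟩
        · exact (hd12disj hwd (h2.symm ▸ hz1d2)).elim
        · exact (hd12disj hwd (h2.symm ▸ hz2d2)).elim
      · obtain ⟨hadj', hnm⟩ := (hGM_RR w t hw ht).mp hadj
        exact Or.inr ⟨t, ht, rfl,
          mem_supp_of_adj hwd (SimpleGraph.deleteEdges_adj.mpr ⟨hadj', hnm⟩),
          fun hh => ht.1 (Set.mem_singleton_iff.mp hh)⟩
  have hclosed2 : ∀ α ∈ SL2, ∀ β, GM.Adj α β → β ∈ SL2 := by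
    rintro α (⟨u, huc, rfl⟩ | ⟨w, hw, rfl, hwd, hwy⟩) β hadj
    · rcases β with v | ⟨t, ht⟩
      · obtain ⟨hadj', h2, h3, h4⟩ := (hGM_LL u v).mp hadj
        exact Or.inl ⟨v, mem_supp_of_adj huc (SimpleGraph.deleteEdges_adj.mpr ⟨hadj', h2⟩), rfl⟩
      · rcases hGM_mixed_cases u t ht hadj with ⟨h1, h2⟩ | ⟨h1, h2⟩ | ⟨h1, h2⟩ | ⟨h1, h2⟩
        · exact (hc1disj (h1.symm ▸ hac) huc).elim
        · exact (hc1disj (h1.symm ▸ hbc) huc).elim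
        · exact Or.inr ⟨t, ht, rfl, h2.symm ▸ hz1d2,
            fun hh => hz1.2 (h2.symm.trans (Set.mem_singleton_iff.mp hh))⟩
        · exact Or.inr ⟨t, ht, rfl, h2.symm ▸ hz2d2,
            fun hh => hz2.2 (h2.symm.trans (Set.mem_singleton_iff.mp hh))⟩
    · rcases β with v | ⟨t, ht⟩
      · rcases hGM_mixed_cases v w hw hadj.symm with ⟨h1, h2⟩ | ⟨h1, h2⟩ | ⟨h1, h2⟩ | ⟨h1, h2⟩
        · exact (hd12disj (h2.symm ▸ hy1d1) hwd).elim
        · exact (hd12disj (h2.symm ▸ hy2d1) hwd).elim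
        · exact Or.inl ⟨v, h1.symm ▸ ha'c, rfl⟩
        · exact Or.inl ⟨v, h1.symm ▸ hb'c, rfl⟩
      · obtain ⟨hadj', hnm⟩ := (hGM_RR w t hw ht).mp hadj
        exact Or.inr ⟨t, ht, rfl,
          mem_supp_of_adj hwd (SimpleGraph.deleteEdges_adj.mpr ⟨hadj', hnm⟩),
          fun hh => ht.2 (Set.mem_singleton_iff.mp hh)⟩
  have hH1ab : (G1.deleteEdges M1).Adj a b :=
    SimpleGraph.deleteEdges_adj.mpr ⟨(G1.mem_edgeSet).mp he1G, he1M⟩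
  have hH1a'b' : (G1.deleteEdges M1).Adj a' b' :=
    SimpleGraph.deleteEdges_adj.mpr ⟨(G1.mem_edgeSet).mp he2G, he2M⟩
  have hreach_inl_c : ∀ u ∈ c.supp, ∀ v ∈ c.supp,
      GM.Reachable (Sum.inl u) (Sum.inl v) := by
    intro u hu v hv
    obtain ⟨wlk⟩ := component_minus_edge_reach hreg1 hH1ab hac u hu v hv
    have hsup : ∀ t ∈ wlk.support, t ∈ c.supp := by
      intro t ht
      have h2 : (G1.deleteEdges M1).Reachable u t :=
        (reachable_of_mem_support wlk ht).mono (SimpleGraph.deleteEdges_le _)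
      rw [SimpleGraph.ConnectedComponent.mem_supp_iff] at hu ⊢
      rw [← hu]
      exact (SimpleGraph.ConnectedComponent.eq).mpr h2.symm
    refine reachable_map_of_support Sum.inl ?_ wlk hsup
    intro p hp q hq hadj
    rw [SimpleGraph.deleteEdges_adj] at hadj
    obtain ⟨hadj1, hne1⟩ := hadj
    rw [SimpleGraph.deleteEdges_adj] at hadj1
    rw [hGM_LL]
    refine ⟨hadj1.1, hadj1.2, fun hh => hne1 (Set.mem_singleton_iff.mpr hh),
      fun hh => ?_⟩
    have hmem : a' ∈ s(p, q) := by rw [hh]; exact Sym2.mem_mk_left _ _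
    rw [Sym2.mem_iff] at hmem
    rcases hmem with h' | h'
    · exact hc1disj (h'.symm ▸ hp) ha'c
    · exact hc1disj (h'.symm ▸ hq) ha'c
  have hreach_inl_c' : ∀ u ∈ c'.supp, ∀ v ∈ c'.supp,
      GM.Reachable (Sum.inl u) (Sum.inl v) := by
    intro u hu v hv
    obtain ⟨wlk⟩ := component_minus_edge_reach hreg1 hH1a'b' ha'c u hu v hv
    have hsup : ∀ t ∈ wlk.support, t ∈ c'.supp := by
      intro t ht
      have h2 : (G1.deleteEdges M1).Reachable u t :=
        (reachable_of_mem_support wlk ht).mono (SimpleGraph.deleteEdges_le _)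
      rw [SimpleGraph.ConnectedComponent.mem_supp_iff] at hu ⊢
      rw [← hu]
      exact (SimpleGraph.ConnectedComponent.eq).mpr h2.symm
    refine reachable_map_of_support Sum.inl ?_ wlk hsup
    intro p hp q hq hadj
    rw [SimpleGraph.deleteEdges_adj] at hadj
    obtain ⟨hadj1, hne1⟩ := hadj
    rw [SimpleGraph.deleteEdges_adj] at hadj1
    rw [hGM_LL]
    refine ⟨hadj1.1, hadj1.2, fun hh => ?_,
      fun hh => hne1 (Set.mem_singleton_iff.mpr hh)⟩
    have hmem : a ∈ s(p, q) := by rw [hh]; exact Sym2.mem_mk_left _ _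
    rw [Sym2.mem_iff] at hmem
    rcases hmem with h' | h'
    · exact hc1disj hac (h'.symm ▸ hp)
    · exact hc1disj hac (h'.symm ▸ hq)
  set fR : V2 → DotVert V1 x y :=
    fun t => if h : t ≠ x ∧ t ≠ y then Sum.inr ⟨t, h⟩ else Sum.inl a with hfR
  have hfR_eq : ∀ (t : V2) (h : t ≠ x ∧ t ≠ y), fR t = Sum.inr ⟨t, h⟩ := by
    intro t h
    rw [hfR]
    exact dif_pos h
  have hreach_d1 : ∀ (w : V2) (hw : w ≠ x ∧ w ≠ y), w ∈ d1.supp →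
      ∀ (t : V2) (ht : t ≠ x ∧ t ≠ y), t ∈ d1.supp →
      GM.Reachable (Sum.inr ⟨w, hw⟩) (Sum.inr ⟨t, ht⟩) := by
    intro w hw hwd t ht htd
    obtain ⟨wlk⟩ := component_minus_vertex_reach hreg2 hxd w hwd hw.1 t htd ht.1
    have hKx : (((G2.deleteEdges M2)).deleteEdges {e | x ∈ e}).neighborSet x = ∅ := by
      rw [neighborSet_deleteEdges]
      ext s'
      simp only [Set.mem_setOf_eq, Set.mem_empty_iff_false, iff_false, not_and, not_not]
      intro _
      exact Sym2.mem_mk_left _ _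
    have hnx : x ∉ wlk.support := not_mem_support_of_isolated hKx wlk hw.1
    have hsup : ∀ s' ∈ wlk.support, s' ∈ {v | v ∈ d1.supp ∧ v ≠ x ∧ v ≠ y} := by
      intro s' hs'
      have h2 : (G2.deleteEdges M2).Reachable w s' :=
        (reachable_of_mem_support wlk hs').mono (SimpleGraph.deleteEdges_le _)
      have h3 : s' ∈ d1.supp := by
        rw [SimpleGraph.ConnectedComponent.mem_supp_iff] at hwd ⊢
        rw [← hwd]
        exact (SimpleGraph.ConnectedComponent.eq).mpr h2.symm
      exact ⟨h3, fun hh => hnx (hh ▸ hs'), fun hh => hd12disj h3 (hh ▸ hyd)⟩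
    have hmap : ∀ p ∈ {v | v ∈ d1.supp ∧ v ≠ x ∧ v ≠ y},
        ∀ q ∈ {v | v ∈ d1.supp ∧ v ≠ x ∧ v ≠ y},
        ((G2.deleteEdges M2).deleteEdges {e | x ∈ e}).Adj p q →
        GM.Adj (fR p) (fR q) := by
      intro p hp q hq hadj
      rw [SimpleGraph.deleteEdges_adj] at hadj
      obtain ⟨hadj1, -⟩ := hadj
      rw [SimpleGraph.deleteEdges_adj] at hadj1
      rw [hfR_eq p ⟨hp.2.1, hp.2.2⟩, hfR_eq q ⟨hq.2.1, hq.2.2⟩, hGM_RR]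
      exact hadj1
    have hmain := reachable_map_of_support fR hmap wlk hsup
    rw [hfR_eq w hw, hfR_eq t ht] at hmain
    exact hmain
  have hreach_d2 : ∀ (w : V2) (hw : w ≠ x ∧ w ≠ y), w ∈ d2.supp →
      ∀ (t : V2) (ht : t ≠ x ∧ t ≠ y), t ∈ d2.supp →
      GM.Reachable (Sum.inr ⟨w, hw⟩) (Sum.inr ⟨t, ht⟩) := by
    intro w hw hwd t ht htd
    obtain ⟨wlk⟩ := component_minus_vertex_reach hreg2 hyd w hwd hw.2 t htd ht.2
    have hKy : (((G2.deleteEdges M2)).deleteEdges {e | y ∈ e}).neighborSet y = ∅ := by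
      rw [neighborSet_deleteEdges]
      ext s'
      simp only [Set.mem_setOf_eq, Set.mem_empty_iff_false, iff_false, not_and, not_not]
      intro _
      exact Sym2.mem_mk_left _ _
    have hny : y ∉ wlk.support := not_mem_support_of_isolated hKy wlk hw.2
    have hsup : ∀ s' ∈ wlk.support, s' ∈ {v | v ∈ d2.supp ∧ v ≠ x ∧ v ≠ y} := by
      intro s' hs'
      have h2 : (G2.deleteEdges M2).Reachable w s' :=
        (reachable_of_mem_support wlk hs').mono (SimpleGraph.deleteEdges_le _)
      have h3 : s' ∈ d2.supp := by
        rw [SimpleGraph.ConnectedComponent.mem_supp_iff] at hwd ⊢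
        rw [← hwd]
        exact (SimpleGraph.ConnectedComponent.eq).mpr h2.symm
      exact ⟨h3, fun hh => hd12disj (hh ▸ hxd) h3, fun hh => hny (hh ▸ hs')⟩
    have hmap : ∀ p ∈ {v | v ∈ d2.supp ∧ v ≠ x ∧ v ≠ y},
        ∀ q ∈ {v | v ∈ d2.supp ∧ v ≠ x ∧ v ≠ y},
        ((G2.deleteEdges M2).deleteEdges {e | y ∈ e}).Adj p q →
        GM.Adj (fR p) (fR q) := by
      intro p hp q hq hadj
      rw [SimpleGraph.deleteEdges_adj] at hadj
      obtain ⟨hadj1, -⟩ := hadj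
      rw [SimpleGraph.deleteEdges_adj] at hadj1
      rw [hfR_eq p ⟨hp.2.1, hp.2.2⟩, hfR_eq q ⟨hq.2.1, hq.2.2⟩, hGM_RR]
      exact hadj1
    have hmain := reachable_map_of_support fR hmap wlk hsup
    rw [hfR_eq w hw, hfR_eq t ht] at hmain
    exact hmain
  have hreach1 : ∀ α ∈ SL1, GM.Reachable α (Sum.inl a) := by
    rintro α (⟨u, huc, rfl⟩ | ⟨w, hw, rfl, hwd, hwx⟩)
    · exact hreach_inl_c u huc a hac
    · exact (hreach_d1 w hw hwd y1 hy1 hy1d1).trans hGM_bridge1.symm.reachable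
  have hreach2 : ∀ α ∈ SL2, GM.Reachable α (Sum.inl a') := by
    rintro α (⟨u, huc, rfl⟩ | ⟨w, hw, rfl, hwd, hwy⟩)
    · exact hreach_inl_c' u huc a' ha'c
    · exact (hreach_d2 w hw hwd z1 hz1 hz1d2).trans hGM_bridge3.symm.reachable
  have hconn1 : ∀ α ∈ SL1, ∀ β ∈ SL1, GM.Reachable α β :=
    fun α hα β hβ => (hreach1 α hα).trans (hreach1 β hβ).symm
  have hconn2 : ∀ α ∈ SL2, ∀ β ∈ SL2, GM.Reachable α β :=
    fun α hα β hβ => (hreach2 α hα).trans (hreach2 β hβ).symm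
  have hclosed_pure : ∀ (d : (G2.deleteEdges M2).ConnectedComponent),
      x ∉ d.supp → y ∉ d.supp →
      ∀ α ∈ liftSetR V1 x y d.supp, ∀ β, GM.Adj α β → β ∈ liftSetR V1 x y d.supp := by
    rintro d hxd' hyd' α ⟨w, hw, rfl, hwd⟩ β hadj
    have hdne1 : ∀ {v : V2}, v ∈ d.supp → v ∈ d1.supp → False :=
      fun hv hv' => supp_disjoint (fun hh => hxd' (by rw [hh]; exact hxd)) hv hv'
    have hdne2 : ∀ {v : V2}, v ∈ d.supp → v ∈ d2.supp → False :=
      fun hv hv' => supp_disjoint (fun hh => hyd' (by rw [hh]; exact hyd)) hv hv'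
    rcases β with v | ⟨t, ht⟩
    · rcases hGM_mixed_cases v w hw hadj.symm with ⟨h1, h2⟩ | ⟨h1, h2⟩ | ⟨h1, h2⟩ | ⟨h1, h2⟩
      · exact (hdne1 hwd (h2.symm ▸ hy1d1)).elim
      · exact (hdne1 hwd (h2.symm ▸ hy2d1)).elim
      · exact (hdne2 hwd (h2.symm ▸ hz1d2)).elim
      · exact (hdne2 hwd (h2.symm ▸ hz2d2)).elim
    · obtain ⟨hadj', hnm⟩ := (hGM_RR w t hw ht).mp hadj
      exact ⟨t, ht, rfl,
        mem_supp_of_adj hwd (SimpleGraph.deleteEdges_adj.mpr ⟨hadj', hnm⟩)⟩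
  have hconn_pure : ∀ (d : (G2.deleteEdges M2).ConnectedComponent),
      x ∉ d.supp → y ∉ d.supp →
      ∀ α ∈ liftSetR V1 x y d.supp, ∀ β ∈ liftSetR V1 x y d.supp,
        GM.Reachable α β := by
    rintro d hxd' hyd' α ⟨w, hw, rfl, hwd⟩ β ⟨t, ht, rfl, htd⟩
    obtain ⟨wlk⟩ := reachable_of_mem_supp hwd htd
    have hsup : ∀ s' ∈ wlk.support, s' ∈ {v | v ∈ d.supp ∧ v ≠ x ∧ v ≠ y} := by
      intro s' hs'
      have h3 : s' ∈ d.supp := by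
        have h2 := reachable_of_mem_support wlk hs'
        rw [SimpleGraph.ConnectedComponent.mem_supp_iff] at hwd ⊢
        rw [← hwd]
        exact (SimpleGraph.ConnectedComponent.eq).mpr h2.symm
      exact ⟨h3, fun hh => hxd' (hh ▸ h3), fun hh => hyd' (hh ▸ h3)⟩
    have hmap : ∀ p ∈ {v | v ∈ d.supp ∧ v ≠ x ∧ v ≠ y},
        ∀ q ∈ {v | v ∈ d.supp ∧ v ≠ x ∧ v ≠ y},
        (G2.deleteEdges M2).Adj p q → GM.Adj (fR p) (fR q) := by
      intro p hp q hq hadj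
      rw [SimpleGraph.deleteEdges_adj] at hadj
      rw [hfR_eq p ⟨hp.2.1, hp.2.2⟩, hfR_eq q ⟨hq.2.1, hq.2.2⟩, hGM_RR]
      exact hadj
    have hmain := reachable_map_of_support fR hmap wlk hsup
    rw [hfR_eq w hw, hfR_eq t ht] at hmain
    exact hmain
  have hclass : ∀ comp : GM.ConnectedComponent, comp.supp = SL1 ∨ comp.supp = SL2 ∨
      ∃ d : (G2.deleteEdges M2).ConnectedComponent, x ∉ d.supp ∧ y ∉ d.supp ∧
        comp.supp = liftSetR V1 x y d.supp := by
    intro comp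
    induction comp using SimpleGraph.ConnectedComponent.ind with
    | _ α =>
    rcases α with u | ⟨w, hw⟩
    · rcases honly ((G1.deleteEdges M1).connectedComponentMk u) with h | h
      · left
        have huc : u ∈ c.supp := by
          rw [SimpleGraph.ConnectedComponent.mem_supp_iff]; exact h
        exact (comp_eq_of_closed hclosed1 hconn1 (Or.inl ⟨u, huc, rfl⟩)).symm
      · right; left
        have huc : u ∈ c'.supp := by
          rw [SimpleGraph.ConnectedComponent.mem_supp_iff]; exact h
        exact (comp_eq_of_closed hclosed2 hconn2 (Or.inl ⟨u, huc, rfl⟩)).symm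
    · by_cases hd : (G2.deleteEdges M2).connectedComponentMk w = d1
      · left
        have hwd : w ∈ d1.supp := by
          rw [SimpleGraph.ConnectedComponent.mem_supp_iff]; exact hd
        exact (comp_eq_of_closed hclosed1 hconn1 (Or.inr ⟨w, hw, rfl, hwd,
          fun hh => hw.1 (Set.mem_singleton_iff.mp hh)⟩)).symm
      by_cases hd2' : (G2.deleteEdges M2).connectedComponentMk w = d2
      · right; left
        have hwd : w ∈ d2.supp := by
          rw [SimpleGraph.ConnectedComponent.mem_supp_iff]; exact hd2'
        exact (comp_eq_of_closed hclosed2 hconn2 (Or.inr ⟨w, hw, rfl, hwd,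
          fun hh => hw.2 (Set.mem_singleton_iff.mp hh)⟩)).symm
      · right; right
        have hx' : x ∉ ((G2.deleteEdges M2).connectedComponentMk w).supp := by
          intro hxmem
          rw [SimpleGraph.ConnectedComponent.mem_supp_iff] at hxmem
          rw [SimpleGraph.ConnectedComponent.mem_supp_iff] at hxd
          exact hd (hxmem.symm.trans hxd)
        have hy' : y ∉ ((G2.deleteEdges M2).connectedComponentMk w).supp := by
          intro hymem
          rw [SimpleGraph.ConnectedComponent.mem_supp_iff] at hymem
          rw [SimpleGraph.ConnectedComponent.mem_supp_iff] at hyd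
          exact hd2' (hymem.symm.trans hyd)
        exact ⟨_, hx', hy',
          (comp_eq_of_closed (hclosed_pure _ hx' hy') (hconn_pure _ hx' hy')
            ⟨w, hw, rfl, rfl⟩).symm⟩
  have hAmem : A ∈ ({A, B, C, D} : Set (Set (Sym2 V2))) := Set.mem_insert _ _
  have hBmem : B ∈ ({A, B, C, D} : Set (Set (Sym2 V2))) :=
    Set.mem_insert_iff.mpr (Or.inr (Set.mem_insert _ _))
  have hCmem : C ∈ ({A, B, C, D} : Set (Set (Sym2 V2))) :=
    Set.mem_insert_iff.mpr (Or.inr (Set.mem_insert_iff.mpr (Or.inr (Set.mem_insert _ _))))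
  have hDmem : D ∈ ({A, B, C, D} : Set (Set (Sym2 V2))) :=
    Set.mem_insert_iff.mpr (Or.inr (Set.mem_insert_iff.mpr (Or.inr
      (Set.mem_insert_iff.mpr (Or.inr rfl)))))
  have hpath_c : ∀ u0, u0 = a ∨ u0 = b → ∃ P : Set (Sym2 V1),
      (∀ e ∈ P, e ∈ G1.edgeSet ∧ e ∉ M1 ∧ e ≠ s(a, b) ∧ e ≠ s(a', b')) ∧
      P.Pairwise Sym2Disjoint ∧
      (∀ e ∈ P, ∀ t ∈ e, t ∈ c.supp ∧ t ≠ u0) ∧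
      (∀ u ∈ c.supp, u ≠ u0 → ∃ e ∈ P, u ∈ e) := by
    intro u0 hu0
    have hu0c : u0 ∈ c.supp := by rcases hu0 with rfl | rfl; exacts [hac, hbc]
    obtain ⟨P, hP1, hP2, hP3, hP4⟩ := odd_component_near_matching hreg1 c hcodd hu0c
    refine ⟨P, ?_, hP2, hP3, hP4⟩
    intro e he
    have h1 := hP1 e he
    rw [SimpleGraph.edgeSet_deleteEdges] at h1
    refine ⟨h1.1, h1.2, ?_, ?_⟩
    · rintro rfl
      rcases hu0 with rfl | rfl
      · exact (hP3 _ he u0 (Sym2.mem_mk_left _ _)).2 rfl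
      · exact (hP3 _ he u0 (Sym2.mem_mk_right _ _)).2 rfl
    · rintro rfl
      exact hc1disj (hP3 _ he a' (Sym2.mem_mk_left _ _)).1 ha'c
  have hpath_c' : ∀ u0', u0' = a' ∨ u0' = b' → ∃ P : Set (Sym2 V1),
      (∀ e ∈ P, e ∈ G1.edgeSet ∧ e ∉ M1 ∧ e ≠ s(a, b) ∧ e ≠ s(a', b')) ∧
      P.Pairwise Sym2Disjoint ∧
      (∀ e ∈ P, ∀ t ∈ e, t ∈ c'.supp ∧ t ≠ u0') ∧
      (∀ u ∈ c'.supp, u ≠ u0' → ∃ e ∈ P, u ∈ e) := by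
    intro u0' hu0'
    have hu0'c : u0' ∈ c'.supp := by rcases hu0' with rfl | rfl; exacts [ha'c, hb'c]
    obtain ⟨P, hP1, hP2, hP3, hP4⟩ := odd_component_near_matching hreg1 c' hc'odd hu0'c
    refine ⟨P, ?_, hP2, hP3, hP4⟩
    intro e he
    have h1 := hP1 e he
    rw [SimpleGraph.edgeSet_deleteEdges] at h1
    refine ⟨h1.1, h1.2, ?_, ?_⟩
    · rintro rfl
      exact hc1disj hac (hP3 _ he a (Sym2.mem_mk_left _ _)).1
    · rintro rfl
      rcases hu0' with rfl | rfl
      · exact (hP3 _ he u0' (Sym2.mem_mk_left _ _)).2 rfl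
      · exact (hP3 _ he u0' (Sym2.mem_mk_right _ _)).2 rfl
  have hbal : ∀ X : Set (Sym2 V2), s(x, y) ∉ X →
      IsBalancedMatching G2 M2 X →
      IsBalancedMatching GG MM (liftEdgesRight V1 x y X) := by
    intro X hXxy hXbal
    obtain ⟨N, hN, hXeq⟩ := hXbal
    subst hXeq
    obtain ⟨ex, hexN, hxex⟩ := hN.2 x
    obtain ⟨w, rfl⟩ := Sym2.mem_iff_exists.mp hxex
    have hxwadj : G2.Adj x w := (G2.mem_edgeSet).mp (hN.1.1 hexN)
    have hwnb : w ∈ G2.neighborSet x := hxwadj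
    rw [hNx] at hwnb
    have hwy : w ≠ y := by
      rintro rfl
      exact hXxy ⟨he3, hexN⟩
    have hw_cases : w = y1 ∨ w = y2 := by
      rcases hwnb with h | h | h
      exacts [Or.inl h, Or.inr h, (hwy h).elim]
    obtain ⟨ey, heyN, hyey⟩ := hN.2 y
    obtain ⟨w', rfl⟩ := Sym2.mem_iff_exists.mp hyey
    have hyw'adj : G2.Adj y w' := (G2.mem_edgeSet).mp (hN.1.1 heyN)
    have hw'nb : w' ∈ G2.neighborSet y := hyw'adj
    rw [hNy] at hw'nb
    have hw'x : w' ≠ x := by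
      rintro rfl
      refine hXxy ⟨he3, ?_⟩
      rw [Sym2.eq_swap]
      exact heyN
    have hw'_cases : w' = z1 ∨ w' = z2 := by
      rcases hw'nb with h | h | h
      exacts [Or.inl h, Or.inr h, (hw'x h).elim]
    have hwx : w ≠ x := fun hh => hxwadj.ne hh.symm
    have hw'y : w' ≠ y := fun hh => hyw'adj.ne hh.symm
    have hwp : w ≠ x ∧ w ≠ y := ⟨hwx, hwy⟩
    have hw'p : w' ≠ x ∧ w' ≠ y := ⟨hw'x, hw'y⟩
    have hexM2 : s(x, w) ∉ M2 := by
      intro hmem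
      have h2 := matching_eq_of_mem hM2.1.2 hmem he3
        (Sym2.mem_mk_left _ _) (Sym2.mem_mk_left _ _)
      rw [Sym2.congr_right] at h2
      exact hwy h2
    have heyM2 : s(y, w') ∉ M2 := by
      intro hmem
      have h2 := matching_eq_of_mem hM2.1.2 hmem hyx3
        (Sym2.mem_mk_left _ _) (Sym2.mem_mk_left _ _)
      rw [Sym2.congr_right] at h2
      exact hw'x h2
    have hwd1 : w ∈ d1.supp :=
      mem_supp_of_adj hxd (SimpleGraph.deleteEdges_adj.mpr ⟨hxwadj, hexM2⟩)
    have hw'd2 : w' ∈ d2.supp :=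
      mem_supp_of_adj hyd (SimpleGraph.deleteEdges_adj.mpr ⟨hyw'adj, heyM2⟩)
    have hww' : w ≠ w' := fun hh => hd12disj hwd1 (by rw [hh]; exact hw'd2)
    have hwnotN : ∀ g ∈ N, g ≠ s(x, w) → w ∉ g :=
      fun g hg hne hmem =>
        hne (matching_eq_of_mem hN.1.2 hg hexN hmem (Sym2.mem_mk_right _ _))
    have hw'notN : ∀ g ∈ N, g ≠ s(y, w') → w' ∉ g :=
      fun g hg hne hmem =>
        hne (matching_eq_of_mem hN.1.2 hg heyN hmem (Sym2.mem_mk_right _ _))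
    have hNavoid : ∀ g ∈ N, g ≠ s(x, w) → g ≠ s(y, w') → ∀ v ∈ g, v ≠ x ∧ v ≠ y := by
      intro g hg hg1 hg2 v hv
      constructor
      · rintro rfl
        exact hg1 (matching_eq_of_mem hN.1.2 hg hexN hv (Sym2.mem_mk_left _ _))
      · rintro rfl
        exact hg2 (matching_eq_of_mem hN.1.2 hg heyN hv (Sym2.mem_mk_left _ _))
    obtain ⟨u0, hu0ab, hu0c, hbridge⟩ : ∃ u0, (u0 = a ∨ u0 = b) ∧ u0 ∈ c.supp ∧
        GG.Adj (Sum.inl u0) (Sum.inr ⟨w, hwp⟩) := by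
      rcases hw_cases with rfl | rfl
      · exact ⟨a, Or.inl rfl, hac, dot_adj_bridge1⟩
      · exact ⟨b, Or.inr rfl, hbc, dot_adj_bridge2⟩
    obtain ⟨u0', hu0'ab, hu0'c, hbridge'⟩ : ∃ u0', (u0' = a' ∨ u0' = b') ∧
        u0' ∈ c'.supp ∧ GG.Adj (Sum.inl u0') (Sum.inr ⟨w', hw'p⟩) := by
      rcases hw'_cases with rfl | rfl
      · exact ⟨a', Or.inl rfl, ha'c, dot_adj_bridge3⟩
      · exact ⟨b', Or.inr rfl, hb'c, dot_adj_bridge4⟩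
    have hu0ne : u0 ≠ u0' := fun hh => hc1disj hu0c (by rw [hh]; exact hu0'c)
    obtain ⟨P1, hP1a, hP1b, hP1c, hP1d⟩ := hpath_c u0 hu0ab
    obtain ⟨P1', hP1'a, hP1'b, hP1'c, hP1'd⟩ := hpath_c' u0' hu0'ab
    set E1 : Sym2 (DotVert V1 x y) := s(Sum.inl u0, Sum.inr ⟨w, hwp⟩) with hE1
    set E2 : Sym2 (DotVert V1 x y) := s(Sum.inl u0', Sum.inr ⟨w', hw'p⟩) with hE2
    set Mp : Set (Sym2 (DotVert V1 x y)) :=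
      ((liftEdgesLeft x y P1 ∪ liftEdgesLeft x y P1') ∪ {E1, E2}) ∪
      liftEdgesRight V1 x y (N \ {s(x, w), s(y, w')}) with hMp
    have hvert1 : ∀ e ∈ liftEdgesLeft (V2 := V2) x y P1, ∀ v ∈ e,
        ∃ t, v = Sum.inl t ∧ t ∈ c.supp ∧ t ≠ u0 := by
      rintro e he v hv
      obtain ⟨p, q, hpq, rfl⟩ := mem_liftL.mp he
      rw [Sym2.mem_iff] at hv
      rcases hv with rfl | rfl
      · exact ⟨p, rfl, hP1c _ hpq p (Sym2.mem_mk_left _ _)⟩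
      · exact ⟨q, rfl, hP1c _ hpq q (Sym2.mem_mk_right _ _)⟩
    have hvert2 : ∀ e ∈ liftEdgesLeft (V2 := V2) x y P1', ∀ v ∈ e,
        ∃ t, v = Sum.inl t ∧ t ∈ c'.supp ∧ t ≠ u0' := by
      rintro e he v hv
      obtain ⟨p, q, hpq, rfl⟩ := mem_liftL.mp he
      rw [Sym2.mem_iff] at hv
      rcases hv with rfl | rfl
      · exact ⟨p, rfl, hP1'c _ hpq p (Sym2.mem_mk_left _ _)⟩
      · exact ⟨q, rfl, hP1'c _ hpq q (Sym2.mem_mk_right _ _)⟩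
    have hvert4 : ∀ e ∈ liftEdgesRight V1 x y (N \ {s(x, w), s(y, w')}), ∀ v ∈ e,
        ∃ (t : V2) (ht : t ≠ x ∧ t ≠ y), v = Sum.inr ⟨t, ht⟩ ∧
          ∃ g ∈ N, g ≠ s(x, w) ∧ g ≠ s(y, w') ∧ t ∈ g := by
      rintro e he v hv
      obtain ⟨p, q, hp, hq, ⟨hgN, hgnot⟩, rfl⟩ := liftR_shape he
      have hg1 : s(p, q) ≠ s(x, w) :=
        fun hh => hgnot (Set.mem_insert_iff.mpr (Or.inl hh))
      have hg2 : s(p, q) ≠ s(y, w') :=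
        fun hh => hgnot (Set.mem_insert_iff.mpr (Or.inr (Set.mem_singleton_iff.mpr hh)))
      rw [Sym2.mem_iff] at hv
      rcases hv with rfl | rfl
      · exact ⟨p, hp, rfl, s(p, q), hgN, hg1, hg2, Sym2.mem_mk_left _ _⟩
      · exact ⟨q, hq, rfl, s(p, q), hgN, hg1, hg2, Sym2.mem_mk_right _ _⟩
    have hWnotin4 : ∀ e ∈ liftEdgesRight V1 x y (N \ {s(x, w), s(y, w')}),
        (Sum.inr ⟨w, hwp⟩ : DotVert V1 x y) ∉ e ∧
        (Sum.inr ⟨w', hw'p⟩ : DotVert V1 x y) ∉ e := by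
      intro e he
      constructor
      · intro hmem
        obtain ⟨t, ht, heq, g, hgN, hg1, hg2, htg⟩ := hvert4 e he _ hmem
        rw [Sum.inr.injEq, Subtype.mk.injEq] at heq
        exact hwnotN g hgN hg1 (heq ▸ htg)
      · intro hmem
        obtain ⟨t, ht, heq, g, hgN, hg1, hg2, htg⟩ := hvert4 e he _ hmem
        rw [Sum.inr.injEq, Subtype.mk.injEq] at heq
        exact hw'notN g hgN hg2 (heq ▸ htg)
    have hbridgevert : ∀ v, v ∈ E1 → v = Sum.inl u0 ∨ v = Sum.inr ⟨w, hwp⟩ := by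
      intro v hv
      rw [hE1, Sym2.mem_iff] at hv
      exact hv
    have hbridgevert' : ∀ v, v ∈ E2 → v = Sum.inl u0' ∨ v = Sum.inr ⟨w', hw'p⟩ := by
      intro v hv
      rw [hE2, Sym2.mem_iff] at hv
      exact hv
    refine ⟨Mp, ⟨⟨?_, ?_⟩, ?_⟩, ?_⟩
    · -- Mp ⊆ GG.edgeSet
      rintro e (((he | he) | he) | he)
      · obtain ⟨p, q, hpq, rfl⟩ := mem_liftL.mp he
        obtain ⟨hh1, hh2, hh3, hh4⟩ := hP1a _ hpq
        exact (GG.mem_edgeSet).mpr (dot_adj_LL ((G1.mem_edgeSet).mp hh1) hh3 hh4)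
      · obtain ⟨p, q, hpq, rfl⟩ := mem_liftL.mp he
        obtain ⟨hh1, hh2, hh3, hh4⟩ := hP1'a _ hpq
        exact (GG.mem_edgeSet).mpr (dot_adj_LL ((G1.mem_edgeSet).mp hh1) hh3 hh4)
      · rcases he with rfl | he
        · exact (GG.mem_edgeSet).mpr hbridge
        · rw [Set.mem_singleton_iff] at he
          rw [he]
          exact (GG.mem_edgeSet).mpr hbridge'
      · obtain ⟨p, q, hp, hq, ⟨hgN, -⟩, rfl⟩ := liftR_shape he
        exact (GG.mem_edgeSet).mpr (dot_adj_RR hp hq ((G2.mem_edgeSet).mp (hN.1.1 hgN)))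
    · -- Mp pairwise disjoint
      rintro e he f hf hne
      have hsymm : ∀ (e' f' : Sym2 (DotVert V1 x y)), Sym2Disjoint e' f' →
          Sym2Disjoint f' e' := fun e' f' h v hv hv' => h v hv' hv
      -- helper : bridges vs lifts
      have hd13 : ∀ e', e' ∈ liftEdgesLeft (V2 := V2) x y P1 → Sym2Disjoint e' E1 := by
        intro e' he' v hv hv'
        obtain ⟨t, rfl, htc, htu0⟩ := hvert1 e' he' v hv
        rcases hbridgevert _ hv' with h | h
        · rw [Sum.inl.injEq] at h; exact htu0 h
        · exact nomatch h
      have hd13' : ∀ e', e' ∈ liftEdgesLeft (V2 := V2) x y P1 → Sym2Disjoint e' E2 := by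
        intro e' he' v hv hv'
        obtain ⟨t, rfl, htc, htu0⟩ := hvert1 e' he' v hv
        rcases hbridgevert' _ hv' with h | h
        · rw [Sum.inl.injEq] at h
          exact hc1disj htc (by rw [← h] at hu0'c; exact hu0'c)
        · exact nomatch h
      have hd23 : ∀ e', e' ∈ liftEdgesLeft (V2 := V2) x y P1' → Sym2Disjoint e' E1 := by
        intro e' he' v hv hv'
        obtain ⟨t, rfl, htc, htu0⟩ := hvert2 e' he' v hv
        rcases hbridgevert _ hv' with h | h
        · rw [Sum.inl.injEq] at h
          exact hc1disj (by rw [← h] at hu0c; exact hu0c) htc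
        · exact nomatch h
      have hd23' : ∀ e', e' ∈ liftEdgesLeft (V2 := V2) x y P1' → Sym2Disjoint e' E2 := by
        intro e' he' v hv hv'
        obtain ⟨t, rfl, htc, htu0⟩ := hvert2 e' he' v hv
        rcases hbridgevert' _ hv' with h | h
        · rw [Sum.inl.injEq] at h; exact htu0 h
        · exact nomatch h
      have hd12' : ∀ e' f', e' ∈ liftEdgesLeft (V2 := V2) x y P1 →
          f' ∈ liftEdgesLeft (V2 := V2) x y P1' → Sym2Disjoint e' f' := by
        intro e' f' he' hf' v hv hv'
        obtain ⟨t, rfl, htc, -⟩ := hvert1 e' he' v hv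
        obtain ⟨t', heq, htc', -⟩ := hvert2 f' hf' _ hv'
        rw [Sum.inl.injEq] at heq
        exact hc1disj htc (by rw [heq]; exact htc')
      have hd34 : ∀ f', f' ∈ liftEdgesRight V1 x y (N \ {s(x, w), s(y, w')}) →
          Sym2Disjoint E1 f' := by
        intro f' hf' v hv hv'
        rcases hbridgevert _ hv with h | h
        · subst h; exact liftR_vert hf' hv'
        · subst h; exact (hWnotin4 f' hf').1 hv'
      have hd34' : ∀ f', f' ∈ liftEdgesRight V1 x y (N \ {s(x, w), s(y, w')}) →
          Sym2Disjoint E2 f' := by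
        intro f' hf' v hv hv'
        rcases hbridgevert' _ hv with h | h
        · subst h; exact liftR_vert hf' hv'
        · subst h; exact (hWnotin4 f' hf').2 hv'
      have hdE12 : Sym2Disjoint E1 E2 := by
        intro v hv hv'
        rcases hbridgevert _ hv with h | h <;> rcases hbridgevert' _ hv' with h' | h'
        · rw [h] at h'; rw [Sum.inl.injEq] at h'; exact hu0ne h'
        · rw [h] at h'; exact nomatch h'
        · rw [h] at h'; exact nomatch h'
        · rw [h] at h'
          rw [Sum.inr.injEq, Subtype.mk.injEq] at h'
          exact hww' h'
      rcases he with ((he | he) | he) | he <;> rcases hf with ((hf | hf) | hf) | hf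
      · exact liftL_pairwise hP1b he hf hne
      · exact hd12' _ _ he hf
      · rcases hf with rfl | hf
        · exact hd13 _ he
        · rw [Set.mem_singleton_iff] at hf; rw [hf]; exact hd13' _ he
      · exact liftLR_sym2disjoint he hf
      · exact hsymm _ _ (hd12' _ _ hf he)
      · exact liftL_pairwise hP1'b he hf hne
      · rcases hf with rfl | hf
        · exact hd23 _ he
        · rw [Set.mem_singleton_iff] at hf; rw [hf]; exact hd23' _ he
      · exact liftLR_sym2disjoint he hf
      · rcases he with rfl | he
        · exact hsymm _ _ (hd13 _ hf)
        · rw [Set.mem_singleton_iff] at he; rw [he]; exact hsymm _ _ (hd13' _ hf)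
      · rcases he with rfl | he
        · exact hsymm _ _ (hd23 _ hf)
        · rw [Set.mem_singleton_iff] at he; rw [he]; exact hsymm _ _ (hd23' _ hf)
      · rcases he with rfl | he <;> rcases hf with rfl | hf
        · exact (hne rfl).elim
        · rw [Set.mem_singleton_iff] at hf; rw [hf]; exact hdE12
        · rw [Set.mem_singleton_iff] at he; rw [he]; exact hsymm _ _ hdE12
        · rw [Set.mem_singleton_iff] at he hf
          rw [he, hf] at hne
          exact (hne rfl).elim
      · rcases he with rfl | he
        · exact hd34 _ hf
        · rw [Set.mem_singleton_iff] at he; rw [he]; exact hd34' _ hf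
      · exact hsymm _ _ (liftLR_sym2disjoint hf he)
      · exact hsymm _ _ (liftLR_sym2disjoint hf he)
      · rcases hf with rfl | hf
        · exact hsymm _ _ (hd34 _ he)
        · rw [Set.mem_singleton_iff] at hf; rw [hf]; exact hsymm _ _ (hd34' _ he)
      · exact liftR_pairwise (hN.1.2.mono Set.diff_subset) he hf hne
    · -- Mp covers every vertex
      rintro (u | ⟨t, htx, hty⟩)
      · rcases honly ((G1.deleteEdges M1).connectedComponentMk u) with h | h
        · have huc : u ∈ c.supp := by
            rw [SimpleGraph.ConnectedComponent.mem_supp_iff]; exact h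
          by_cases hu : u = u0
          · refine ⟨E1, Or.inl (Or.inr (Set.mem_insert _ _)), ?_⟩
            rw [hE1, Sym2.mem_iff]
            exact Or.inl (by rw [hu])
          · obtain ⟨e, heP, hue⟩ := hP1d u huc hu
            exact ⟨Sym2.map Sum.inl e, Or.inl (Or.inl (Or.inl ⟨e, heP, rfl⟩)),
              Sym2.mem_map.mpr ⟨u, hue, rfl⟩⟩
        · have huc : u ∈ c'.supp := by
            rw [SimpleGraph.ConnectedComponent.mem_supp_iff]; exact h
          by_cases hu : u = u0'
          · refine ⟨E2, Or.inl (Or.inr (Set.mem_insert_iff.mpr (Or.inr rfl))), ?_⟩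
            rw [hE2, Sym2.mem_iff]
            exact Or.inl (by rw [hu])
          · obtain ⟨e, heP, hue⟩ := hP1'd u huc hu
            exact ⟨Sym2.map Sum.inl e, Or.inl (Or.inl (Or.inr ⟨e, heP, rfl⟩)),
              Sym2.mem_map.mpr ⟨u, hue, rfl⟩⟩
      · obtain ⟨g, hgN, htg⟩ := hN.2 t
        by_cases hg1 : g = s(x, w)
        · subst hg1
          have htw : t = w := by
            rw [Sym2.mem_iff] at htg
            rcases htg with h | h
            · exact (htx h).elim
            · exact h
          refine ⟨E1, Or.inl (Or.inr (Set.mem_insert _ _)), ?_⟩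
          rw [hE1, Sym2.mem_iff]
          exact Or.inr (congrArg Sum.inr (Subtype.ext htw))
        by_cases hg2 : g = s(y, w')
        · subst hg2
          have htw : t = w' := by
            rw [Sym2.mem_iff] at htg
            rcases htg with h | h
            · exact (hty h).elim
            · exact h
          refine ⟨E2, Or.inl (Or.inr (Set.mem_insert_iff.mpr (Or.inr rfl))), ?_⟩
          rw [hE2, Sym2.mem_iff]
          exact Or.inr (congrArg Sum.inr (Subtype.ext htw))
        · obtain ⟨p, q, rfl⟩ := sym2_cases g
          have hp := hNavoid _ hgN hg1 hg2 p (Sym2.mem_mk_left _ _)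
          have hq := hNavoid _ hgN hg1 hg2 q (Sym2.mem_mk_right _ _)
          have hgmem : s(p, q) ∈ N \ {s(x, w), s(y, w')} := by
            refine ⟨hgN, ?_⟩
            intro hmem
            rcases Set.mem_insert_iff.mp hmem with hh | hh
            · exact hg1 hh
            · exact hg2 (Set.mem_singleton_iff.mp hh)
          refine ⟨s(Sum.inr ⟨p, hp⟩, Sum.inr ⟨q, hq⟩), Or.inr (liftR_pair_mem.mpr hgmem), ?_⟩
          rw [Sym2.mem_iff] at htg ⊢
          rcases htg with rfl | rfl
          · exact Or.inl rfl
          · exact Or.inr rfl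
    · -- MM ∩ Mp = lift of M2 ∩ N
      apply Set.Subset.antisymm
      · rintro e he
        obtain ⟨p, q, hp, hq, ⟨hpqM2, hpqN⟩, rfl⟩ := liftR_shape he
        have hnexy : s(p, q) ≠ s(x, y) := by
          intro hh
          have : x ∈ s(p, q) := by rw [hh]; exact Sym2.mem_mk_left _ _
          rw [Sym2.mem_iff] at this
          rcases this with h' | h'
          · exact hp.1 h'.symm
          · exact hq.1 h'.symm
        constructor
        · exact Or.inr (liftR_pair_mem.mpr
            ⟨hpqM2, fun hh => hnexy (Set.mem_singleton_iff.mp hh)⟩)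
        · refine Or.inr (liftR_pair_mem.mpr ⟨hpqN, ?_⟩)
          intro hmem
          rcases Set.mem_insert_iff.mp hmem with hh | hh
          · exact hexM2 (hh ▸ hpqM2)
          · exact heyM2 ((Set.mem_singleton_iff.mp hh) ▸ hpqM2)
      · rintro e ⟨heMM, heMp⟩
        rcases heMp with ((he | he) | he) | he
        · exfalso
          obtain ⟨p, q, hpq, rfl⟩ := mem_liftL.mp he
          exact (hP1a _ hpq).2.1 ((hMM_LL p q).mp heMM)
        · exfalso
          obtain ⟨p, q, hpq, rfl⟩ := mem_liftL.mp he
          exact (hP1'a _ hpq).2.1 ((hMM_LL p q).mp heMM)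
        · exfalso
          rcases he with rfl | he
          · exact hMM_mixed _ _ heMM
          · rw [Set.mem_singleton_iff] at he
            rw [he] at heMM
            exact hMM_mixed _ _ heMM
        · obtain ⟨p, q, hp, hq, ⟨hgN, -⟩, rfl⟩ := liftR_shape he
          have h2 := (hMM_RR p q hp hq).mp heMM
          exact liftR_pair_mem.mpr ⟨h2.1, hgN⟩
  have hXsubU : ∀ X ∈ ({A, B, C, D} : Set (Set (Sym2 V2))), X ⊆ A ∪ B ∪ C ∪ D := by
    intro X hX
    simp only [Set.mem_insert_iff, Set.mem_singleton_iff] at hX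
    rcases hX with rfl | rfl | rfl | rfl
    · exact fun e he => Or.inl (Or.inl (Or.inl he))
    · exact fun e he => Or.inl (Or.inl (Or.inr he))
    · exact fun e he => Or.inl (Or.inr he)
    · exact fun e he => Or.inr he
  have hUnion : liftEdgesRight V1 x y A ∪ liftEdgesRight V1 x y B ∪
      liftEdgesRight V1 x y C ∪ liftEdgesRight V1 x y D =
      liftEdgesRight V1 x y (A ∪ B ∪ C ∪ D) := by
    rw [liftR_union, liftR_union, liftR_union]
  have hnotxy_inc : ∀ (Q : Set V2) (U : Set (Sym2 V2)),
      (∀ e ∈ U, ∀ v ∈ e, v ≠ x ∧ v ≠ y) →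
      x ∉ incVerts Q U ∧ y ∉ incVerts Q U := by
    intro Q U hU'
    constructor
    · rintro ⟨-, e, he, hm⟩
      exact (hU' e he x hm).1 rfl
    · rintro ⟨-, e, he, hm⟩
      exact (hU' e he y hm).2 rfl
  have hincSL1 : ∀ U : Set (Sym2 V2), (∀ e ∈ U, ∀ v ∈ e, v ≠ x ∧ v ≠ y) →
      incVerts SL1 (liftEdgesRight V1 x y U) =
        liftSetR V1 x y (incVerts d1.supp U) := by
    intro U hU'
    rw [hSL1, incVerts_union_left, incVerts_inl_liftR, Set.empty_union,
      incVerts_liftR hU',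
      incVerts_diff_singleton (fun e he hm => (hU' e he x hm).1 rfl)]
  have hincSL2 : ∀ U : Set (Sym2 V2), (∀ e ∈ U, ∀ v ∈ e, v ≠ x ∧ v ≠ y) →
      incVerts SL2 (liftEdgesRight V1 x y U) =
        liftSetR V1 x y (incVerts d2.supp U) := by
    intro U hU'
    rw [hSL2, incVerts_union_left, incVerts_inl_liftR, Set.empty_union,
      incVerts_liftR hU',
      incVerts_diff_singleton (fun e he hm => (hU' e he y hm).2 rfl)]
  have hSL1odd : Odd SL1.ncard := by
    have hdisj : Disjoint (Sum.inl '' c.supp) (liftSetR V1 x y (d1.supp \ {x})) := by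
      rw [Set.disjoint_left]
      rintro α ⟨u, -, rfl⟩ hmem
      exact inl_not_mem_liftSetR hmem
    rw [hSL1, Set.ncard_union_eq hdisj (Set.toFinite _) (Set.toFinite _),
      Set.ncard_image_of_injective _ Sum.inl_injective,
      ncard_liftSetR (fun h => h.2 rfl) (fun h => hd12disj h.1 hyd),
      Set.ncard_diff_singleton_of_mem hxd]
    obtain ⟨k1, hk1⟩ := hcodd
    obtain ⟨k2, hk2⟩ := hd1odd
    exact ⟨k1 + k2, by omega⟩
  have hSL2odd : Odd SL2.ncard := by
    have hdisj : Disjoint (Sum.inl '' c'.supp) (liftSetR V1 x y (d2.supp \ {y})) := by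
      rw [Set.disjoint_left]
      rintro α ⟨u, -, rfl⟩ hmem
      exact inl_not_mem_liftSetR hmem
    rw [hSL2, Set.ncard_union_eq hdisj (Set.toFinite _) (Set.toFinite _),
      Set.ncard_image_of_injective _ Sum.inl_injective,
      ncard_liftSetR (fun h => hd12disj hxd h.1) (fun h => h.2 rfl),
      Set.ncard_diff_singleton_of_mem hyd]
    obtain ⟨k1, hk1⟩ := hc'odd
    obtain ⟨k2, hk2⟩ := hd2odd
    exact ⟨k1 + k2, by omega⟩
  have hmemX' : ∀ X' ∈ ({liftEdgesRight V1 x y A, liftEdgesRight V1 x y B,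
      liftEdgesRight V1 x y C, liftEdgesRight V1 x y D} :
        Set (Set (Sym2 (DotVert V1 x y)))),
      ∃ X ∈ ({A, B, C, D} : Set (Set (Sym2 V2))), X' = liftEdgesRight V1 x y X := by
    intro X' hX'
    simp only [Set.mem_insert_iff, Set.mem_singleton_iff] at hX'
    rcases hX' with rfl | rfl | rfl | rfl
    exacts [⟨A, hAmem, rfl⟩, ⟨B, hBmem, rfl⟩, ⟨C, hCmem, rfl⟩, ⟨D, hDmem, rfl⟩]
  have hmemX'fwd : ∀ X ∈ ({A, B, C, D} : Set (Set (Sym2 V2))),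
      liftEdgesRight V1 x y X ∈ ({liftEdgesRight V1 x y A, liftEdgesRight V1 x y B,
      liftEdgesRight V1 x y C, liftEdgesRight V1 x y D} :
        Set (Set (Sym2 (DotVert V1 x y)))) := by
    intro X hX
    simp only [Set.mem_insert_iff, Set.mem_singleton_iff] at hX ⊢
    rcases hX with rfl | rfl | rfl | rfl
    exacts [Or.inl rfl, Or.inr (Or.inl rfl), Or.inr (Or.inr (Or.inl rfl)),
      Or.inr (Or.inr (Or.inr rfl))]
  have hXavoid : ∀ X ∈ ({A, B, C, D} : Set (Set (Sym2 V2))),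
      ∀ e ∈ X, ∀ v ∈ e, v ≠ x ∧ v ≠ y :=
    fun X hX e he => hUavoid e (hXsubU X hX he)
  have hcover_gen : ∀ (SL : Set (DotVert V1 x y))
      (d : (G2.deleteEdges M2).ConnectedComponent),
      (incVerts SL (liftEdgesRight V1 x y A ∪ liftEdgesRight V1 x y B ∪
        liftEdgesRight V1 x y C ∪ liftEdgesRight V1 x y D)).Nonempty →
      incVerts SL (liftEdgesRight V1 x y (A ∪ B ∪ C ∪ D)) =
        liftSetR V1 x y (incVerts d.supp (A ∪ B ∪ C ∪ D)) →
      ∃ e1 e2 : Sym2 (DotVert V1 x y), e1 ∈ GG.edgeSet ∧ e2 ∈ GG.edgeSet ∧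
        e1 ≠ e2 ∧ Sym2Disjoint e1 e2 ∧
        (∀ v : DotVert V1 x y, (v ∈ e1 ∨ v ∈ e2) ↔
          v ∈ incVerts SL (liftEdgesRight V1 x y A ∪ liftEdgesRight V1 x y B ∪
            liftEdgesRight V1 x y C ∪ liftEdgesRight V1 x y D)) := by
    intro SL d hne hinc
    rw [hUnion] at hne
    rw [hinc] at hne
    have hne2 : (incVerts d.supp (A ∪ B ∪ C ∪ D)).Nonempty := nonempty_liftSetR hne
    obtain ⟨f1, f2, hf1G, hf2G, hf12, hfdisj, hfiff⟩ := hcovG2 d.supp ⟨d, rfl⟩ hne2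
    have hav : ∀ v ∈ incVerts d.supp (A ∪ B ∪ C ∪ D), v ≠ x ∧ v ≠ y := by
      rintro v ⟨-, e, he, hm⟩
      exact hUavoid e he v hm
    obtain ⟨p1, q1, rfl⟩ := sym2_cases f1
    obtain ⟨p2, q2, rfl⟩ := sym2_cases f2
    have hp1 := hav p1 ((hfiff p1).mp (Or.inl (Sym2.mem_mk_left _ _)))
    have hq1 := hav q1 ((hfiff q1).mp (Or.inl (Sym2.mem_mk_right _ _)))
    have hp2 := hav p2 ((hfiff p2).mp (Or.inr (Sym2.mem_mk_left _ _)))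
    have hq2 := hav q2 ((hfiff q2).mp (Or.inr (Sym2.mem_mk_right _ _)))
    refine ⟨s(Sum.inr ⟨p1, hp1⟩, Sum.inr ⟨q1, hq1⟩),
      s(Sum.inr ⟨p2, hp2⟩, Sum.inr ⟨q2, hq2⟩), ?_, ?_, ?_, ?_, ?_⟩
    · exact (GG.mem_edgeSet).mpr (dot_adj_RR hp1 hq1 ((G2.mem_edgeSet).mp hf1G))
    · exact (GG.mem_edgeSet).mpr (dot_adj_RR hp2 hq2 ((G2.mem_edgeSet).mp hf2G))
    · intro h
      apply hf12
      rw [Sym2.eq_iff] at h ⊢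
      rcases h with ⟨h1, h2⟩ | ⟨h1, h2⟩ <;>
        rw [Sum.inr.injEq, Subtype.mk.injEq] at h1 h2
      · exact Or.inl ⟨h1, h2⟩
      · exact Or.inr ⟨h1, h2⟩
    · intro v hv hv'
      rw [Sym2.mem_iff] at hv hv'
      rcases hv with rfl | rfl <;> rcases hv' with h | h <;>
        rw [Sum.inr.injEq, Subtype.mk.injEq] at h
      · exact hfdisj p1 (Sym2.mem_mk_left _ _) (by rw [h]; exact Sym2.mem_mk_left _ _)
      · exact hfdisj p1 (Sym2.mem_mk_left _ _) (by rw [h]; exact Sym2.mem_mk_right _ _)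
      · exact hfdisj q1 (Sym2.mem_mk_right _ _) (by rw [h]; exact Sym2.mem_mk_left _ _)
      · exact hfdisj q1 (Sym2.mem_mk_right _ _) (by rw [h]; exact Sym2.mem_mk_right _ _)
    · intro v
      rw [hUnion, hinc]
      rcases v with u | ⟨t, ht⟩
      · constructor
        · rintro (h | h) <;>
          · rw [Sym2.mem_iff] at h
            rcases h with h | h <;> exact nomatch h
        · intro h
          exact (inl_not_mem_liftSetR h).elim
      · constructor
        · intro h
          apply mem_liftSetR.mpr
          apply (hfiff t).mp
          rcases h with h | h <;> rw [Sym2.mem_iff] at h <;>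
            rcases h with h | h <;> rw [Sum.inr.injEq, Subtype.mk.injEq] at h
          · exact Or.inl (by rw [h]; exact Sym2.mem_mk_left _ _)
          · exact Or.inl (by rw [h]; exact Sym2.mem_mk_right _ _)
          · exact Or.inr (by rw [h]; exact Sym2.mem_mk_left _ _)
          · exact Or.inr (by rw [h]; exact Sym2.mem_mk_right _ _)
        · intro h
          have h2 := (hfiff t).mpr (mem_liftSetR.mp h)
          rcases h2 with h2 | h2 <;> rw [Sym2.mem_iff] at h2
          · left
            rw [Sym2.mem_iff]
            rcases h2 with h2 | h2
            · exact Or.inl (congrArg Sum.inr (Subtype.ext h2))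
            · exact Or.inr (congrArg Sum.inr (Subtype.ext h2))
          · right
            rw [Sym2.mem_iff]
            rcases h2 with h2 | h2
            · exact Or.inl (congrArg Sum.inr (Subtype.ext h2))
            · exact Or.inr (congrArg Sum.inr (Subtype.ext h2))
  refine ⟨?_, ?_, ?_, ?_, ?_⟩
  · -- balanced matchings
    intro X' hX'
    obtain ⟨X, hX, rfl⟩ := hmemX' X' hX'
    exact hbal X (fun h => he3F (hXsubU X hX h)) (hbalG2 X hX)
  · -- pairwise disjoint
    have h6 := hdisjG2
    rw [List.pairwise_cons] at h6
    obtain ⟨hA, h6⟩ := h6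
    rw [List.pairwise_cons] at h6
    obtain ⟨hB, h6⟩ := h6
    rw [List.pairwise_cons] at h6
    obtain ⟨hC, -⟩ := h6
    refine List.pairwise_cons.mpr ⟨?_, List.pairwise_cons.mpr ⟨?_,
      List.pairwise_cons.mpr ⟨?_, List.pairwise_singleton _ _⟩⟩⟩
    · intro X' hX'
      simp only [List.mem_cons, List.not_mem_nil, or_false] at hX'
      rcases hX' with rfl | rfl | rfl
      · exact liftR_disjoint_sets (hA B (by simp))
      · exact liftR_disjoint_sets (hA C (by simp))
      · exact liftR_disjoint_sets (hA D (by simp))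
    · intro X' hX'
      simp only [List.mem_cons, List.not_mem_nil, or_false] at hX'
      rcases hX' with rfl | rfl
      · exact liftR_disjoint_sets (hB C (by simp))
      · exact liftR_disjoint_sets (hB D (by simp))
    · intro X' hX'
      simp only [List.mem_cons, List.not_mem_nil, or_false] at hX'
      rcases hX' with rfl
      exact liftR_disjoint_sets (hC D (by simp))
  · -- odd cycles
    rintro S ⟨comp, rfl⟩ hodd X' hX'
    obtain ⟨X, hX, rfl⟩ := hmemX' X' hX'
    have hXav := hXavoid X hX
    rcases hclass comp with heq | heq | ⟨d, hx', hy', heq⟩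
    · rw [heq, hincSL1 X hXav,
        ncard_liftSetR (hnotxy_inc _ _ hXav).1 (hnotxy_inc _ _ hXav).2]
      exact hoddG2 d1.supp ⟨d1, rfl⟩ hd1odd X hX
    · rw [heq, hincSL2 X hXav,
        ncard_liftSetR (hnotxy_inc _ _ hXav).1 (hnotxy_inc _ _ hXav).2]
      exact hoddG2 d2.supp ⟨d2, rfl⟩ hd2odd X hX
    · rw [heq] at hodd ⊢
      rw [incVerts_liftR hXav,
        ncard_liftSetR (hnotxy_inc _ _ hXav).1 (hnotxy_inc _ _ hXav).2]
      have hodd2 : Odd d.supp.ncard := by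
        rwa [ncard_liftSetR hx' hy'] at hodd
      exact hoddG2 d.supp ⟨d, rfl⟩ hodd2 X hX
  · -- even cycles
    rintro S ⟨comp, rfl⟩ heven hne
    rcases hclass comp with heq | heq | ⟨d, hx', hy', heq⟩
    · exfalso
      rw [heq] at heven
      exact (Nat.not_odd_iff_even.mpr heven) hSL1odd
    · exfalso
      rw [heq] at heven
      exact (Nat.not_odd_iff_even.mpr heven) hSL2odd
    · rw [heq] at heven hne ⊢
      rw [hUnion] at hne ⊢
      rw [incVerts_liftR hUavoid] at hne ⊢
      have heven2 : Even d.supp.ncard := by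
        rwa [ncard_liftSetR hx' hy'] at heven
      have hne2 : (incVerts d.supp (A ∪ B ∪ C ∪ D)).Nonempty := nonempty_liftSetR hne
      obtain ⟨hcard4, hstruct⟩ := hevenG2 d.supp ⟨d, rfl⟩ heven2 hne2
      constructor
      · rw [ncard_liftSetR (hnotxy_inc _ _ hUavoid).1 (hnotxy_inc _ _ hUavoid).2]
        exact hcard4
      · rcases hstruct with ⟨X, hX, hXeq⟩ | ⟨X, hX, Y, hY, hXY, hcX, hcY, hXYeq⟩
        · left
          refine ⟨liftEdgesRight V1 x y X, hmemX'fwd X hX, ?_⟩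
          rw [incVerts_liftR (hXavoid X hX), hXeq]
        · right
          refine ⟨liftEdgesRight V1 x y X, hmemX'fwd X hX,
            liftEdgesRight V1 x y Y, hmemX'fwd Y hY, ?_, ?_, ?_, ?_⟩
          · intro h
            exact hXY (liftR_injOn (hXavoid X hX) (hXavoid Y hY) h)
          · rw [incVerts_liftR (hXavoid X hX),
              ncard_liftSetR (hnotxy_inc _ _ (hXavoid X hX)).1
                (hnotxy_inc _ _ (hXavoid X hX)).2]
            exact hcX
          · rw [incVerts_liftR (hXavoid Y hY),
              ncard_liftSetR (hnotxy_inc _ _ (hXavoid Y hY)).1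
                (hnotxy_inc _ _ (hXavoid Y hY)).2]
            exact hcY
          · rw [incVerts_liftR (hXavoid X hX), incVerts_liftR (hXavoid Y hY),
              hXYeq, liftSetR_union]
  · -- the covering pairs
    rintro S ⟨comp, rfl⟩ hne
    rcases hclass comp with heq | heq | ⟨d, hx', hy', heq⟩
    · rw [heq] at hne ⊢
      exact hcover_gen SL1 d1 hne (by rw [hincSL1 _ hUavoid])
    · rw [heq] at hne ⊢
      exact hcover_gen SL2 d2 hne (by rw [hincSL2 _ hUavoid])
    · rw [heq] at hne ⊢
      exact hcover_gen _ d hne (by rw [incVerts_liftR hUavoid])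
end

section
/- Let G be a bridgeless cubic graph having a 2-factor each of whose cycles is a chordless 5-cycle, and let M be the perfect matching complementary to this 2-factor. Suppose there is a colouring of the edges of M with 5 colours such that, for every cycle Q of the 2-factor, the five edges of M incident with Q receive five distinct colours (equivalently, the 5-regular multigraph G* obtained by contracting each 5-cycle of the 2-factor to a single vertex has chromatic index 5). Then G admits a Fulkerson covering. -/
open SimpleGraph

variable {V : Type*}

/-- `P` describes a 2-factor of `G` whose cycles are chordless 5-cycles:
a partition of the vertex set into 5-element parts each inducing a connected
2-regular (hence chordless cycle) subgraph of `G`. -/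
def IsChordlessC5TwoFactor (G : SimpleGraph V) (P : Set (Set V)) : Prop :=
  P.PairwiseDisjoint id ∧ ⋃₀ P = Set.univ ∧
  ∀ S ∈ P, S.ncard = 5 ∧ (∀ v ∈ S, ({u | u ∈ S ∧ G.Adj v u}).ncard = 2) ∧
    (G.induce S).Connected

/-- The perfect matching complementary to the 2-factor described by `P`:
the edges of `G` not lying inside a part of `P`. -/
def complementaryMatching (G : SimpleGraph V) (P : Set (Set V)) : Set (Sym2 V) :=
  {e | e ∈ G.edgeSet ∧ ¬ ∃ S ∈ P, ∀ v ∈ e, v ∈ S}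


lemma pair_other {α : Type*} {s : Set α} (h : s.ncard = 2) {x : α} (hx : x ∈ s) :
    ∃ y, y ≠ x ∧ s = {x, y} := by
  obtain ⟨a, b, hab, rfl⟩ := Set.ncard_eq_two.mp h
  rcases hx with rfl | rfl
  · exact ⟨b, hab.symm, rfl⟩
  · exact ⟨a, hab, Set.pair_comm a x⟩

lemma pair_det {α : Type*} {s : Set α} (h : s.ncard = 2) {x y : α} (hxy : x ≠ y)
    (hx : x ∈ s) (hy : y ∈ s) : s = {x, y} := by
  obtain ⟨z, hz, rfl⟩ := pair_other h hx
  rcases hy with rfl | rfl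
  · exact absurd rfl hxy
  · rfl

lemma closure_lemma {V : Type*} (G : SimpleGraph V) {S T : Set V}
    (hconn : (G.induce S).Connected) (hTS : T ⊆ S)
    (hcl : ∀ x ∈ T, ∀ y ∈ S, G.Adj x y → y ∈ T) (hne : T.Nonempty) : S ⊆ T := by
  obtain ⟨t, htT⟩ := hne
  intro u hu
  obtain ⟨w⟩ := hconn ⟨t, hTS htT⟩ ⟨u, hu⟩
  have key : ∀ (a b : S), (G.induce S).Walk a b → (a : V) ∈ T → (b : V) ∈ T := by
    intro a b p
    induction p with
    | nil => exact id
    | cons h p ih => intro ha; exact ih (hcl _ ha _ (Subtype.coe_prop _) h)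
  exact key _ _ w htT

lemma cycle_structure {V : Type*} [Fintype V] (G : SimpleGraph V) (S : Set V)
    (h5 : S.ncard = 5)
    (hreg : ∀ v ∈ S, ({u | u ∈ S ∧ G.Adj v u}).ncard = 2)
    (hconn : (G.induce S).Connected) :
    ∃ g : Fin 5 → V, Function.Injective g ∧ Set.range g = S ∧
      ∀ a b : Fin 5, G.Adj (g a) (g b) ↔ (b = a + 1 ∨ a = b + 1) := by
  classical
  set N : V → Set V := fun v => {u | u ∈ S ∧ G.Adj v u} with hN
  have hmemN : ∀ x y : V, y ∈ N x ↔ (y ∈ S ∧ G.Adj x y) := fun x y => Iff.rfl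
  have hsym : ∀ x y : V, x ∈ S → y ∈ N x → x ∈ N y := by
    intro x y hx hy; exact ⟨hx, hy.2.symm⟩
  have hSne : S.Nonempty := by
    rw [← Set.ncard_pos (Set.toFinite S)] at *; omega
  obtain ⟨v0, hv0⟩ := hSne
  obtain ⟨v1, v4, h14, hN0⟩ := Set.ncard_eq_two.mp (hreg v0 hv0)
  replace hN0 : N v0 = {v1, v4} := hN0
  have hv1N : v1 ∈ N v0 := by rw [hN0]; left; rfl
  have hv4N : v4 ∈ N v0 := by rw [hN0]; right; rfl
  have hv1 : v1 ∈ S := hv1N.1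
  have hv4 : v4 ∈ S := hv4N.1
  have a01 : G.Adj v0 v1 := hv1N.2
  have a04 : G.Adj v0 v4 := hv4N.2
  obtain ⟨v2, h20, hN1⟩ := pair_other (hreg v1 hv1) (hsym v0 v1 hv0 hv1N)
  replace hN1 : N v1 = {v0, v2} := hN1
  have hv2N : v2 ∈ N v1 := by rw [hN1]; right; rfl
  have hv2 : v2 ∈ S := hv2N.1
  have a12 : G.Adj v1 v2 := hv2N.2
  have h21 : v2 ≠ v1 := fun h => G.irrefl (h ▸ a12)
  -- v2 ≠ v4
  have h24 : v2 ≠ v4 := by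
    intro heq
    have hv2N4 : v4 ∈ N v1 := heq ▸ hv2N
    have hN4 : N v4 = {v0, v1} :=
      pair_det (hreg v4 hv4) a01.ne (hsym v0 v4 hv0 hv4N) (hsym v1 v4 hv1 hv2N4)
    have hsub : S ⊆ {v0, v1, v4} := by
      refine closure_lemma G hconn ?_ ?_ ⟨v0, by left; rfl⟩
      · rintro x (rfl | rfl | rfl) <;> assumption
      · rintro x (rfl | rfl | rfl) y hy hadj <;>
          (have hyN : y ∈ N x := ⟨hy, hadj⟩)
        · rw [hN0] at hyN; rcases hyN with rfl | rfl
          · right; left; rfl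
          · right; right; rfl
        · rw [hN1] at hyN; rcases hyN with rfl | rfl
          · left; rfl
          · right; right; exact heq
        · rw [hN4] at hyN; rcases hyN with rfl | rfl
          · left; rfl
          · right; left; rfl
    have := Set.ncard_le_ncard hsub (Set.toFinite _)
    have h3 : ({v0, v1, v4} : Set V).ncard ≤ 3 := by
      refine le_trans (Set.ncard_insert_le _ _) ?_
      have := Set.ncard_insert_le v1 ({v4} : Set V)
      simp [Set.ncard_singleton] at *; omega
    omega
  obtain ⟨v3, h31, hN2⟩ := pair_other (hreg v2 hv2) (hsym v1 v2 hv1 hv2N)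
  replace hN2 : N v2 = {v1, v3} := hN2
  have hv3N : v3 ∈ N v2 := by rw [hN2]; right; rfl
  have hv3 : v3 ∈ S := hv3N.1
  have a23 : G.Adj v2 v3 := hv3N.2
  have h32 : v3 ≠ v2 := fun h => G.irrefl (h ▸ a23)
  have h30 : v3 ≠ v0 := by
    intro heq
    have h' : v2 ∈ N v0 := by rw [← heq]; exact hsym v2 v3 hv2 hv3N
    rw [hN0] at h'
    rcases h' with h' | h'
    · exact h21 h'
    · exact h24 h'
  have h34 : v3 ≠ v4 := by
    intro heq
    have hv3N4 : v4 ∈ N v2 := heq ▸ hv3N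
    have hN4 : N v4 = {v0, v2} :=
      pair_det (hreg v4 hv4) (fun h => h20 h.symm) (hsym v0 v4 hv0 hv4N)
        (hsym v2 v4 hv2 hv3N4)
    have hsub : S ⊆ {v0, v1, v2, v4} := by
      refine closure_lemma G hconn ?_ ?_ ⟨v0, by left; rfl⟩
      · rintro x (rfl | rfl | rfl | rfl) <;> assumption
      · rintro x (rfl | rfl | rfl | rfl) y hy hadj <;>
          (have hyN : y ∈ N x := ⟨hy, hadj⟩)
        · rw [hN0] at hyN; rcases hyN with rfl | rfl
          · right; left; rfl
          · right; right; right; rfl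
        · rw [hN1] at hyN; rcases hyN with rfl | rfl
          · left; rfl
          · right; right; left; rfl
        · rw [hN2] at hyN; rcases hyN with rfl | rfl
          · right; left; rfl
          · right; right; right; exact heq
        · rw [hN4] at hyN; rcases hyN with rfl | rfl
          · left; rfl
          · right; right; left; rfl
    have := Set.ncard_le_ncard hsub (Set.toFinite _)
    have h4 : ({v0, v1, v2, v4} : Set V).ncard ≤ 4 := by
      refine le_trans (Set.ncard_insert_le _ _) ?_
      have h1 := Set.ncard_insert_le v1 ({v2, v4} : Set V)
      have h2 := Set.ncard_insert_le v2 ({v4} : Set V)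
      simp [Set.ncard_singleton] at *; omega
    omega
  -- all ten distinctness facts
  have h10 : v1 ≠ v0 := a01.ne'
  have h40 : v4 ≠ v0 := a04.ne'
  -- T = S
  have hTsub : ({v0, v1, v2, v3, v4} : Set V) ⊆ S := by
    rintro x (rfl | rfl | rfl | rfl | rfl) <;> assumption
  have hTcard : ({v0, v1, v2, v3, v4} : Set V).ncard = 5 := by
    rw [Set.ncard_insert_of_notMem (by simp [a01.ne, Ne.symm h20, Ne.symm h30, a04.ne] : v0 ∉ ({v1,v2,v3,v4} : Set V)),
        Set.ncard_insert_of_notMem (by simp [Ne.symm h21, Ne.symm h31, h14] : v1 ∉ ({v2,v3,v4} : Set V)),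
        Set.ncard_insert_of_notMem (by simp [Ne.symm h32, h24] : v2 ∉ ({v3,v4} : Set V)),
        Set.ncard_insert_of_notMem (by simp [h34] : v3 ∉ ({v4} : Set V)),
        Set.ncard_singleton]
  have hTS : ({v0, v1, v2, v3, v4} : Set V) = S :=
    Set.eq_of_subset_of_ncard_le hTsub (by omega) (Set.toFinite S)
  -- last vertex neighbors
  obtain ⟨x, hx2, hN3⟩ := pair_other (hreg v3 hv3) (hsym v2 v3 hv2 hv3N)
  replace hN3 : N v3 = {v2, x} := hN3
  have hxN : x ∈ N v3 := by rw [hN3]; right; rfl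
  have hxT : x ∈ ({v0, v1, v2, v3, v4} : Set V) := hTS ▸ hxN.1
  have hx4 : x = v4 := by
    have hv3x : v3 ∈ N x := hsym v3 x hv3 hxN
    rcases hxT with h | h | h | h | h
    · exfalso; rw [h, hN0] at hv3x
      rcases hv3x with h' | h'
      · exact h31 h'
      · exact h34 h'
    · exfalso; rw [h, hN1] at hv3x
      rcases hv3x with h' | h'
      · exact h30 h'
      · exact h32 h'
    · exact absurd h hx2
    · exfalso; rw [h] at hxN; exact G.irrefl hxN.2
    · exact h
  rw [hx4] at hxN hN3
  have a34 : G.Adj v3 v4 := hxN.2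
  have hN4 : N v4 = {v0, v3} := pair_det (hreg v4 hv4) h30.symm
    (hsym v0 v4 hv0 hv4N) (hsym v3 v4 hv3 hxN)
  -- build g
  have hinj : Function.Injective ![v0, v1, v2, v3, v4] := by
    intro a b hab
    fin_cases a <;> fin_cases b <;>
      simp_all [Matrix.cons_val_zero, Matrix.cons_val_one]
  refine ⟨![v0, v1, v2, v3, v4], hinj, ?_, ?_⟩
  · rw [← hTS]
    ext x
    simp only [Matrix.range_cons, Matrix.range_empty, Set.union_empty,
      Set.mem_insert_iff, Set.mem_singleton_iff, Set.mem_union, Set.mem_range]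
  · intro a b
    have key : ∀ u : Fin 5, N (![v0, v1, v2, v3, v4] u) =
        {![v0, v1, v2, v3, v4] (u + 1), ![v0, v1, v2, v3, v4] (u - 1)} := by
      intro u
      fin_cases u
      · show N v0 = {v1, v4}; exact hN0
      · show N v1 = {v2, v0}; rw [hN1, Set.pair_comm]
      · show N v2 = {v3, v1}; rw [hN2, Set.pair_comm]
      · show N v3 = {v4, v2}; rw [hN3, Set.pair_comm]
      · show N v4 = {v0, v3}; exact hN4
    have hbS : ![v0, v1, v2, v3, v4] b ∈ S := by
      rw [← hTS]; fin_cases b <;> simp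
    have harith : ∀ a b : Fin 5, b = a - 1 → a = b + 1 := by decide
    have harith2 : ∀ b : Fin 5, b + 1 - 1 = b := by decide
    constructor
    · intro hadj
      have hm : ![v0, v1, v2, v3, v4] b ∈ N (![v0, v1, v2, v3, v4] a) := ⟨hbS, hadj⟩
      rw [key a] at hm
      rcases hm with h | h
      · left; exact hinj h
      · right; exact harith a b (hinj h)
    · intro h
      have hmem : ![v0, v1, v2, v3, v4] b ∈ N (![v0, v1, v2, v3, v4] a) := by
        rw [key a]
        rcases h with rfl | rfl
        · left; rfl
        · right; rw [harith2 b]; exact rfl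
      exact hmem.2

section decs
lemma dec1 : ∀ s t t' x y : Fin 5, (t = s+1 ∨ t = s+3) → (t' = s+1 ∨ t' = s+3) →
    (x = t ∨ x = t+1) → (y = t' ∨ y = t'+1) → x = y → t = t' := by decide
lemma dec2 : ∀ s t x : Fin 5, (t = s+1 ∨ t = s+3) → (x = t ∨ x = t+1) → x ≠ s := by decide
lemma dec3 : ∀ s k : Fin 5, k ≠ s → ∃ t : Fin 5, (t = s+1 ∨ t = s+3) ∧ (k = t ∨ k = t+1) := by
  decide
lemma dec4 : ∀ s k : Fin 5, (k = s+1 ∨ k = s+3) ↔ (s = k-1 ∨ s = k-3) := by decide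
lemma dec5 : ∀ t t' : Fin 5, t = t' + 1 → t + 1 = t' → False := by decide
lemma dec6 : ∀ k : Fin 5, k - 1 ≠ k - 3 := by decide
end decs

/-- Let `G` be a bridgeless cubic graph with a 2-factor all of whose
cycles are chordless 5-cycles, with complementary perfect matching `M`. If the edges of
`M` can be coloured with 5 colours so that for each cycle of the 2-factor the five edges
of `M` incident with it get five distinct colours (i.e. the contracted 5-regular
multigraph `G*` has chromatic index 5), then `G` admits a Fulkerson covering. -/
theorem stmt_14 {V : Type*} [Fintype V] (G : SimpleGraph V)
    (hcubic : IsCubic G) (hbridgeless : Bridgeless G)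
    (P : Set (Set V)) (hP : IsChordlessC5TwoFactor G P)
    (c : Sym2 V → Fin 5)
    (hc : ∀ S ∈ P, ∀ e ∈ complementaryMatching G P, ∀ f ∈ complementaryMatching G P,
      (∃ v ∈ S, v ∈ e) → (∃ v ∈ S, v ∈ f) → e ≠ f → c e ≠ c f) :
    ∃ F : Fin 6 → Set (Sym2 V), IsFulkersonCovering G F := by
  classical
  rcases isEmpty_or_nonempty V with hV | hV
  · refine ⟨fun _ => ∅, fun i => ⟨⟨Set.empty_subset _, Set.pairwise_empty _⟩,
      fun v => (IsEmpty.false v).elim⟩, fun e he => ?_⟩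
    induction e using Sym2.ind with
    | _ a b => exact (IsEmpty.false a).elim
  obtain ⟨hdisj, hcover, hparts⟩ := hP
  set M := complementaryMatching G P with hMdef
  have hpuniq : ∀ {S S' : Set V} {v : V}, S ∈ P → S' ∈ P → v ∈ S → v ∈ S' → S = S' := by
    intro S S' v hS hS' hv hv'
    by_contra hne
    exact Set.disjoint_left.mp (hdisj hS hS' hne) hv hv'
  have hpart : ∀ v : V, ∃ S, S ∈ P ∧ v ∈ S := by
    intro v
    have hv : v ∈ ⋃₀ P := hcover ▸ Set.mem_univ v
    rwa [Set.mem_sUnion] at hv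
  choose Sof hSofP hSofv using hpart
  have houtn : ∀ v : V, ∃ u, (G.Adj v u ∧ u ∉ Sof v) ∧
      ∀ u', G.Adj v u' → u' ∉ Sof v → u' = u := by
    intro v
    have hsub : {u | u ∈ Sof v ∧ G.Adj v u} ⊆ G.neighborSet v := fun u hu => hu.2
    have hd : (G.neighborSet v \ {u | u ∈ Sof v ∧ G.Adj v u}).ncard = 1 := by
      rw [Set.ncard_diff hsub (Set.toFinite _), hcubic v,
        (hparts _ (hSofP v)).2.1 v (hSofv v)]
    obtain ⟨u, hu⟩ := Set.ncard_eq_one.mp hd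
    have hmem : u ∈ G.neighborSet v \ {u | u ∈ Sof v ∧ G.Adj v u} := by rw [hu]; rfl
    refine ⟨u, ⟨hmem.1, fun hS => hmem.2 ⟨hS, hmem.1⟩⟩, ?_⟩
    intro u' hadj hnS
    have : u' ∈ G.neighborSet v \ {u | u ∈ Sof v ∧ G.Adj v u} := ⟨hadj, fun h => hnS h.1⟩
    rw [hu] at this; exact this
  choose m hm1 hm2 using houtn
  -- M facts
  have hmemM : ∀ v : V, s(v, m v) ∈ M := by
    intro v
    refine ⟨G.mem_edgeSet.mpr (hm1 v).1, ?_⟩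
    rintro ⟨S, hS, hall⟩
    have hvS : v ∈ S := hall v (Sym2.mem_mk_left v (m v))
    have hmS : m v ∈ S := hall (m v) (Sym2.mem_mk_right v (m v))
    exact (hm1 v).2 (hpuniq hS (hSofP v) hvS (hSofv v) ▸ hmS)
  have huniqM : ∀ (v : V) (e : Sym2 V), e ∈ M → v ∈ e → e = s(v, m v) := by
    intro v e he hve
    obtain ⟨u, rfl⟩ := Sym2.mem_iff_exists.mp hve
    have hadj : G.Adj v u := G.mem_edgeSet.mp he.1
    have hnS : u ∉ Sof v := by
      intro huS
      refine he.2 ⟨Sof v, hSofP v, ?_⟩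
      intro w hw
      rcases Sym2.mem_iff.mp hw with h | h
      · rw [h]; exact hSofv v
      · rw [h]; exact huS
    rw [hm2 v u hadj hnS]
  have hMpm : IsPerfectMatchingSet G M := by
    refine ⟨⟨fun e he => he.1, ?_⟩, fun v => ⟨s(v, m v), hmemM v, Sym2.mem_mk_left v (m v)⟩⟩
    intro e he f hf hne v hv hv'
    exact hne ((huniqM v e he hv).trans (huniqM v f hf hv').symm)
  -- cycle structure
  have hcyc : ∀ S, S ∈ P → ∃ gg : Fin 5 → V, Function.Injective gg ∧ Set.range gg = S ∧
      ∀ a b : Fin 5, G.Adj (gg a) (gg b) ↔ (b = a + 1 ∨ a = b + 1) := fun S hS =>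
    cycle_structure G S (hparts S hS).1 (hparts S hS).2.1 (hparts S hS).2.2
  choose! g hginj hgrange hgadj using hcyc
  have hgmem : ∀ S, S ∈ P → ∀ k, g S k ∈ S := by
    intro S hS k
    have h := Set.mem_range_self (f := g S) k
    rwa [hgrange S hS] at h
  have hSofg : ∀ S, S ∈ P → ∀ v ∈ S, Sof v = S := fun S hS v hv =>
    hpuniq (hSofP v) hS (hSofv v) hv
  -- colour map on each cycle is injective
  have hκinj : ∀ S, S ∈ P →
      Function.Injective (fun k : Fin 5 => c s(g S k, m (g S k))) := by
    intro S hS k k' h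
    by_contra hne
    have hv : g S k ≠ g S k' := fun he => hne (hginj S hS he)
    have hEne : s(g S k, m (g S k)) ≠ s(g S k', m (g S k')) := by
      intro hEq
      have hmem : g S k' ∈ s(g S k, m (g S k)) := by
        rw [hEq]; exact Sym2.mem_mk_left _ _
      rcases Sym2.mem_iff.mp hmem with h' | h'
      · exact hv h'.symm
      · refine (hm1 (g S k)).2 ?_
        rw [hSofg S hS _ (hgmem S hS k)]
        exact h' ▸ hgmem S hS k'
    exact hc S hS _ (hmemM _) _ (hmemM _)
      ⟨g S k, hgmem S hS k, Sym2.mem_mk_left _ _⟩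
      ⟨g S k', hgmem S hS k', Sym2.mem_mk_left _ _⟩ hEne h
  have hσex : ∀ S, S ∈ P → ∀ i : Fin 5, ∃ k, c s(g S k, m (g S k)) = i ∧
      ∀ k', c s(g S k', m (g S k')) = i → k' = k := by
    intro S hS i
    obtain ⟨k, hk⟩ := (Finite.injective_iff_bijective.mp (hκinj S hS)).2 i
    exact ⟨k, hk, fun k' hk' => hκinj S hS (hk'.trans hk.symm)⟩
  choose! σ hσ hσu using hσex
  -- the matchings
  set FF : Fin 5 → Set (Sym2 V) := fun i =>
    {e | e ∈ M ∧ c e = i} ∪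
    {e | ∃ S, S ∈ P ∧ ∃ t : Fin 5, (t = σ S i + 1 ∨ t = σ S i + 3) ∧
      e = s(g S t, g S (t + 1))} with hFFdef
  have hinner_not_M : ∀ S, S ∈ P → ∀ t : Fin 5, s(g S t, g S (t + 1)) ∉ M := by
    intro S hS t hmem
    refine hmem.2 ⟨S, hS, ?_⟩
    intro w hw
    rcases Sym2.mem_iff.mp hw with rfl | rfl
    · exact hgmem S hS t
    · exact hgmem S hS (t + 1)
  -- identification of inner edges
  have hinner_eq : ∀ S, S ∈ P → ∀ S', S' ∈ P → ∀ t t' : Fin 5,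
      s(g S t, g S (t + 1)) = s(g S' t', g S' (t' + 1)) → S = S' ∧ t = t' := by
    intro S hS S' hS' t t' hEq
    have hmem : g S t ∈ s(g S' t', g S' (t' + 1)) := by
      rw [← hEq]; exact Sym2.mem_mk_left _ _
    have hSS' : S = S' := by
      rcases Sym2.mem_iff.mp hmem with h' | h'
      · exact hpuniq hS hS' (hgmem S hS t) (h' ▸ hgmem S' hS' t')
      · exact hpuniq hS hS' (hgmem S hS t) (h' ▸ hgmem S' hS' (t' + 1))
    subst hSS'
    rcases Sym2.eq_iff.mp hEq with ⟨h1, _⟩ | ⟨h1, h2⟩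
    · exact ⟨rfl, hginj S hS h1⟩
    · exact (dec5 t t' (hginj S hS h1) (hginj S hS h2)).elim
  refine ⟨Fin.snoc FF M, ?_, ?_⟩
  · -- each is a perfect matching
    intro i
    induction i using Fin.lastCases with
    | last => rw [Fin.snoc_last]; exact hMpm
    | cast j =>
      rw [Fin.snoc_castSucc]
      constructor
      constructor
      · -- subset of edges
        rintro e (⟨heM, _⟩ | ⟨S, hS, t, _, rfl⟩)
        · exact heM.1
        · exact G.mem_edgeSet.mpr ((hgadj S hS t (t+1)).mpr (Or.inl rfl))
      · -- pairwise disjoint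
        rintro e he f hf hne v hv hv'
        refine hne ?_
        rcases he with ⟨heM, hec⟩ | ⟨S, hS, t, ht, rfl⟩ <;>
          rcases hf with ⟨hfM, hfc⟩ | ⟨S', hS', t', ht', rfl⟩
        · exact (huniqM v e heM hv).trans (huniqM v f hfM hv').symm
        · exfalso
          rcases Sym2.mem_iff.mp hv' with rfl | rfl
          · have hx := hσu S' hS' j t' (by rw [← huniqM _ e heM hv]; exact hec)
            exact dec2 (σ S' j) t' t' ht' (Or.inl rfl) hx
          · have hx := hσu S' hS' j (t'+1) (by rw [← huniqM _ e heM hv]; exact hec)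
            exact dec2 (σ S' j) t' (t'+1) ht' (Or.inr rfl) hx
        · exfalso
          rcases Sym2.mem_iff.mp hv with rfl | rfl
          · have hx := hσu S hS j t (by rw [← huniqM _ f hfM hv']; exact hfc)
            exact dec2 (σ S j) t t ht (Or.inl rfl) hx
          · have hx := hσu S hS j (t+1) (by rw [← huniqM _ f hfM hv']; exact hfc)
            exact dec2 (σ S j) t (t+1) ht (Or.inr rfl) hx
        · -- both inner
          have hSS' : S = S' := by
            rcases Sym2.mem_iff.mp hv with rfl | rfl <;>
              rcases Sym2.mem_iff.mp hv' with h' | h'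
            · exact hpuniq hS hS' (hgmem S hS t) (h' ▸ hgmem S' hS' t')
            · exact hpuniq hS hS' (hgmem S hS t) (h' ▸ hgmem S' hS' (t'+1))
            · exact hpuniq hS hS' (hgmem S hS (t+1)) (h' ▸ hgmem S' hS' t')
            · exact hpuniq hS hS' (hgmem S hS (t+1)) (h' ▸ hgmem S' hS' (t'+1))
          subst hSS'
          have hteq : t = t' := by
            rcases Sym2.mem_iff.mp hv with rfl | rfl <;>
              rcases Sym2.mem_iff.mp hv' with h' | h'
            · exact dec1 (σ S j) t t' t t ht ht' (Or.inl rfl) (Or.inl (hginj S hS h'.symm).symm) rfl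
            · exact dec1 (σ S j) t t' t t ht ht' (Or.inl rfl) (Or.inr (hginj S hS h'.symm).symm) rfl
            · exact dec1 (σ S j) t t' (t+1) (t+1) ht ht' (Or.inr rfl) (Or.inl (hginj S hS h'.symm).symm) rfl
            · exact dec1 (σ S j) t t' (t+1) (t+1) ht ht' (Or.inr rfl) (Or.inr (hginj S hS h'.symm).symm) rfl
          rw [hteq]
      · -- covers
        intro v
        have hv := hSofv v
        have hS := hSofP v
        have hvr : v ∈ Set.range (g (Sof v)) := by rw [hgrange _ hS]; exact hv
        obtain ⟨k, hk⟩ := hvr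
        by_cases hks : k = σ (Sof v) j
        · refine ⟨s(v, m v), Or.inl ⟨hmemM v, ?_⟩, Sym2.mem_mk_left _ _⟩
          rw [← hk, hks]
          exact hσ (Sof v) hS j
        · obtain ⟨t, ht, hkt⟩ := dec3 (σ (Sof v) j) k hks
          refine ⟨s(g (Sof v) t, g (Sof v) (t+1)), Or.inr ⟨Sof v, hS, t, ht, rfl⟩, ?_⟩
          rw [Sym2.mem_iff]
          rcases hkt with h | h
          · exact Or.inl (by rw [h] at hk; exact hk.symm)
          · exact Or.inr (by rw [h] at hk; exact hk.symm)
  · -- every edge in exactly two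
    intro e he
    induction e using Sym2.ind with
    | _ a b =>
    by_cases heM : s(a, b) ∈ M
    · have hiff : ∀ j : Fin 5, s(a, b) ∈ FF j ↔ c s(a, b) = j := by
        intro j
        constructor
        · rintro (⟨_, h⟩ | ⟨S, hS, t, _, hEq⟩)
          · exact h
          · exact absurd (hEq ▸ heM) (hinner_not_M S hS t)
        · intro h; exact Or.inl ⟨heM, h⟩
      have hset : {i : Fin 6 | s(a, b) ∈ (Fin.snoc FF M : Fin 6 → Set (Sym2 V)) i} =
          {(c s(a, b)).castSucc, Fin.last 5} := by
        ext i
        simp only [Set.mem_setOf_eq, Set.mem_insert_iff, Set.mem_singleton_iff]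
        induction i using Fin.lastCases with
        | last =>
          simp only [Fin.snoc_last]; simp [heM]
        | cast j =>
          rw [Fin.snoc_castSucc, hiff j]
          constructor
          · intro h; exact Or.inl (by rw [h])
          · rintro (h | h)
            · exact (Fin.castSucc_injective 5 h).symm
            · exact absurd h (Fin.castSucc_lt_last j).ne
      rw [hset]
      exact Set.ncard_pair (Fin.castSucc_lt_last _).ne
    · -- an inner edge
      have hSex : ∃ S ∈ P, ∀ v ∈ s(a, b), v ∈ S := by
        by_contra h; exact heM ⟨he, h⟩
      obtain ⟨S, hS, hall⟩ := hSex
      have haS : a ∈ S := hall a (Sym2.mem_mk_left a b)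
      have hbS : b ∈ S := hall b (Sym2.mem_mk_right a b)
      obtain ⟨p, hp⟩ : a ∈ Set.range (g S) := by rw [hgrange S hS]; exact haS
      obtain ⟨q, hq⟩ : b ∈ Set.range (g S) := by rw [hgrange S hS]; exact hbS
      have hadj : G.Adj (g S p) (g S q) := by
        rw [hp, hq]; exact G.mem_edgeSet.mp he
      obtain ⟨k, hk⟩ : ∃ k : Fin 5, s(a, b) = s(g S k, g S (k + 1)) := by
        rcases (hgadj S hS p q).mp hadj with h | h
        · exact ⟨p, by rw [← hp, ← hq, h]⟩
        · exact ⟨q, by rw [← hp, ← hq, h, Sym2.eq_swap]⟩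
      have hiff : ∀ j : Fin 5, s(a, b) ∈ FF j ↔
          (j = c s(g S (k-1), m (g S (k-1))) ∨ j = c s(g S (k-3), m (g S (k-3)))) := by
        intro j
        constructor
        · rintro (⟨h, _⟩ | ⟨S', hS', t, ht, hEq⟩)
          · exact absurd h heM
          · obtain ⟨rfl, rfl⟩ := hinner_eq S hS S' hS' k t (by rw [← hk, hEq])
            rcases (dec4 (σ S j) k).mp ht with h | h
            · exact Or.inl (by rw [← h]; exact (hσ S hS j).symm)
            · exact Or.inr (by rw [← h]; exact (hσ S hS j).symm)
        · intro h
          refine Or.inr ⟨S, hS, k, ?_, hk⟩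
          refine (dec4 (σ S j) k).mpr ?_
          rcases h with h | h
          · exact Or.inl (hσu S hS j (k-1) h.symm).symm
          · exact Or.inr (hσu S hS j (k-3) h.symm).symm
      have hset : {i : Fin 6 | s(a, b) ∈ (Fin.snoc FF M : Fin 6 → Set (Sym2 V)) i} =
          {(c s(g S (k-1), m (g S (k-1)))).castSucc,
           (c s(g S (k-3), m (g S (k-3)))).castSucc} := by
        ext i
        simp only [Set.mem_setOf_eq, Set.mem_insert_iff, Set.mem_singleton_iff]
        induction i using Fin.lastCases with
        | last =>
          simp only [Fin.snoc_last]
          constructor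
          · intro h; exact absurd h heM
          · rintro (h | h) <;> exact absurd h.symm (Fin.castSucc_lt_last _).ne
        | cast j =>
          rw [Fin.snoc_castSucc, hiff j]
          constructor
          · rintro (h | h)
            · exact Or.inl (by rw [h])
            · exact Or.inr (by rw [h])
          · rintro (h | h)
            · exact Or.inl (Fin.castSucc_injective 5 h)
            · exact Or.inr (Fin.castSucc_injective 5 h)
      rw [hset]
      refine Set.ncard_pair ?_
      intro h
      have := Fin.castSucc_injective 5 h
      have := hκinj S hS this
      exact dec6 k this
end
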